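/- arXiv:2005.00404 — 6 statements merged into one kernel-verified Lean document; each statement's English description precedes it below -/
import Mathlib

section
/- Let A₁, A₂, H be L*ω formulas and write A⁺ for the formula A·A*. The sequent (A₁⁺·A₂⁺)⁺ → H is derivable in L*ω if and only if for every k ≥ 1 and all n₁, m₁, n₂, m₂, …, n_k, m_k ≥ 1 the sequent A₁^{n₁}, A₂^{m₁}, A₁^{n₂}, A₂^{m₂}, …, A₁^{n_k}, A₂^{m_k} → H is derivable in L*ω. -/
/-- Formulas of the Lambek calculus with iteration L*ω: variables `p n`,
left division `A \ B`, right division `B / A` (written `rdiv B A`),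
product `A · B` and Kleene star `A*`. -/
inductive LFormula : Type
  | var : ℕ → LFormula
  | ldiv : LFormula → LFormula → LFormula   -- ldiv A B  is  A \ B
  | rdiv : LFormula → LFormula → LFormula   -- rdiv B A  is  B / A
  | mul : LFormula → LFormula → LFormula    -- A · B
  | star : LFormula → LFormula              -- A*
  deriving DecidableEq

/-- Derivability in L*ω, as the least set of sequents (`LDer Γ B` means `Γ → B` is
derivable) containing the identity axioms and closed under the rules of the calculus,
including the ω-rule for Kleene star. -/
inductive LDer : List LFormula → LFormula → Prop
  /-- identity axiom A → A -/
  | id (A : LFormula) : LDer [A] A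
  /-- (\→): from Π → A and Γ,B,Δ → C infer Γ,Π,A\B,Δ → C -/
  | ldiv_left (P Γ Δ : List LFormula) (A B C : LFormula) :
      LDer P A → LDer (Γ ++ [B] ++ Δ) C →
      LDer (Γ ++ P ++ [LFormula.ldiv A B] ++ Δ) C
  /-- (→\): from A,Π → B infer Π → A\B -/
  | ldiv_right (P : List LFormula) (A B : LFormula) :
      LDer (A :: P) B → LDer P (LFormula.ldiv A B)
  /-- (/→): from Π → A and Γ,B,Δ → C infer Γ,B/A,Π,Δ → C -/
  | rdiv_left (P Γ Δ : List LFormula) (A B C : LFormula) :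
      LDer P A → LDer (Γ ++ [B] ++ Δ) C →
      LDer (Γ ++ [LFormula.rdiv B A] ++ P ++ Δ) C
  /-- (→/): from Π,A → B infer Π → B/A -/
  | rdiv_right (P : List LFormula) (A B : LFormula) :
      LDer (P ++ [A]) B → LDer P (LFormula.rdiv B A)
  /-- (·→): from Γ,A,B,Δ → C infer Γ,A·B,Δ → C -/
  | mul_left (Γ Δ : List LFormula) (A B C : LFormula) :
      LDer (Γ ++ [A, B] ++ Δ) C → LDer (Γ ++ [LFormula.mul A B] ++ Δ) C
  /-- (→·): from Γ → A and Δ → B infer Γ,Δ → A·B -/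
  | mul_right (Γ Δ : List LFormula) (A B : LFormula) :
      LDer Γ A → LDer Δ B → LDer (Γ ++ Δ) (LFormula.mul A B)
  /-- (*→)_ω: from Γ,Aⁿ,Δ → C for every n ≥ 0 infer Γ,A*,Δ → C -/
  | star_left (Γ Δ : List LFormula) (A C : LFormula) :
      (∀ n : ℕ, LDer (Γ ++ List.replicate n A ++ Δ) C) →
      LDer (Γ ++ [LFormula.star A] ++ Δ) C
  /-- (→*)_n: from Π₁ → A, …, Π_n → A infer Π₁,…,Π_n → A* -/
  | star_right (Ps : List (List LFormula)) (A : LFormula) :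
      (∀ P ∈ Ps, LDer P A) → LDer Ps.flatten (LFormula.star A)


/-- Kleene plus: A⁺ = A · A*. -/
def LFormula.plus (A : LFormula) : LFormula := LFormula.mul A (LFormula.star A)



section ListSplit

variable {α : Type*}

lemma split_cons {Γ Δ L₁ L₂ : List α} {x : α}
    (h : Γ ++ x :: Δ = L₁ ++ L₂) :
    (∃ Γ₂, L₁ = Γ ++ x :: Γ₂ ∧ Δ = Γ₂ ++ L₂) ∨
    (∃ Γ₁, Γ = L₁ ++ Γ₁ ∧ L₂ = Γ₁ ++ x :: Δ) := by
  rcases List.append_eq_append_iff.mp h with ⟨a', h1, h2⟩ | ⟨c', h1, h2⟩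
  · cases a' with
    | nil => exact Or.inr ⟨[], by simpa using h1.symm, by simpa using h2.symm⟩
    | cons y a'' =>
      simp only [List.cons_append, List.cons.injEq] at h2
      obtain ⟨rfl, rfl⟩ := h2
      exact Or.inl ⟨a'', h1, rfl⟩
  · exact Or.inr ⟨c', h1, h2⟩

lemma split_cons3 {Γ Δ L₁ L₂ L₃ : List α} {x : α}
    (h : Γ ++ x :: Δ = L₁ ++ (L₂ ++ L₃)) :
    (∃ Γ₂, L₁ = Γ ++ x :: Γ₂ ∧ Δ = Γ₂ ++ (L₂ ++ L₃)) ∨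
    (∃ Γ₁ Γ₂, Γ = L₁ ++ Γ₁ ∧ L₂ = Γ₁ ++ x :: Γ₂ ∧ Δ = Γ₂ ++ L₃) ∨
    (∃ Γ₁, Γ = L₁ ++ (L₂ ++ Γ₁) ∧ L₃ = Γ₁ ++ x :: Δ) := by
  rcases split_cons h with ⟨Γ₂, h1, h2⟩ | ⟨Γ₁, h1, h2⟩
  · exact Or.inl ⟨Γ₂, h1, h2⟩
  · rcases split_cons h2.symm with ⟨Γ₂, h3, h4⟩ | ⟨Γ₁', h3, h4⟩
    · exact Or.inr (Or.inl ⟨Γ₁, Γ₂, h1, h3, h4⟩)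
    · exact Or.inr (Or.inr ⟨Γ₁', by rw [h1, h3], h4⟩)

lemma split_cons4 {Γ Δ L₁ L₂ L₃ L₄ : List α} {x : α}
    (h : Γ ++ x :: Δ = L₁ ++ (L₂ ++ (L₃ ++ L₄))) :
    (∃ Γ₂, L₁ = Γ ++ x :: Γ₂ ∧ Δ = Γ₂ ++ (L₂ ++ (L₃ ++ L₄))) ∨
    (∃ Γ₁ Γ₂, Γ = L₁ ++ Γ₁ ∧ L₂ = Γ₁ ++ x :: Γ₂ ∧ Δ = Γ₂ ++ (L₃ ++ L₄)) ∨
    (∃ Γ₁ Γ₂, Γ = L₁ ++ (L₂ ++ Γ₁) ∧ L₃ = Γ₁ ++ x :: Γ₂ ∧ Δ = Γ₂ ++ L₄) ∨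
    (∃ Γ₁, Γ = L₁ ++ (L₂ ++ (L₃ ++ Γ₁)) ∧ L₄ = Γ₁ ++ x :: Δ) := by
  rcases split_cons h with ⟨Γ₂, h1, h2⟩ | ⟨Γ₁, h1, h2⟩
  · exact Or.inl ⟨Γ₂, h1, h2⟩
  · rcases split_cons3 h2.symm with ⟨Γ₂, h3, h4⟩ | ⟨Γ₁', Γ₂, h3, h4, h5⟩ | ⟨Γ₁', h3, h4⟩
    · exact Or.inr (Or.inl ⟨Γ₁, Γ₂, h1, h3, h4⟩)
    · exact Or.inr (Or.inr (Or.inl ⟨Γ₁', Γ₂, by rw [h1, h3], h4, h5⟩))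
    · exact Or.inr (Or.inr (Or.inr ⟨Γ₁', by rw [h1, h3], h4⟩))

lemma singleton_split {y x : α} {Γ₁ Γ₂ : List α}
    (h : [y] = Γ₁ ++ x :: Γ₂) : Γ₁ = [] ∧ x = y ∧ Γ₂ = [] := by
  cases Γ₁ with
  | nil => simp_all
  | cons a Γ' =>
    simp only [List.cons_append, List.cons.injEq] at h
    exact absurd h.2 (by simp)

lemma flatten_split : ∀ {Ps : List (List α)} {Γ Δ : List α} {x : α},
    Ps.flatten = Γ ++ x :: Δ →
    ∃ Ps₁ P₁ P₂ Ps₂, Ps = Ps₁ ++ (P₁ ++ x :: P₂) :: Ps₂ ∧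
      Γ = Ps₁.flatten ++ P₁ ∧ Δ = P₂ ++ Ps₂.flatten := by
  intro Ps
  induction Ps with
  | nil => intro Γ Δ x h; exact absurd h.symm (by simp)
  | cons P Ps ih =>
    intro Γ Δ x h
    rw [List.flatten_cons] at h
    rcases split_cons h.symm with ⟨Γ₂, h1, h2⟩ | ⟨Γ₁, h1, h2⟩
    · exact ⟨[], Γ, Γ₂, Ps, by simp [h1], by simp, h2⟩
    · obtain ⟨Ps₁, P₁, P₂, Ps₂, e1, e2, e3⟩ := ih h2
      exact ⟨P :: Ps₁, P₁, P₂, Ps₂, by simp [e1], by simp [h1, e2], e3⟩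

end ListSplit

inductive LeftPrem : LFormula → List LFormula → Prop
  | mul (A B : LFormula) : LeftPrem (LFormula.mul A B) [A, B]
  | star (A : LFormula) (n : ℕ) : LeftPrem (LFormula.star A) (List.replicate n A)

lemma flatten_replicate_singleton {α : Type*} (n : ℕ) (a : α) :
    (List.replicate n [a]).flatten = List.replicate n a := by
  induction n with
  | zero => simp
  | succ k ih => simp [List.replicate_succ, ih]

lemma LeftPrem.der {x : LFormula} {L : List LFormula} (h : LeftPrem x L) : LDer L x := by
  cases h with
  | mul A B => simpa using LDer.mul_right [A] [B] A B (LDer.id A) (LDer.id B)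
  | star A n =>
    rw [← flatten_replicate_singleton n A]
    refine LDer.star_right _ A ?_
    intro P hP
    have := List.eq_of_mem_replicate hP
    subst this
    exact LDer.id A

theorem LDer.inv : ∀ {S : List LFormula} {C : LFormula}, LDer S C →
    ∀ Γ Δ x L, LeftPrem x L → S = Γ ++ x :: Δ → LDer (Γ ++ L ++ Δ) C := by
  intro S C h
  induction h with
  | id A =>
    intro Γ Δ x L hL hS
    obtain ⟨rfl, rfl, rfl⟩ := singleton_split hS
    simpa using hL.der
  | ldiv_left P Γ' Δ' A B C hP hBC ihP ihBC =>
    intro Γ Δ x L hL hS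
    have hS' : Γ ++ x :: Δ = Γ' ++ (P ++ ([LFormula.ldiv A B] ++ Δ')) := by
      rw [← hS]; simp [List.append_assoc]
    rcases split_cons4 hS' with ⟨Γ₂, h1, h2⟩ | ⟨Γ₁, Γ₂, h1, h2, h3⟩ |
        ⟨Γ₁, Γ₂, h1, h2, h3⟩ | ⟨Γ₁, h1, h2⟩
    · -- x inside Γ'
      have hprem := ihBC Γ (Γ₂ ++ [B] ++ Δ') x L hL (by simp [h1, List.append_assoc])
      have := LDer.ldiv_left P (Γ ++ L ++ Γ₂) Δ' A B C hP
        (by simpa [List.append_assoc] using hprem)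
      subst h2
      simpa [List.append_assoc] using this
    · -- x inside P
      have hprem := ihP Γ₁ Γ₂ x L hL h2
      have := LDer.ldiv_left (Γ₁ ++ L ++ Γ₂) Γ' Δ' A B C hprem hBC
      subst h1; subst h3
      simpa [List.append_assoc] using this
    · -- x is the principal ldiv formula: impossible
      obtain ⟨rfl, rfl, rfl⟩ := singleton_split h2
      cases hL
    · -- x inside Δ'
      have hprem := ihBC (Γ' ++ [B] ++ Γ₁) Δ x L hL (by simp [h2, List.append_assoc])
      have := LDer.ldiv_left P Γ' (Γ₁ ++ L ++ Δ) A B C hP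
        (by simpa [List.append_assoc] using hprem)
      subst h1
      simpa [List.append_assoc] using this
  | ldiv_right P A B hAB ih =>
    intro Γ Δ x L hL hS
    subst hS
    have := ih (A :: Γ) Δ x L hL rfl
    exact LDer.ldiv_right _ A B (by simpa using this)
  | rdiv_left P Γ' Δ' A B C hP hBC ihP ihBC =>
    intro Γ Δ x L hL hS
    have hS' : Γ ++ x :: Δ = Γ' ++ ([LFormula.rdiv B A] ++ (P ++ Δ')) := by
      rw [← hS]; simp [List.append_assoc]
    rcases split_cons4 hS' with ⟨Γ₂, h1, h2⟩ | ⟨Γ₁, Γ₂, h1, h2, h3⟩ |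
        ⟨Γ₁, Γ₂, h1, h2, h3⟩ | ⟨Γ₁, h1, h2⟩
    · -- x inside Γ'
      have hprem := ihBC Γ (Γ₂ ++ [B] ++ Δ') x L hL (by simp [h1, List.append_assoc])
      have := LDer.rdiv_left P (Γ ++ L ++ Γ₂) Δ' A B C hP
        (by simpa [List.append_assoc] using hprem)
      subst h2
      simpa [List.append_assoc] using this
    · -- x is the principal rdiv formula: impossible
      obtain ⟨rfl, rfl, rfl⟩ := singleton_split h2
      cases hL
    · -- x inside P
      have hprem := ihP Γ₁ Γ₂ x L hL h2
      have := LDer.rdiv_left (Γ₁ ++ L ++ Γ₂) Γ' Δ' A B C hprem hBC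
      subst h1; subst h3
      simpa [List.append_assoc] using this
    · -- x inside Δ'
      have hprem := ihBC (Γ' ++ [B] ++ Γ₁) Δ x L hL (by simp [h2, List.append_assoc])
      have := LDer.rdiv_left P Γ' (Γ₁ ++ L ++ Δ) A B C hP
        (by simpa [List.append_assoc] using hprem)
      subst h1
      simpa [List.append_assoc] using this
  | rdiv_right P A B hAB ih =>
    intro Γ Δ x L hL hS
    subst hS
    have := ih Γ (Δ ++ [A]) x L hL (by simp)
    exact LDer.rdiv_right _ A B (by simpa [List.append_assoc] using this)
  | mul_left Γ' Δ' A B C hAB ih =>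
    intro Γ Δ x L hL hS
    have hS' : Γ ++ x :: Δ = Γ' ++ ([LFormula.mul A B] ++ Δ') := by
      rw [← hS]; simp [List.append_assoc]
    rcases split_cons3 hS' with ⟨Γ₂, h1, h2⟩ | ⟨Γ₁, Γ₂, h1, h2, h3⟩ | ⟨Γ₁, h1, h2⟩
    · -- x inside Γ'
      have hprem := ih Γ (Γ₂ ++ [A, B] ++ Δ') x L hL (by simp [h1, List.append_assoc])
      have := LDer.mul_left (Γ ++ L ++ Γ₂) Δ' A B C
        (by simpa [List.append_assoc] using hprem)
      subst h2
      simpa [List.append_assoc] using this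
    · -- x is principal
      obtain ⟨rfl, rfl, rfl⟩ := singleton_split h2
      cases hL
      subst h1; subst h3
      simpa [List.append_assoc] using hAB
    · -- x inside Δ'
      have hprem := ih (Γ' ++ [A, B] ++ Γ₁) Δ x L hL (by simp [h2, List.append_assoc])
      have := LDer.mul_left Γ' (Γ₁ ++ L ++ Δ) A B C
        (by simpa [List.append_assoc] using hprem)
      subst h1
      simpa [List.append_assoc] using this
  | mul_right Γ' Δ' A B hA hB ihA ihB =>
    intro Γ Δ x L hL hS
    rcases split_cons hS.symm with ⟨Γ₂, h1, h2⟩ | ⟨Γ₁, h1, h2⟩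
    · -- x inside Γ'
      have hprem := ihA Γ Γ₂ x L hL h1
      have := LDer.mul_right (Γ ++ L ++ Γ₂) Δ' A B hprem hB
      subst h2
      simpa [List.append_assoc] using this
    · -- x inside Δ'
      have hprem := ihB Γ₁ Δ x L hL h2
      have := LDer.mul_right Γ' (Γ₁ ++ L ++ Δ) A B hA hprem
      subst h1
      simpa [List.append_assoc] using this
  | star_left Γ' Δ' A C hprems ih =>
    intro Γ Δ x L hL hS
    have hS' : Γ ++ x :: Δ = Γ' ++ ([LFormula.star A] ++ Δ') := by
      rw [← hS]; simp [List.append_assoc]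
    rcases split_cons3 hS' with ⟨Γ₂, h1, h2⟩ | ⟨Γ₁, Γ₂, h1, h2, h3⟩ | ⟨Γ₁, h1, h2⟩
    · -- x inside Γ'
      have := LDer.star_left (Γ ++ L ++ Γ₂) Δ' A C (fun n => by
        have := ih n Γ (Γ₂ ++ List.replicate n A ++ Δ') x L hL (by simp [h1, List.append_assoc])
        simpa [List.append_assoc] using this)
      subst h2
      simpa [List.append_assoc] using this
    · -- x is the principal star formula
      obtain ⟨rfl, rfl, rfl⟩ := singleton_split h2
      cases hL with
      | star A n =>
        subst h1; subst h3
        simpa [List.append_assoc] using hprems n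
    · -- x inside Δ'
      have := LDer.star_left Γ' (Γ₁ ++ L ++ Δ) A C (fun n => by
        have := ih n (Γ' ++ List.replicate n A ++ Γ₁) Δ x L hL (by simp [h2, List.append_assoc])
        simpa [List.append_assoc] using this)
      subst h1
      simpa [List.append_assoc] using this
  | star_right Ps A hprems ih =>
    intro Γ Δ x L hL hS
    obtain ⟨Ps₁, P₁, P₂, Ps₂, e1, e2, e3⟩ := flatten_split hS
    subst e1
    have hmem : (P₁ ++ x :: P₂) ∈ Ps₁ ++ (P₁ ++ x :: P₂) :: Ps₂ := by simp
    have hnew : LDer (P₁ ++ L ++ P₂) A := ih _ hmem P₁ P₂ x L hL rfl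
    have := LDer.star_right (Ps₁ ++ (P₁ ++ L ++ P₂) :: Ps₂) A (by
      intro P hPmem
      rcases List.mem_append.mp hPmem with hP | hP
      · exact hprems P (by simp [hP])
      · rcases List.mem_cons.mp hP with rfl | hP
        · exact hnew
        · exact hprems P (by simp [hP]))
    subst e2; subst e3
    simpa [List.append_assoc] using this

def BB (A₁ A₂ : LFormula) : LFormula :=
  LFormula.mul (LFormula.plus A₁) (LFormula.plus A₂)

lemma inv_B {A₁ A₂ H : LFormula} {Γ Δ : List LFormula}
    (h : LDer (Γ ++ BB A₁ A₂ :: Δ) H) (n m : ℕ) :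
    LDer (Γ ++ List.replicate (n+1) A₁ ++ List.replicate (m+1) A₂ ++ Δ) H := by
  have s1 : LDer (Γ ++ LFormula.plus A₁ :: LFormula.plus A₂ :: Δ) H := by
    simpa using h.inv Γ Δ _ _ (LeftPrem.mul (LFormula.plus A₁) (LFormula.plus A₂))
      (by simp [BB])
  have s2 : LDer (Γ ++ A₁ :: LFormula.star A₁ :: LFormula.plus A₂ :: Δ) H := by
    simpa using s1.inv Γ (LFormula.plus A₂ :: Δ) _ _ (LeftPrem.mul A₁ (LFormula.star A₁))
      (by simp [LFormula.plus])
  have s3 : LDer ((Γ ++ [A₁] ++ List.replicate n A₁) ++ LFormula.plus A₂ :: Δ) H := by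
    have := s2.inv (Γ ++ [A₁]) (LFormula.plus A₂ :: Δ) _ _ (LeftPrem.star A₁ n)
      (by simp [List.append_assoc])
    simpa [List.append_assoc] using this
  have s4 : LDer ((Γ ++ [A₁] ++ List.replicate n A₁) ++ A₂ :: LFormula.star A₂ :: Δ) H := by
    simpa using s3.inv (Γ ++ [A₁] ++ List.replicate n A₁) Δ _ _
      (LeftPrem.mul A₂ (LFormula.star A₂)) (by simp [LFormula.plus])
  have s5 := s4.inv (Γ ++ [A₁] ++ List.replicate n A₁ ++ [A₂]) Δ _ _
    (LeftPrem.star A₂ m) (by simp [List.append_assoc])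
  simpa [List.replicate_succ, List.append_assoc] using s5

lemma fwd_aux (A₁ A₂ H : LFormula) :
    ∀ (ps : List (ℕ × ℕ)) (Γ : List LFormula),
      (∀ p ∈ ps, 1 ≤ p.1 ∧ 1 ≤ p.2) →
      LDer (Γ ++ List.replicate ps.length (BB A₁ A₂)) H →
      LDer (Γ ++ (ps.map fun p => List.replicate p.1 A₁ ++ List.replicate p.2 A₂).flatten) H := by
  intro ps
  induction ps with
  | nil => intro Γ _ h; simpa using h
  | cons p ps ih =>
    obtain ⟨n, m⟩ := p
    intro Γ hval h
    obtain ⟨hn, hm⟩ := hval (n, m) (by simp)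
    obtain ⟨n', rfl⟩ : ∃ n', n = n' + 1 := ⟨n - 1, by omega⟩
    obtain ⟨m', rfl⟩ : ∃ m', m = m' + 1 := ⟨m - 1, by omega⟩
    have h' : LDer (Γ ++ BB A₁ A₂ :: List.replicate ps.length (BB A₁ A₂)) H := by
      simpa [List.replicate_succ] using h
    have h2 := inv_B h' n' m'
    have h3 : LDer ((Γ ++ List.replicate (n'+1) A₁ ++ List.replicate (m'+1) A₂) ++
        List.replicate ps.length (BB A₁ A₂)) H := by
      simpa [List.append_assoc] using h2
    have := ih (Γ ++ List.replicate (n'+1) A₁ ++ List.replicate (m'+1) A₂)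
      (fun q hq => hval q (by simp [hq])) h3
    simpa [List.append_assoc] using this

lemma expand_B (A₁ A₂ H : LFormula) (Γ Δ : List LFormula)
    (h : ∀ n m : ℕ, LDer (Γ ++ List.replicate (n+1) A₁ ++ List.replicate (m+1) A₂ ++ Δ) H) :
    LDer (Γ ++ BB A₁ A₂ :: Δ) H := by
  have step2 : LDer (Γ ++ [LFormula.plus A₁, LFormula.plus A₂] ++ Δ) H := by
    have inner : LDer (Γ ++ [A₁, LFormula.star A₁] ++ (LFormula.plus A₂ :: Δ)) H := by
      have := LDer.star_left (Γ ++ [A₁]) (LFormula.plus A₂ :: Δ) A₁ H (fun k => by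
        have inner2 : LDer ((Γ ++ [A₁] ++ List.replicate k A₁) ++ [A₂, LFormula.star A₂] ++ Δ) H := by
          have := LDer.star_left (Γ ++ [A₁] ++ List.replicate k A₁ ++ [A₂]) Δ A₂ H (fun l => by
            simpa [List.replicate_succ, List.append_assoc] using h k l)
          simpa [List.append_assoc] using this
        have := LDer.mul_left (Γ ++ [A₁] ++ List.replicate k A₁) Δ A₂ (LFormula.star A₂) H inner2
        simpa [LFormula.plus, List.append_assoc] using this)
      simpa [List.append_assoc] using this
    have := LDer.mul_left Γ (LFormula.plus A₂ :: Δ) A₁ (LFormula.star A₁) H inner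
    simpa [LFormula.plus, List.append_assoc] using this
  have := LDer.mul_left Γ Δ (LFormula.plus A₁) (LFormula.plus A₂) H step2
  simpa [BB, List.append_assoc] using this

lemma back_aux (A₁ A₂ H : LFormula) :
    ∀ (k : ℕ) (Γ : List LFormula),
      (∀ ps : List (ℕ × ℕ), ps.length = k → (∀ p ∈ ps, 1 ≤ p.1 ∧ 1 ≤ p.2) →
        LDer (Γ ++ (ps.map fun p => List.replicate p.1 A₁ ++ List.replicate p.2 A₂).flatten) H) →
      LDer (Γ ++ List.replicate k (BB A₁ A₂)) H := by
  intro k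
  induction k with
  | zero => intro Γ hps; simpa using hps [] rfl (by simp)
  | succ k ih =>
    intro Γ hps
    have key : LDer (Γ ++ BB A₁ A₂ :: List.replicate k (BB A₁ A₂)) H := by
      apply expand_B
      intro n m
      have := ih (Γ ++ List.replicate (n+1) A₁ ++ List.replicate (m+1) A₂)
        (fun ps hlen hval => by
          have := hps ((n+1, m+1) :: ps) (by simp [hlen]) (by
            intro p hp
            rcases List.mem_cons.mp hp with rfl | hp
            · exact ⟨by omega, by omega⟩
            · exact hval p hp)
          simpa [List.append_assoc] using this)
      simpa [List.append_assoc] using this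
    simpa [List.replicate_succ] using key


/-- The sequent (A₁⁺·A₂⁺)⁺ → H is derivable in L*ω iff for every k ≥ 1 and all
n₁,m₁,…,n_k,m_k ≥ 1 the sequent A₁^{n₁},A₂^{m₁},…,A₁^{n_k},A₂^{m_k} → H is derivable. -/
theorem plus_alternation_iff (A₁ A₂ H : LFormula) :
    LDer [LFormula.plus (LFormula.mul (LFormula.plus A₁) (LFormula.plus A₂))] H ↔
      ∀ ps : List (ℕ × ℕ), ps ≠ [] → (∀ p ∈ ps, 1 ≤ p.1 ∧ 1 ≤ p.2) →
        LDer ((ps.map fun p => List.replicate p.1 A₁ ++ List.replicate p.2 A₂).flatten) H := by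
  constructor
  · intro h ps hne hval
    have h1 : LDer ([BB A₁ A₂] ++ LFormula.star (BB A₁ A₂) :: []) H := by
      have := h.inv [] [] _ _ (LeftPrem.mul (BB A₁ A₂) (LFormula.star (BB A₁ A₂)))
        (by simp [LFormula.plus, BB])
      simpa using this
    have h2 : ∀ n, LDer (List.replicate (n+1) (BB A₁ A₂)) H := fun n => by
      have := h1.inv [BB A₁ A₂] [] _ _ (LeftPrem.star (BB A₁ A₂) n) rfl
      simpa [List.replicate_succ, List.append_assoc] using this
    obtain ⟨p, ps', rfl⟩ : ∃ p ps', ps = p :: ps' := by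
      cases ps with
      | nil => exact absurd rfl hne
      | cons p ps' => exact ⟨p, ps', rfl⟩
    have := fwd_aux A₁ A₂ H (p :: ps') [] hval (by simpa using h2 ps'.length)
    simpa using this
  · intro hall
    have key : LDer ([] ++ [LFormula.mul (BB A₁ A₂) (LFormula.star (BB A₁ A₂))] ++ []) H := by
      apply LDer.mul_left
      have inner : LDer ([BB A₁ A₂] ++ [LFormula.star (BB A₁ A₂)] ++ []) H := by
        apply LDer.star_left
        intro n
        have := back_aux A₁ A₂ H (n+1) [] (fun ps hlen hval => by
          have hne : ps ≠ [] := by intro hh; subst hh; simp at hlen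
          simpa using hall ps hne hval)
        simpa [List.replicate_succ, List.append_assoc] using this
      simpa using inner
    simpa [LFormula.plus, BB] using key
end

section
/- The ω-rule for Kleene star is invertible in L*ω: if the sequent Γ, A*, Δ → C is derivable in L*ω, then for every n ≥ 0 the sequent Γ, A^n, Δ → C is derivable in L*ω. -/
-- auxiliary list splitting lemmas

lemma lsplit3 {α : Type*} {x : α} {l₁ l₂ m₁ m₂ : List α} (h : m₁ ++ m₂ = l₁ ++ x :: l₂) :
    (∃ t, m₁ = l₁ ++ x :: t ∧ l₂ = t ++ m₂) ∨ (∃ t, l₁ = m₁ ++ t ∧ m₂ = t ++ x :: l₂) := by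
  rcases List.append_eq_append_iff.mp h with ⟨a, ha1, ha2⟩ | ⟨c, hc1, hc2⟩
  · right; exact ⟨a, ha1, ha2⟩
  · cases c with
    | nil =>
        right
        simp only [List.nil_append] at hc2
        exact ⟨[], by simpa using hc1.symm, by simpa using hc2.symm⟩
    | cons y c =>
        simp only [List.cons_append] at hc2
        injection hc2 with ha hb
        subst ha
        exact Or.inl ⟨c, hc1, hb⟩

lemma lsplit_mid {α : Type*} {x y : α} {Γ₀ Δ₀ Γ Δ : List α}
    (h : Γ₀ ++ y :: Δ₀ = Γ ++ x :: Δ) :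
    (∃ t, Γ₀ = Γ ++ x :: t ∧ Δ = t ++ y :: Δ₀) ∨ (Γ₀ = Γ ∧ y = x ∧ Δ₀ = Δ) ∨
    (∃ t, Γ = Γ₀ ++ y :: t ∧ Δ₀ = t ++ x :: Δ) := by
  rcases lsplit3 h with ⟨t, h1, h2⟩ | ⟨t, h1, h2⟩
  · exact Or.inl ⟨t, h1, h2⟩
  · cases t with
    | nil =>
        simp only [List.nil_append] at h2
        injection h2 with ha hb
        exact Or.inr (Or.inl ⟨by simpa using h1.symm, ha, hb⟩)
    | cons z t =>
        simp only [List.cons_append] at h2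
        injection h2 with ha hb
        subst ha
        exact Or.inr (Or.inr ⟨t, h1, hb⟩)

lemma lflatten_split {α : Type*} {Ps : List (List α)} {Γ Δ : List α} {x : α}
    (h : Ps.flatten = Γ ++ x :: Δ) :
    ∃ Ps₁ P₁ P₂ Ps₂, Ps = Ps₁ ++ (P₁ ++ x :: P₂) :: Ps₂ ∧
      Γ = Ps₁.flatten ++ P₁ ∧ Δ = P₂ ++ Ps₂.flatten := by
  induction Ps generalizing Γ with
  | nil => simp at h
  | cons P Ps ih =>
      rw [List.flatten_cons] at h
      rcases lsplit3 h with ⟨t, h1, h2⟩ | ⟨t, h1, h2⟩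
      · exact ⟨[], Γ, t, Ps, by simp [h1], by simp, h2⟩
      · obtain ⟨Ps₁, P₁, P₂, Ps₂, e1, e2, e3⟩ := ih h2
        exact ⟨P :: Ps₁, P₁, P₂, Ps₂, by simp [e1], by simp [h1, e2], e3⟩

lemma derive_star (A : LFormula) (n : ℕ) : LDer (List.replicate n A) (LFormula.star A) := by
  have hf : (List.replicate n [A]).flatten = List.replicate n A := by
    induction n with
    | zero => simp
    | succ m ih => simp [List.replicate_succ, ih]
  have h := LDer.star_right (List.replicate n [A]) A (by
    intro P hP
    rw [List.eq_of_mem_replicate hP]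
    exact LDer.id A)
  rwa [hf] at h

lemma star_inv_aux {Φ : List LFormula} {C : LFormula} (h : LDer Φ C) :
    ∀ Γ Δ A n, Φ = Γ ++ LFormula.star A :: Δ → LDer (Γ ++ List.replicate n A ++ Δ) C := by
  induction h with
  | id A₀ =>
      intro Γ Δ A n heq
      rcases Γ with _ | ⟨g, Γ'⟩
      · simp only [List.nil_append] at heq
        obtain ⟨rfl, rfl⟩ : A₀ = LFormula.star A ∧ Δ = [] := by
          exact ⟨(List.cons.injEq _ _ _ _ ▸ heq).1, (List.cons.injEq _ _ _ _ ▸ heq).2.symm⟩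
        simpa using derive_star A n
      · exfalso
        have := (List.cons.injEq _ _ _ _ ▸ heq).2
        exact absurd this.symm (by simp)
  | ldiv_left P Γ₀ Δ₀ A₀ B₀ C₀ h1 h2 ih1 ih2 =>
      intro Γ Δ A n heq
      have heq' : (Γ₀ ++ P) ++ LFormula.ldiv A₀ B₀ :: Δ₀ = Γ ++ LFormula.star A :: Δ := by
        simpa [List.append_assoc] using heq
      rcases lsplit_mid heq' with ⟨t, h1', h2'⟩ | ⟨_, hxy, _⟩ | ⟨t, h1', h2'⟩
      · rcases lsplit3 h1' with ⟨s, hΓ₀, hts⟩ | ⟨s, hΓ, hP⟩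
        · have hprem := ih2 Γ (s ++ [B₀] ++ Δ₀) A n (by simp [hΓ₀])
          have h' := LDer.ldiv_left P (Γ ++ List.replicate n A ++ s) Δ₀ A₀ B₀ C₀ h1
            (by simpa [List.append_assoc] using hprem)
          rw [h2', hts]
          simpa [List.append_assoc] using h'
        · have hprem := ih1 s t A n hP
          have h' := LDer.ldiv_left (s ++ List.replicate n A ++ t) Γ₀ Δ₀ A₀ B₀ C₀ hprem h2
          rw [h2', hΓ]
          simpa [List.append_assoc] using h'
      · exact absurd hxy (by simp)
      · have hprem := ih2 (Γ₀ ++ [B₀] ++ t) Δ A n (by simp [h2', List.append_assoc])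
        have h' := LDer.ldiv_left P Γ₀ (t ++ List.replicate n A ++ Δ) A₀ B₀ C₀ h1
          (by simpa [List.append_assoc] using hprem)
        rw [h1']
        simpa [List.append_assoc] using h'
  | ldiv_right P A₀ B₀ h1 ih =>
      intro Γ Δ A n heq
      have hprem := ih (A₀ :: Γ) Δ A n (by simp [heq])
      exact LDer.ldiv_right _ A₀ B₀ (by simpa using hprem)
  | rdiv_left P Γ₀ Δ₀ A₀ B₀ C₀ h1 h2 ih1 ih2 =>
      intro Γ Δ A n heq
      have heq' : Γ₀ ++ LFormula.rdiv B₀ A₀ :: (P ++ Δ₀) = Γ ++ LFormula.star A :: Δ := by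
        simpa [List.append_assoc] using heq
      rcases lsplit_mid heq' with ⟨t, h1', h2'⟩ | ⟨_, hxy, _⟩ | ⟨t, h1', h2'⟩
      · have hprem := ih2 Γ (t ++ [B₀] ++ Δ₀) A n (by simp [h1', List.append_assoc])
        have h' := LDer.rdiv_left P (Γ ++ List.replicate n A ++ t) Δ₀ A₀ B₀ C₀ h1
          (by simpa [List.append_assoc] using hprem)
        rw [h2']
        simpa [List.append_assoc] using h'
      · exact absurd hxy (by simp)
      · rcases lsplit3 h2' with ⟨s, hP, hΔ⟩ | ⟨s, ht, hΔ₀⟩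
        · have hprem := ih1 t s A n hP
          have h' := LDer.rdiv_left (t ++ List.replicate n A ++ s) Γ₀ Δ₀ A₀ B₀ C₀ hprem h2
          rw [h1', hΔ]
          simpa [List.append_assoc] using h'
        · have hprem := ih2 (Γ₀ ++ [B₀] ++ s) Δ A n (by simp [hΔ₀, List.append_assoc])
          have h' := LDer.rdiv_left P Γ₀ (s ++ List.replicate n A ++ Δ) A₀ B₀ C₀ h1
            (by simpa [List.append_assoc] using hprem)
          rw [h1', ht]
          simpa [List.append_assoc] using h'
  | rdiv_right P A₀ B₀ h1 ih =>
      intro Γ Δ A n heq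
      have hprem := ih Γ (Δ ++ [A₀]) A n (by simp [heq])
      exact LDer.rdiv_right _ A₀ B₀ (by simpa [List.append_assoc] using hprem)
  | mul_left Γ₀ Δ₀ A₀ B₀ C₀ h1 ih =>
      intro Γ Δ A n heq
      have heq' : Γ₀ ++ LFormula.mul A₀ B₀ :: Δ₀ = Γ ++ LFormula.star A :: Δ := by
        simpa using heq
      rcases lsplit_mid heq' with ⟨t, h1', h2'⟩ | ⟨_, hxy, _⟩ | ⟨t, h1', h2'⟩
      · have hprem := ih Γ (t ++ [A₀, B₀] ++ Δ₀) A n (by simp [h1', List.append_assoc])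
        have h' := LDer.mul_left (Γ ++ List.replicate n A ++ t) Δ₀ A₀ B₀ C₀
          (by simpa [List.append_assoc] using hprem)
        rw [h2']
        simpa [List.append_assoc] using h'
      · exact absurd hxy (by simp)
      · have hprem := ih (Γ₀ ++ [A₀, B₀] ++ t) Δ A n (by simp [h2', List.append_assoc])
        have h' := LDer.mul_left Γ₀ (t ++ List.replicate n A ++ Δ) A₀ B₀ C₀
          (by simpa [List.append_assoc] using hprem)
        rw [h1']
        simpa [List.append_assoc] using h'
  | mul_right Γ₀ Δ₀ A₀ B₀ h1 h2 ih1 ih2 =>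
      intro Γ Δ A n heq
      rcases lsplit3 heq with ⟨t, h1', h2'⟩ | ⟨t, h1', h2'⟩
      · have hprem := ih1 Γ t A n h1'
        have h' := LDer.mul_right (Γ ++ List.replicate n A ++ t) Δ₀ A₀ B₀ hprem h2
        rw [h2']
        simpa [List.append_assoc] using h'
      · have hprem := ih2 t Δ A n h2'
        have h' := LDer.mul_right Γ₀ (t ++ List.replicate n A ++ Δ) A₀ B₀ h1 hprem
        rw [h1']
        simpa [List.append_assoc] using h'
  | star_left Γ₀ Δ₀ A₀ C₀ h1 ih =>
      intro Γ Δ A n heq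
      have heq' : Γ₀ ++ LFormula.star A₀ :: Δ₀ = Γ ++ LFormula.star A :: Δ := by
        simpa using heq
      rcases lsplit_mid heq' with ⟨t, h1', h2'⟩ | ⟨hΓ, hxy, hΔ⟩ | ⟨t, h1', h2'⟩
      · have h' := LDer.star_left (Γ ++ List.replicate n A ++ t) Δ₀ A₀ C₀ (by
          intro m
          have := ih m Γ (t ++ List.replicate m A₀ ++ Δ₀) A n (by simp [h1', List.append_assoc])
          simpa [List.append_assoc] using this)
        rw [h2']
        simpa [List.append_assoc] using h'
      · obtain rfl : A₀ = A := by injection hxy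
        rw [hΓ, hΔ] at h1
        exact h1 n
      · have h' := LDer.star_left Γ₀ (t ++ List.replicate n A ++ Δ) A₀ C₀ (by
          intro m
          have := ih m (Γ₀ ++ List.replicate m A₀ ++ t) Δ A n (by simp [h2', List.append_assoc])
          simpa [List.append_assoc] using this)
        rw [h1']
        simpa [List.append_assoc] using h'
  | star_right Ps A₀ h1 ih =>
      intro Γ Δ A n heq
      obtain ⟨Ps₁, P₁, P₂, Ps₂, e1, e2, e3⟩ := lflatten_split heq
      have hmid : LDer (P₁ ++ List.replicate n A ++ P₂) A₀ :=
        ih _ (by rw [e1]; simp) P₁ P₂ A n rfl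
      have h' := LDer.star_right (Ps₁ ++ (P₁ ++ List.replicate n A ++ P₂) :: Ps₂) A₀ (by
        intro Q hQ
        rcases List.mem_append.mp hQ with hQ | hQ
        · exact h1 Q (by rw [e1]; exact List.mem_append_left _ hQ)
        · rcases List.mem_cons.mp hQ with rfl | hQ
          · exact hmid
          · exact h1 Q (by rw [e1]; exact List.mem_append_right _ (List.mem_cons_of_mem _ hQ)))
      rw [e2, e3]
      simpa [List.append_assoc] using h'


/-- The ω-rule for Kleene star is invertible in L*ω: if Γ, A*, Δ → C is derivable,
then Γ, Aⁿ, Δ → C is derivable for every n ≥ 0. -/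
theorem star_left_invertible (Γ Δ : List LFormula) (A C : LFormula)
    (h : LDer (Γ ++ [LFormula.star A] ++ Δ) C) (n : ℕ) :
    LDer (Γ ++ List.replicate n A ++ Δ) C := by
  exact star_inv_aux h Γ Δ A n (by simp)
end

section
/- Sentinel lemma: let p, q, r be distinct variables, n ≥ 0, and let Φ₀, Φ₁, …, Φ_n be lists of product-free formulas none of whose formulas has top p, q, or r. If the sequent Φ₀, S_{p,q,r}, Φ₁, S_{p,q,r}, …, Φ_{n-1}, S_{p,q,r}, Φ_n → S_{p,q,r} (with exactly n occurrences of S_{p,q,r} interleaved in the antecedent) is derivable in L^Λ(\,/), then n = 1 and every Φ_i is the empty list; that is, the only derivable sequent of this form is S_{p,q,r} → S_{p,q,r}. In particular, neither Λ → S_{p,q,r} nor S_{p,q,r}, S_{p,q,r} → S_{p,q,r} is derivable. -/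
/-- Product-free Lambek formulas: variables `p n`, left division `A \\ B`
(written `ldiv A B`) and right division `B / A` (written `rdiv B A`). -/
inductive PF : Type
  | var : ℕ → PF
  | ldiv : PF → PF → PF   -- ldiv A B  is  A \\ B
  | rdiv : PF → PF → PF   -- rdiv B A  is  B / A
  deriving DecidableEq

/-- Derivability in L^Λ(\\,/), the product-free Lambek calculus allowing empty
antecedents: the least set of sequents (`PDer Γ B` means `Γ → B` is derivable)
containing the identity axioms and closed under the four division rules. -/
inductive PDer : List PF → PF → Prop
  /-- identity axiom A → A -/
  | id (A : PF) : PDer [A] A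
  /-- (\\→): from Π → A and Γ,B,Δ → C infer Γ,Π,A\\B,Δ → C -/
  | ldiv_left (P Γ Δ : List PF) (A B C : PF) :
      PDer P A → PDer (Γ ++ [B] ++ Δ) C →
      PDer (Γ ++ P ++ [PF.ldiv A B] ++ Δ) C
  /-- (→\\): from A,Π → B infer Π → A\\B -/
  | ldiv_right (P : List PF) (A B : PF) :
      PDer (A :: P) B → PDer P (PF.ldiv A B)
  /-- (/→): from Π → A and Γ,B,Δ → C infer Γ,B/A,Π,Δ → C -/
  | rdiv_left (P Γ Δ : List PF) (A B C : PF) :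
      PDer P A → PDer (Γ ++ [B] ++ Δ) C →
      PDer (Γ ++ [PF.rdiv B A] ++ P ++ Δ) C
  /-- (→/): from Π,A → B infer Π → B/A -/
  | rdiv_right (P : List PF) (A B : PF) :
      PDer (P ++ [A]) B → PDer P (PF.rdiv B A)

/-- The top variable of a product-free formula: top(p) = p, top(A\\B) = top(B),
top(B/A) = top(B). -/
def PF.top : PF → ℕ
  | PF.var n => n
  | PF.ldiv _ B => B.top
  | PF.rdiv B _ => B.top

/-- The sentinel formula S_{p,q,r} = (r/(p\\r))/(q/(p\\q)). -/
def sentinel (p q r : ℕ) : PF :=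
  PF.rdiv (PF.rdiv (PF.var r) (PF.ldiv (PF.var p) (PF.var r)))
    (PF.rdiv (PF.var q) (PF.ldiv (PF.var p) (PF.var q)))
namespace SentinelSem

abbrev Lang := Set (List ℕ)

def lmul (X Y : Lang) : Lang := {w | ∃ x ∈ X, ∃ y ∈ Y, w = x ++ y}
def lld (X Y : Lang) : Lang := {w | ∀ x ∈ X, x ++ w ∈ Y}
def lrd (Y X : Lang) : Lang := {w | ∀ x ∈ X, w ++ x ∈ Y}

def interp (v : ℕ → Lang) : PF → Lang
  | PF.var n => v n
  | PF.ldiv A B => lld (interp v A) (interp v B)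
  | PF.rdiv B A => lrd (interp v B) (interp v A)

def interpL (v : ℕ → Lang) : List PF → Lang
  | [] => {[]}
  | A :: Γ => lmul (interp v A) (interpL v Γ)

lemma interpL_append (v : ℕ → Lang) (Γ Δ : List PF) (x y : List ℕ)
    (hx : x ∈ interpL v Γ) (hy : y ∈ interpL v Δ) : x ++ y ∈ interpL v (Γ ++ Δ) := by
  induction Γ generalizing x with
  | nil =>
    simp only [interpL, Set.mem_singleton_iff] at hx
    subst hx; simpa using hy
  | cons A Γ ih =>
    obtain ⟨a, ha, b, hb, rfl⟩ := hx
    exact ⟨a, ha, b ++ y, ih b hb, by simp⟩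

lemma interpL_append_inv (v : ℕ → Lang) (Γ Δ : List PF) (w : List ℕ)
    (hw : w ∈ interpL v (Γ ++ Δ)) :
    ∃ x ∈ interpL v Γ, ∃ y ∈ interpL v Δ, w = x ++ y := by
  induction Γ generalizing w with
  | nil => exact ⟨[], rfl, w, hw, rfl⟩
  | cons A Γ ih =>
    obtain ⟨a, ha, b, hb, rfl⟩ := hw
    obtain ⟨x, hx, y, hy, rfl⟩ := ih b hb
    exact ⟨a ++ x, ⟨a, ha, x, hx, rfl⟩, y, hy, by simp⟩

lemma interpL_single (v : ℕ → Lang) (A : PF) (x : List ℕ) (hx : x ∈ interp v A) :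
    x ∈ interpL v [A] := ⟨x, hx, [], rfl, by simp⟩

lemma interpL_single_inv (v : ℕ → Lang) (A : PF) (x : List ℕ) (hx : x ∈ interpL v [A]) :
    x ∈ interp v A := by
  obtain ⟨a, ha, b, hb, rfl⟩ := hx
  simp only [interpL, Set.mem_singleton_iff] at hb
  subst hb; simpa using ha

theorem sound (v : ℕ → Lang) {Γ : List PF} {B : PF} (h : PDer Γ B) :
    interpL v Γ ⊆ interp v B := by
  induction h with
  | id A =>
    intro w hw; exact interpL_single_inv v A w hw
  | ldiv_left P Γ Δ A B C _ _ ih1 ih2 =>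
    intro w hw
    obtain ⟨x, hx, y, hy, rfl⟩ := interpL_append_inv v _ Δ w hw
    obtain ⟨g, hg, z, hz, rfl⟩ := interpL_append_inv v _ [PF.ldiv A B] x hx
    obtain ⟨u, hu, f, hf, rfl⟩ := interpL_append_inv v Γ P g hg
    have hf' := interpL_single_inv v _ _ hz
    have hB : f ++ z ∈ interp v B := hf' f (ih1 hf)
    have : (u ++ (f ++ z)) ++ y ∈ interpL v (Γ ++ [B] ++ Δ) := by
      exact interpL_append v _ Δ _ y
        (interpL_append v Γ [B] u (f ++ z) hu (interpL_single v B _ hB)) hy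
    have := ih2 this
    simpa [List.append_assoc] using this
  | ldiv_right P A B _ ih =>
    intro w hw
    intro x hx
    exact ih ⟨x, hx, w, hw, rfl⟩
  | rdiv_left P Γ Δ A B C _ _ ih1 ih2 =>
    intro w hw
    obtain ⟨x, hx, y, hy, rfl⟩ := interpL_append_inv v _ Δ w hw
    obtain ⟨g, hg, z, hz, rfl⟩ := interpL_append_inv v _ P x hx
    obtain ⟨u, hu, f, hf, rfl⟩ := interpL_append_inv v Γ [PF.rdiv B A] g hg
    have hf' := interpL_single_inv v _ _ hf
    have hB : f ++ z ∈ interp v B := hf' z (ih1 hz)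
    have : (u ++ (f ++ z)) ++ y ∈ interpL v (Γ ++ [B] ++ Δ) := by
      exact interpL_append v _ Δ _ y
        (interpL_append v Γ [B] u (f ++ z) hu (interpL_single v B _ hB)) hy
    have := ih2 this
    simpa [List.append_assoc] using this
  | rdiv_right P A B _ ih =>
    intro w hw
    intro x hx
    exact ih (interpL_append v P [A] w x hw (interpL_single v A x hx))

end SentinelSem

namespace SentinelSem

/-- Words containing the letter 5: a two-sided-ideal language. -/
def Hl : Lang := {w | 5 ∈ w}

def v0 (p q r : ℕ) : ℕ → Lang := fun t =>
  if t = p then {[0]}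
  else if t = q then {[0,1],[3,1]}
  else if t = r then {[0,2],[4,0,2],[4,3,2]}
  else Hl

lemma snoc_eq {w y : List ℕ} {a b : ℕ} (h : w ++ [a] = y ++ [b]) : w = y ∧ a = b := by
  have := List.append_inj' h rfl
  exact ⟨this.1, by simpa using this.2⟩

lemma s_eq (p q r : ℕ) (hpq : p ≠ q) (hpr : p ≠ r) (hqr : q ≠ r) :
    interp (v0 p q r) (sentinel p q r) = {[4]} := by
  have hp : v0 p q r p = {[0]} := by simp [v0]
  have hq : v0 p q r q = {[0,1],[3,1]} := by simp [v0, Ne.symm hpq]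
  have hr : v0 p q r r = {[0,2],[4,0,2],[4,3,2]} := by simp [v0, Ne.symm hpr, Ne.symm hqr]
  have hU : lld ({[0]} : Lang) {[0,1],[3,1]} = {[1]} := by
    ext w; simp [lld]
  have hT : lld ({[0]} : Lang) {[0,2],[4,0,2],[4,3,2]} = {[2]} := by
    ext w; simp [lld]
  have hB' : lrd ({[0,1],[3,1]} : Lang) {[1]} = {[0],[3]} := by
    ext w
    simp only [lrd, Set.mem_setOf_eq, Set.mem_insert_iff, Set.mem_singleton_iff]
    constructor
    · intro h
      rcases h [1] rfl with h1 | h1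
      · exact Or.inl (snoc_eq (a := 1) (b := 1) (y := [0]) h1).1
      · exact Or.inr (snoc_eq (a := 1) (b := 1) (y := [3]) h1).1
    · rintro (rfl | rfl) x rfl <;> simp
  have hC' : lrd ({[0,2],[4,0,2],[4,3,2]} : Lang) {[2]} = {[0],[4,0],[4,3]} := by
    ext w
    simp only [lrd, Set.mem_setOf_eq, Set.mem_insert_iff, Set.mem_singleton_iff]
    constructor
    · intro h
      rcases h [2] rfl with h1 | h1 | h1
      · exact Or.inl (snoc_eq (a := 2) (b := 2) (y := [0]) h1).1
      · exact Or.inr (Or.inl (snoc_eq (a := 2) (b := 2) (y := [4,0]) h1).1)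
      · exact Or.inr (Or.inr (snoc_eq (a := 2) (b := 2) (y := [4,3]) h1).1)
    · rintro (rfl | rfl | rfl) x rfl <;> simp
  have : interp (v0 p q r) (sentinel p q r)
      = lrd ({[0],[4,0],[4,3]} : Lang) {[0],[3]} := by
    simp only [sentinel, interp, hp, hq, hr, hU, hT, hB', hC']
  rw [this]
  ext w
  simp only [lrd, Set.mem_setOf_eq, Set.mem_singleton_iff]
  constructor
  · intro h
    rcases h [3] (by simp) with h1 | h1 | h1
    · exact absurd (snoc_eq (a := 3) (b := 0) (y := ([] : List ℕ)) h1).2 (by simp)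
    · exact absurd (snoc_eq (a := 3) (b := 0) (y := [4]) h1).2 (by simp)
    · exact (snoc_eq (a := 3) (b := 3) (y := [4]) h1).1
  · rintro rfl x hx
    rcases hx with h | h
    · subst h; simp
    · simp only [Set.mem_singleton_iff] at h; subst h; simp

lemma good_top (p q r : ℕ) : ∀ A : PF, A.top ≠ p → A.top ≠ q → A.top ≠ r →
    Hl ⊆ interp (v0 p q r) A := by
  intro A
  induction A with
  | var t =>
    intro h1 h2 h3
    simp only [PF.top] at h1 h2 h3
    simp [interp, v0, h1, h2, h3]
  | ldiv A B ihA ihB =>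
    intro h1 h2 h3 w hw x _
    exact ihB h1 h2 h3 (by simp only [Hl, Set.mem_setOf_eq, List.mem_append]; exact Or.inr hw)
  | rdiv B A ihB ihA =>
    intro h1 h2 h3 w hw x _
    exact ihB h1 h2 h3 (by simp only [Hl, Set.mem_setOf_eq, List.mem_append]; exact Or.inl hw)

lemma rep_mem (p q r : ℕ) : ∀ Γ : List PF,
    (∀ A ∈ Γ, A.top ≠ p ∧ A.top ≠ q ∧ A.top ≠ r) →
    List.replicate Γ.length 5 ∈ interpL (v0 p q r) Γ := by
  intro Γ
  induction Γ with
  | nil => intro _; simp [interpL]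
  | cons A Γ ih =>
    intro h
    obtain ⟨h1, h2, h3⟩ := h A (by simp)
    refine ⟨[5], good_top p q r A h1 h2 h3 (by simp [Hl]), List.replicate Γ.length 5,
      ih (fun B hB => h B (by simp [hB])), ?_⟩
    simp [List.replicate_succ]

def W : List (List PF) → List ℕ
  | [] => []
  | [Φ] => List.replicate Φ.length 5
  | Φ :: rest => List.replicate Φ.length 5 ++ [4] ++ W rest

lemma W_mem (p q r : ℕ) (hpq : p ≠ q) (hpr : p ≠ r) (hqr : q ≠ r) :
    ∀ Φs : List (List PF), Φs ≠ [] →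
    (∀ Φ ∈ Φs, ∀ A ∈ Φ, A.top ≠ p ∧ A.top ≠ q ∧ A.top ≠ r) →
    W Φs ∈ interpL (v0 p q r) (List.intercalate [sentinel p q r] Φs) := by
  intro Φs
  induction Φs with
  | nil => intro h; exact absurd rfl h
  | cons Φ rest ih =>
    intro _ htop
    cases rest with
    | nil =>
      have : List.intercalate [sentinel p q r] [Φ] = Φ := by simp [List.intercalate]
      rw [this]
      exact rep_mem p q r Φ (htop Φ (by simp))
    | cons y t =>
      have hic : List.intercalate [sentinel p q r] (Φ :: y :: t)
          = Φ ++ [sentinel p q r] ++ List.intercalate [sentinel p q r] (y :: t) := by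
        simp [List.intercalate, List.intersperse]
      rw [hic]
      have h4 : [4] ∈ interpL (v0 p q r) [sentinel p q r] := by
        apply interpL_single
        rw [s_eq p q r hpq hpr hqr]
        simp
      have hrest := ih (by simp) (fun Ψ hΨ => htop Ψ (by simp [hΨ]))
      -- hrest needs (y :: t) ≠ [] — ih signature
      have hΦ := rep_mem p q r Φ (htop Φ (by simp))
      have := interpL_append (v0 p q r) _ _ _ _
        (interpL_append (v0 p q r) Φ [sentinel p q r] _ _ hΦ h4) hrest
      show W (Φ :: y :: t) ∈ _
      simpa [W] using this

lemma W_nil_analysis : ∀ Φs : List (List PF), Φs ≠ [] → W Φs = [4] →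
    ∃ Φ₀ Φ₁, Φs = [Φ₀, Φ₁] ∧ Φ₀ = [] ∧ Φ₁ = [] := by
  intro Φs
  match Φs with
  | [] => intro h; exact absurd rfl h
  | [Φ] =>
    intro _ hW
    exfalso
    simp only [W] at hW
    cases hΦ : Φ.length with
    | zero => rw [hΦ] at hW; simp at hW
    | succ k => rw [hΦ, List.replicate_succ] at hW; simp at hW
  | Φ :: y :: t =>
    intro _ hW
    simp only [W] at hW
    cases hΦ : Φ.length with
    | succ k => rw [hΦ, List.replicate_succ] at hW; simp at hW
    | zero =>
      rw [hΦ] at hW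
      simp only [List.replicate_zero, List.nil_append, List.cons_append] at hW
      have h4 : W (y :: t) = [] := by
        simpa using hW
      cases t with
      | nil =>
        simp only [W] at h4
        have hy : y.length = 0 := by simpa using h4
        exact ⟨Φ, y, rfl, List.length_eq_zero_iff.mp (by simpa using hΦ),
          List.length_eq_zero_iff.mp hy⟩
      | cons z t' =>
        exfalso
        simp only [W] at h4
        simp at h4

end SentinelSem


/-- Sentinel lemma: if p, q, r are distinct, none of the formulas in Φ₀,…,Φ_n has
top p, q or r, and the sequent Φ₀, S_{p,q,r}, Φ₁, S_{p,q,r}, …, Φ_{n-1}, S_{p,q,r}, Φ_n →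
S_{p,q,r} (with exactly n interleaved occurrences of the sentinel) is derivable in
L^Λ(\\,/), then n = 1 and every Φ_i is empty; i.e. the only derivable sequent of this
form is S_{p,q,r} → S_{p,q,r}. -/
theorem sentinel_lemma (p q r : ℕ) (hpq : p ≠ q) (hpr : p ≠ r) (hqr : q ≠ r)
    (n : ℕ) (Φs : List (List PF)) (hlen : Φs.length = n + 1)
    (htop : ∀ Φ ∈ Φs, ∀ A ∈ Φ, A.top ≠ p ∧ A.top ≠ q ∧ A.top ≠ r)
    (h : PDer (List.intercalate [sentinel p q r] Φs) (sentinel p q r)) :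
    n = 1 ∧ ∀ Φ ∈ Φs, Φ = ([] : List PF) := by
  
  have hne : Φs ≠ [] := by
    intro hh; rw [hh] at hlen; simp at hlen
  have hw := SentinelSem.W_mem p q r hpq hpr hqr Φs hne htop
  have hs := SentinelSem.sound (SentinelSem.v0 p q r) h hw
  rw [SentinelSem.s_eq p q r hpq hpr hqr] at hs
  have hW : SentinelSem.W Φs = [4] := hs
  obtain ⟨Φ₀, Φ₁, rfl, rfl, rfl⟩ := SentinelSem.W_nil_analysis Φs hne hW
  refine ⟨?_, ?_⟩
  · simp at hlen; omega
  · intro Φ hΦ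
    simp only [List.mem_cons, List.not_mem_nil, or_false] at hΦ
    rcases hΦ with rfl | rfl <;> rfl
end

section
/- In the is(U) construction, the sequent A_i → is(U) is derivable in L^Λ(\,/) for every i = 1, …, n. -/
/-- Whether the variable m occurs in a product-free formula. -/
def PF.occurs (m : ℕ) : PF → Prop
  | PF.var n => m = n
  | PF.ldiv A B => A.occurs m ∨ B.occurs m
  | PF.rdiv B A => B.occurs m ∨ A.occurs m

/-- Curried right divisions: `curryR q [Y₁,…,Y_m]` is the formula q/Y_m/⋯/Y₁. -/
def curryR (q : PF) (Δ : List PF) : PF := Δ.foldr (fun Y acc => PF.rdiv acc Y) q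

/-- Curried left divisions: `curryL [X₁,…,X_n] q` is the formula X_n\\⋯\\X₁\\q. -/
def curryL (Γ : List PF) (q : PF) : PF := Γ.foldl (fun acc X => PF.ldiv X acc) q

/-- The list E = S,A₁,S,A₂,S,…,S,A_n,S. -/
def Elist (S : PF) (As : List PF) : List PF := S :: (As.map fun A => [A, S]).flatten

/-- The list B = E,(((u/F)\\u)\\S). -/
def Blist (S : PF) (As : List PF) (u : ℕ) (F : PF) : List PF :=
  Elist S As ++ [PF.ldiv (PF.ldiv (PF.rdiv (PF.var u) F) (PF.var u)) S]

/-- The list C = (S/(u/(G\\u))),E. -/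
def Clist (S : PF) (As : List PF) (u : ℕ) (G : PF) : List PF :=
  PF.rdiv S (PF.rdiv (PF.var u) (PF.ldiv G (PF.var u))) :: Elist S As

/-- The formula is(U) = (s/E, B)\\s/C (in curried notation), where S = S_{t,v,w}. -/
def isU (As : List PF) (u t v w s : ℕ) (F G : PF) : PF :=
  curryL (curryR (PF.var s) (Elist (sentinel t v w) As) ::
      Blist (sentinel t v w) As u F)
    (curryR (PF.var s) (Clist (sentinel t v w) As u G))

/-! ### Auxiliary lemmas -/

lemma curryL_intro (Γ : List PF) : ∀ (q : PF) (Pi0 : List PF),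
    PDer (Γ ++ Pi0) q → PDer Pi0 (curryL Γ q) := by
  induction Γ with
  | nil => intro q Pi0 h; simpa [curryL] using h
  | cons X Γ ih =>
    intro q Pi0 h
    have h1 : PDer (Γ ++ Pi0) (PF.ldiv X q) :=
      PDer.ldiv_right _ X q (by simpa using h)
    simpa [curryL] using ih (PF.ldiv X q) Pi0 h1

lemma curryR_intro : ∀ (Δ : List PF) (q : PF) (Pi0 : List PF),
    PDer (Pi0 ++ Δ) q → PDer Pi0 (curryR q Δ) := by
  intro Δ
  induction Δ with
  | nil => intro q Pi0 h; simpa [curryR] using h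
  | cons Y Δ ih =>
    intro q Pi0 h
    have h1 := ih q (Pi0 ++ [Y]) (by simpa using h)
    simpa [curryR] using PDer.rdiv_right Pi0 Y (curryR q Δ) h1

lemma applyR (q C : PF) {Pi0s : List (List PF)} {Δ : List PF}
    (hf : List.Forall₂ PDer Pi0s Δ) :
    ∀ Γ Θ, PDer (Γ ++ [q] ++ Θ) C →
      PDer (Γ ++ [curryR q Δ] ++ Pi0s.flatten ++ Θ) C := by
  induction hf with
  | nil => intro Γ Θ h; simpa [curryR] using h
  | @cons P Y Pi0s Δ hPY _ ih =>
    intro Γ Θ h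
    have h1 := ih Γ Θ h
    have h2 := PDer.rdiv_left P Γ (Pi0s.flatten ++ Θ) Y (curryR q Δ) C hPY
      (by simpa using h1)
    simpa [curryR] using h2

lemma der_DS {Pi0 : List PF} {F S : PF} (u : ℕ) (hF : PDer Pi0 F) :
    PDer (Pi0 ++ [PF.ldiv (PF.ldiv (PF.rdiv (PF.var u) F) (PF.var u)) S]) S := by
  have h1 : PDer (PF.rdiv (PF.var u) F :: Pi0) (PF.var u) := by
    simpa using PDer.rdiv_left Pi0 [] [] F (PF.var u) (PF.var u) hF (PDer.id _)
  have h2 : PDer Pi0 (PF.ldiv (PF.rdiv (PF.var u) F) (PF.var u)) :=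
    PDer.ldiv_right Pi0 _ _ h1
  simpa using PDer.ldiv_left Pi0 [] [] _ S S h2 (PDer.id S)

lemma der_CG {Pi0 : List PF} {G S : PF} (u : ℕ) (hG : PDer Pi0 G) :
    PDer (PF.rdiv S (PF.rdiv (PF.var u) (PF.ldiv G (PF.var u))) :: Pi0) S := by
  have h1 : PDer (Pi0 ++ [PF.ldiv G (PF.var u)]) (PF.var u) := by
    simpa using PDer.ldiv_left Pi0 [] [] G (PF.var u) (PF.var u) hG (PDer.id _)
  have h2 : PDer Pi0 (PF.rdiv (PF.var u) (PF.ldiv G (PF.var u))) :=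
    PDer.rdiv_right Pi0 _ _ h1
  simpa using PDer.rdiv_left Pi0 [] [] _ S S h2 (PDer.id S)

lemma flatten_singletons (l : List PF) : (l.map fun x => [x]).flatten = l := by
  induction l with
  | nil => rfl
  | cons x l ih => simp [ih]

lemma rot (S : PF) : ∀ (l r : List PF),
    S :: ((l.map fun B => [B, S]).flatten ++ r)
      = (l.map fun B => [S, B]).flatten ++ S :: r := by
  intro l
  induction l with
  | nil => simp
  | cons B l ih => intro r; simp [ih]

lemma rot' (S : PF) (l : List PF) :
    S :: (l.map fun B => [B, S]).flatten
      = (l.map fun B => [S, B]).flatten ++ [S] := by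
  simpa using rot S l []

lemma forall₂_singletons (l : List PF) :
    List.Forall₂ PDer (l.map fun x => [x]) l := by
  induction l with
  | nil => exact List.Forall₂.nil
  | cons x l ih => exact List.Forall₂.cons (PDer.id x) ih

lemma Elist_cons (S B : PF) (P : List PF) :
    Elist S (B :: P) = S :: B :: Elist S P := by
  simp [Elist]

lemma Elist_append (S : PF) (P Q : List PF) :
    Elist S (P ++ Q) = (P.map fun B => [S, B]).flatten ++ Elist S Q := by
  induction P with
  | nil => simp
  | cons B P ih => simp [Elist_cons, ih]

lemma Elist_eq (S : PF) (P : List PF) :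
    Elist S P = (P.map fun B => [S, B]).flatten ++ [S] := by
  have := Elist_append S P []
  simpa [Elist] using this

/-- In the is(U) construction, the sequent A_i → is(U) is derivable in L^Λ(\\,/)
for each member A_i of U. -/
theorem isU_forward
    (As : List PF) (hAs : As ≠ [])
    (u t v w s : ℕ) (hvars : ([u, t, v, w, s] : List ℕ).Nodup)
    (hfresh : ∀ A ∈ As, ∀ m ∈ ([u, t, v, w, s] : List ℕ), ¬ A.occurs m)
    (F G : PF)
    (hF : ∀ i < As.length, PDer (Elist (sentinel t v w) (As.drop i)) F)
    (hG : ∀ i < As.length, PDer (Elist (sentinel t v w) (As.take (i + 1))) G)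
    (A : PF) (hA : A ∈ As) :
    PDer [A] (isU As u t v w s F G) := by
  classical
  obtain ⟨P, Q, rfl⟩ := List.append_of_mem hA
  set S := sentinel t v w with hS
  -- the two hypotheses we need
  have hF' : PDer (Elist S (A :: Q)) F := by
    have := hF P.length (by simp)
    rwa [List.drop_left] at this
  have hG' : PDer (Elist S (P ++ [A])) G := by
    have := hG P.length (by simp)
    rwa [show P ++ A :: Q = (P ++ [A]) ++ Q by simp,
      List.take_left' (by simp)] at this
  -- abbreviations
  set DS : PF := PF.ldiv (PF.ldiv (PF.rdiv (PF.var u) F) (PF.var u)) S with hDS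
  set CG : PF := PF.rdiv S (PF.rdiv (PF.var u) (PF.ldiv G (PF.var u))) with hCG
  set gP : List PF := (P.map fun B => [S, B]).flatten with hgP
  set fQ : List PF := (Q.map fun B => [B, S]).flatten with hfQ
  -- decomposition of E
  have hE : Elist S (P ++ A :: Q) = gP ++ [S] ++ [A] ++ [S] ++ fQ := by
    rw [Elist_append]
    simp [Elist_cons, Elist, hgP, hfQ]
  -- the chunks
  have hforall : List.Forall₂ PDer
      ((gP.map fun x => [x]) ++ [Elist S (A :: Q) ++ [DS]] ++ [[A]]
        ++ [CG :: Elist S (P ++ [A])] ++ (fQ.map fun x => [x]))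
      (gP ++ [S] ++ [A] ++ [S] ++ fQ) := by
    refine List.rel_append (List.rel_append (List.rel_append (List.rel_append
      (forall₂_singletons gP) ?_) ?_) ?_) (forall₂_singletons fQ)
    · exact List.Forall₂.cons (der_DS u hF') List.Forall₂.nil
    · exact List.Forall₂.cons (PDer.id A) List.Forall₂.nil
    · exact List.Forall₂.cons (der_CG u hG') List.Forall₂.nil
  have key := applyR (PF.var s) (PF.var s) hforall [] []
    (by simpa using PDer.id (PF.var s))
  -- now reduce the goal to `key`
  apply curryL_intro
  apply curryR_intro
  rw [Blist, Clist, hE]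
  refine (show ∀ l l' : List PF, l = l' → PDer l (PF.var s) →
    PDer l' (PF.var s) from fun l l' h hd => h ▸ hd) _ _ ?_ key
  simp only [List.flatten_append, List.flatten_cons, List.flatten_nil,
    flatten_singletons]
  simp [Elist_append, Elist_cons, Elist_eq, Elist, hgP, hfQ, hDS, hCG, hS, rot, rot']
end

section
/- In the is(U) construction, let Π be a nonempty list of product-free formulas none of whose formulas has top s, t, v, or w, and suppose the sequent Π → is(U) is derivable in L^Λ(\,/). Then there exist an index j ∈ {1,…,n}, a suffix B₂ of the list B, and a prefix C₁ of the list C such that the sequent B₂, Π, C₁ → A_j is derivable in L^Λ(\,/). -/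
section Infra

lemma PF.occurs_top : ∀ A : PF, A.occurs A.top
  | PF.var n => rfl
  | PF.ldiv A B => Or.inr B.occurs_top
  | PF.rdiv B A => Or.inl B.occurs_top

lemma top_ne_of_not_occurs {A : PF} {m : ℕ} (h : ¬ A.occurs m) : A.top ≠ m :=
  fun he => h (he ▸ A.occurs_top)

lemma middle_eq {α : Type*} {X Y U V : List α} {b f : α}
    (h : X ++ [b] ++ Y = U ++ [f] ++ V) :
    (∃ γ, X = U ++ [f] ++ γ ∧ V = γ ++ [b] ++ Y) ∨
    (U = X ∧ f = b ∧ V = Y) ∨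
    (∃ δ, Y = δ ++ [f] ++ V ∧ U = X ++ [b] ++ δ) := by
  rw [List.append_assoc, List.append_assoc] at h
  rcases List.append_eq_append_iff.mp h with ⟨a, ha1, ha2⟩ | ⟨c, hc1, hc2⟩
  · cases a with
    | nil =>
      simp only [List.append_nil] at ha1
      cases ha2
      exact Or.inr (Or.inl ⟨ha1, rfl, rfl⟩)
    | cons a0 a' =>
      cases ha2
      exact Or.inr (Or.inr ⟨a', by simp, by simp [ha1]⟩)
  · cases c with
    | nil =>
      simp only [List.append_nil] at hc1
      cases hc2
      exact Or.inr (Or.inl ⟨by simpa using hc1.symm, rfl, rfl⟩)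
    | cons c0 c' =>
      cases hc2
      exact Or.inl ⟨c', by simp [hc1], by simp⟩

lemma pder_inv_ldiv' {Γ : List PF} {C : PF} (h : PDer Γ C) :
    ∀ A B, C = PF.ldiv A B → PDer (A :: Γ) B := by
  induction h with
  | id X =>
    rintro A B rfl
    have := PDer.ldiv_left [A] [] [] A B B (PDer.id A) (PDer.id B)
    simpa using this
  | ldiv_left P Γ Δ A' B' C' hP hC ihP ihC =>
    rintro A B rfl
    have h1 : PDer ((A :: Γ) ++ [B'] ++ Δ) B := by simpa using ihC A B rfl
    have := PDer.ldiv_left P (A :: Γ) Δ A' B' B hP h1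
    simpa using this
  | rdiv_left P Γ Δ A' B' C' hP hC ihP ihC =>
    rintro A B rfl
    have h1 : PDer ((A :: Γ) ++ [B'] ++ Δ) B := by simpa using ihC A B rfl
    have := PDer.rdiv_left P (A :: Γ) Δ A' B' B hP h1
    simpa using this
  | ldiv_right P A' B' h ih =>
    rintro A B heq
    injection heq with h1 h2
    subst h1; subst h2
    exact h
  | rdiv_right P A' B' h ih =>
    rintro A B heq
    exact absurd heq (by simp)

lemma pder_inv_ldiv {Γ : List PF} {A B : PF} (h : PDer Γ (PF.ldiv A B)) :
    PDer (A :: Γ) B := pder_inv_ldiv' h A B rfl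

lemma pder_inv_rdiv' {Γ : List PF} {C : PF} (h : PDer Γ C) :
    ∀ A B, C = PF.rdiv B A → PDer (Γ ++ [A]) B := by
  induction h with
  | id X =>
    rintro A B rfl
    have := PDer.rdiv_left [A] [] [] A B B (PDer.id A) (PDer.id B)
    simpa using this
  | ldiv_left P Γ Δ A' B' C' hP hC ihP ihC =>
    rintro A B rfl
    have h1 : PDer (Γ ++ [B'] ++ (Δ ++ [A])) B := by simpa using ihC A B rfl
    have := PDer.ldiv_left P Γ (Δ ++ [A]) A' B' B hP h1
    simpa using this
  | rdiv_left P Γ Δ A' B' C' hP hC ihP ihC =>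
    rintro A B rfl
    have h1 : PDer (Γ ++ [B'] ++ (Δ ++ [A])) B := by simpa using ihC A B rfl
    have := PDer.rdiv_left P Γ (Δ ++ [A]) A' B' B hP h1
    simpa using this
  | ldiv_right P A' B' h ih =>
    rintro A B heq
    exact absurd heq (by simp)
  | rdiv_right P A' B' h ih =>
    rintro A B heq
    injection heq with h1 h2
    subst h1; subst h2
    exact h

lemma pder_inv_rdiv {Γ : List PF} {A B : PF} (h : PDer Γ (PF.rdiv B A)) :
    PDer (Γ ++ [A]) B := pder_inv_rdiv' h A B rfl

/-- `Cons f ΓL ΓR x`: the "spine" formula `f`, placed between `ΓL` and `ΓR`,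
consumes all of `ΓL` and `ΓR` by nested argument segments, yielding `x`. -/
inductive Cons : PF → List PF → List PF → ℕ → Prop
  | var (x : ℕ) : Cons (PF.var x) [] [] x
  | ldiv {B : PF} {ΓL ΓR : List PF} {x : ℕ} (A : PF) (P : List PF) :
      PDer P A → Cons B ΓL ΓR x → Cons (PF.ldiv A B) (ΓL ++ P) ΓR x
  | rdiv {B : PF} {ΓL ΓR : List PF} {x : ℕ} (A : PF) (P : List PF) :
      PDer P A → Cons B ΓL ΓR x → Cons (PF.rdiv B A) ΓL (P ++ ΓR) x

lemma Cons.top_eq {f : PF} {ΓL ΓR : List PF} {x : ℕ} (h : Cons f ΓL ΓR x) :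
    f.top = x := by
  induction h with
  | var => rfl
  | ldiv A P hP hc ih => simpa [PF.top] using ih
  | rdiv A P hP hc ih => simpa [PF.top] using ih

lemma Cons.expand_right {Z : List PF} {b : PF}
    (hrepl : ∀ (X Y : List PF) (D : PF), PDer (X ++ [b] ++ Y) D → PDer (X ++ Z ++ Y) D)
    {f : PF} {ΓL ΓR : List PF} {x : ℕ} (h : Cons f ΓL ΓR x) :
    ∀ X Y, ΓR = X ++ [b] ++ Y → Cons f ΓL (X ++ Z ++ Y) x := by
  induction h with
  | var => intro X Y hXY; exact absurd hXY (by simp)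
  | ldiv A P hP hc ih =>
    intro X Y hXY
    exact Cons.ldiv A P hP (ih X Y hXY)
  | @rdiv B' ΓL' ΓR' x' A P hP hc ih =>
    intro X Y hXY
    rw [List.append_assoc] at hXY
    rcases List.append_eq_append_iff.mp hXY with ⟨a, ha1, ha2⟩ | ⟨c, hc1, hc2⟩
    · have hc' := ih a Y (by rw [ha2]; simp)
      have h2 := Cons.rdiv A P hP hc'
      have heq : P ++ (a ++ Z ++ Y) = X ++ Z ++ Y := by subst ha1; simp
      rwa [heq] at h2
    · cases c with
      | nil =>
        simp only [List.append_nil] at hc1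
        have hc' := ih [] Y (by simpa using hc2.symm)
        have h2 := Cons.rdiv A P hP hc'
        have heq : P ++ ([] ++ Z ++ Y) = X ++ Z ++ Y := by subst hc1; simp
        rwa [heq] at h2
      | cons c0 c' =>
        have hb : c0 = b := by
          have := congrArg (fun l => l.head?) hc2
          simpa using this.symm
        subst hb
        have hY : Y = c' ++ ΓR' := by
          have := congrArg List.tail hc2
          simpa using this
        have hP' : PDer (X ++ [c0] ++ c') A := by
          rw [hc1] at hP; simpa using hP
        have hPnew : PDer (X ++ Z ++ c') A := hrepl X c' A hP'
        have h2 := Cons.rdiv A (X ++ Z ++ c') hPnew hc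
        rw [hY]
        simpa [List.append_assoc] using h2

lemma Cons.expand_left {Z : List PF} {b : PF}
    (hrepl : ∀ (X Y : List PF) (D : PF), PDer (X ++ [b] ++ Y) D → PDer (X ++ Z ++ Y) D)
    {f : PF} {ΓL ΓR : List PF} {x : ℕ} (h : Cons f ΓL ΓR x) :
    ∀ X Y, ΓL = X ++ [b] ++ Y → Cons f (X ++ Z ++ Y) ΓR x := by
  induction h with
  | var => intro X Y hXY; exact absurd hXY (by simp)
  | rdiv A P hP hc ih =>
    intro X Y hXY
    exact Cons.rdiv A P hP (ih X Y hXY)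
  | @ldiv B' ΓL' ΓR' x' A P hP hc ih =>
    intro X Y hXY
    rw [List.append_assoc] at hXY
    rcases List.append_eq_append_iff.mp hXY with ⟨a, ha1, ha2⟩ | ⟨c, hc1, hc2⟩
    · -- X = ΓL' ++ a, P = a ++ ([b] ++ Y)
      have hP' : PDer (a ++ [b] ++ Y) A := by rw [ha2] at hP; simpa using hP
      have hPnew : PDer (a ++ Z ++ Y) A := hrepl a Y A hP'
      have h2 := Cons.ldiv A (a ++ Z ++ Y) hPnew hc
      have heq : ΓL' ++ (a ++ Z ++ Y) = X ++ Z ++ Y := by subst ha1; simp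
      rwa [heq] at h2
    · -- ΓL' = X ++ c, [b] ++ Y = c ++ P
      cases c with
      | nil =>
        simp only [List.append_nil] at hc1
        have hbp : P = [b] ++ Y := by simpa using hc2.symm
        have hP' : PDer ([] ++ [b] ++ Y) A := by rw [hbp] at hP; simpa using hP
        have hPnew : PDer ([] ++ Z ++ Y) A := hrepl [] Y A hP'
        have h2 := Cons.ldiv A ([] ++ Z ++ Y) hPnew hc
        have heq : ΓL' ++ ([] ++ Z ++ Y) = X ++ Z ++ Y := by subst hc1; simp
        rwa [heq] at h2
      | cons c0 c' =>
        have hb : c0 = b := by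
          have := congrArg (fun l => l.head?) hc2
          simpa using this.symm
        subst hb
        have hY : Y = c' ++ P := by
          have := congrArg List.tail hc2
          simpa using this
        have hc' := ih X c' (by rw [hc1]; simp)
        have h2 := Cons.ldiv A P hP hc'
        rw [hY]
        simpa [List.append_assoc] using h2

end Infra

theorem pder_spine' {Γ : List PF} {C : PF} (h : PDer Γ C) :
    ∀ x, C = PF.var x → ∃ ΓL f ΓR, Γ = ΓL ++ [f] ++ ΓR ∧ Cons f ΓL ΓR x := by
  induction h with
  | id A =>
    rintro x rfl
    exact ⟨[], PF.var x, [], by simp, Cons.var x⟩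
  | ldiv_left P G D A B C0 hP hC ihP ihC =>
    rintro x rfl
    obtain ⟨U, f, V, heq, hcons⟩ := ihC x rfl
    rcases middle_eq heq with ⟨γ, hG, hV⟩ | ⟨hU, hf, hV⟩ | ⟨δ, hD, hU⟩
    · refine ⟨U, f, γ ++ (P ++ [PF.ldiv A B]) ++ D, by rw [hG]; simp, ?_⟩
      refine Cons.expand_right (Z := P ++ [PF.ldiv A B]) ?_ hcons γ D hV
      intro X Y D' hd
      have := PDer.ldiv_left P X Y A B D' hP hd
      simpa [List.append_assoc] using this
    · subst hf
      refine ⟨G ++ P, PF.ldiv A f, D, by simp, ?_⟩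
      refine Cons.ldiv A P hP ?_
      rw [← hU, ← hV]
      exact hcons
    · refine ⟨G ++ (P ++ [PF.ldiv A B]) ++ δ, f, V, by rw [hD]; simp, ?_⟩
      refine Cons.expand_left (Z := P ++ [PF.ldiv A B]) ?_ hcons G δ hU
      intro X Y D' hd
      have := PDer.ldiv_left P X Y A B D' hP hd
      simpa [List.append_assoc] using this
  | rdiv_left P G D A B C0 hP hC ihP ihC =>
    rintro x rfl
    obtain ⟨U, f, V, heq, hcons⟩ := ihC x rfl
    rcases middle_eq heq with ⟨γ, hG, hV⟩ | ⟨hU, hf, hV⟩ | ⟨δ, hD, hU⟩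
    · refine ⟨U, f, γ ++ ([PF.rdiv B A] ++ P) ++ D, by rw [hG]; simp, ?_⟩
      refine Cons.expand_right (Z := [PF.rdiv B A] ++ P) ?_ hcons γ D hV
      intro X Y D' hd
      have := PDer.rdiv_left P X Y A B D' hP hd
      simpa [List.append_assoc] using this
    · subst hf
      refine ⟨G, PF.rdiv f A, P ++ D, by simp, ?_⟩
      refine Cons.rdiv A P hP ?_
      rw [← hU, ← hV]
      exact hcons
    · refine ⟨G ++ ([PF.rdiv B A] ++ P) ++ δ, f, V, by rw [hD]; simp, ?_⟩
      refine Cons.expand_left (Z := [PF.rdiv B A] ++ P) ?_ hcons G δ hU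
      intro X Y D' hd
      have := PDer.rdiv_left P X Y A B D' hP hd
      simpa [List.append_assoc] using this
  | ldiv_right P A B h ih => rintro x hx; exact absurd hx (by simp)
  | rdiv_right P A B h ih => rintro x hx; exact absurd hx (by simp)

theorem pder_spine {Γ : List PF} {x : ℕ} (h : PDer Γ (PF.var x)) :
    ∃ ΓL f ΓR, Γ = ΓL ++ [f] ++ ΓR ∧ Cons f ΓL ΓR x :=
  pder_spine' h x rfl

lemma top_presence {Γ : List PF} {x : ℕ} (h : PDer Γ (PF.var x)) :
    ∃ f ∈ Γ, f.top = x := by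
  obtain ⟨U, f, V, heq, hcons⟩ := pder_spine h
  exact ⟨f, by rw [heq]; simp, hcons.top_eq⟩

lemma no_top {Γ : List PF} {x : ℕ} (hall : ∀ f ∈ Γ, f.top ≠ x)
    (h : PDer Γ (PF.var x)) : False := by
  obtain ⟨f, hf, hft⟩ := top_presence h
  exact hall f hf hft

lemma split_two {α : Type*} {P₁ P₂ Q : List α} {a₁ a₂ : α}
    (h : P₁ ++ P₂ = Q ++ [a₁] ++ [a₂]) (hne : P₂ ≠ []) :
    (P₁ = Q ++ [a₁] ∧ P₂ = [a₂]) ∨ (∃ R, Q = P₁ ++ R ∧ P₂ = R ++ [a₁] ++ [a₂]) := by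
  rw [List.append_assoc] at h
  rcases List.append_eq_append_iff.mp h with ⟨a, h1, h2⟩ | ⟨c, h1, h2⟩
  · -- Q = P₁ ++ a, P₂ = a ++ ([a₁] ++ [a₂])
    exact Or.inr ⟨a, h1, by simpa [List.append_assoc] using h2⟩
  · -- P₁ = Q ++ c, [a₁] ++ [a₂] = c ++ P₂
    cases c with
    | nil =>
      simp only [List.append_nil] at h1
      exact Or.inr ⟨[], by simp [h1], by simpa using h2.symm⟩
    | cons c0 c' =>
      have hc0 : c0 = a₁ := by
        have := congrArg (fun l => l.head?) h2
        simpa using this.symm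
      subst hc0
      have h2' : [a₂] = c' ++ P₂ := by
        have := congrArg List.tail h2
        simpa using this
      cases c' with
      | nil =>
        exact Or.inl ⟨by simpa using h1, by simpa using h2'.symm⟩
      | cons d0 d' =>
        exfalso
        have hnil : d' ++ P₂ = [] := by
          have := congrArg List.tail h2'
          simpa using this.symm
        exact hne (List.append_eq_nil_iff.mp hnil).2

lemma middle_eq2 {α : Type*} {Q U V : List α} {a₁ a₂ f : α}
    (h : Q ++ [a₁] ++ [a₂] = U ++ [f] ++ V) :
    (U = Q ++ [a₁] ∧ f = a₂ ∧ V = []) ∨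
    (U = Q ∧ f = a₁ ∧ V = [a₂]) ∨
    (∃ Q₁ Q₂, Q = Q₁ ++ [f] ++ Q₂ ∧ U = Q₁ ∧ V = Q₂ ++ [a₁] ++ [a₂]) := by
  have h' : (Q ++ [a₁]) ++ [a₂] ++ [] = U ++ [f] ++ V := by simpa using h
  rcases middle_eq h' with ⟨γ, h1, h2⟩ | ⟨h1, h2, h3⟩ | ⟨δ, h1, h2⟩
  · rcases middle_eq (show Q ++ [a₁] ++ [] = U ++ [f] ++ γ by simpa using h1) with
      ⟨γ₂, g1, g2⟩ | ⟨g1, g2, g3⟩ | ⟨δ₂, g1, g2⟩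
    · refine Or.inr (Or.inr ⟨U, γ₂, by simpa using g1, rfl, ?_⟩)
      rw [h2, g2]; simp
    · refine Or.inr (Or.inl ⟨g1, g2, ?_⟩)
      rw [h2, g3]; simp
    · exact absurd g1.symm (by simp)
  · exact Or.inl ⟨h1, h2, by simpa using h3⟩
  · exact absurd h1.symm (by simp)

section Sentinel

variable {t v w : ℕ}

/-- the formula v/(t\v) -/
private def vtv (t v : ℕ) : PF := PF.rdiv (PF.var v) (PF.ldiv (PF.var t) (PF.var v))
/-- the formula t\w -/
private def tw (t w : ℕ) : PF := PF.ldiv (PF.var t) (PF.var w)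

lemma sentinel_eq : sentinel t v w = PF.rdiv (PF.rdiv (PF.var w) (tw t w)) (vtv t v) := rfl

lemma sentinel_top : (sentinel t v w).top = w := rfl

lemma vtv_top : (vtv t v).top = v := rfl

lemma tw_top : (tw t w).top = w := rfl

lemma cons_ldiv_inv {A B : PF} {ΓL ΓR : List PF} {x : ℕ}
    (h : Cons (PF.ldiv A B) ΓL ΓR x) :
    ∃ ΓL' P, ΓL = ΓL' ++ P ∧ PDer P A ∧ Cons B ΓL' ΓR x := by
  cases h with
  | ldiv A P hP hc => exact ⟨_, _, rfl, hP, hc⟩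

lemma cons_rdiv_inv {A B : PF} {ΓL ΓR : List PF} {x : ℕ}
    (h : Cons (PF.rdiv B A) ΓL ΓR x) :
    ∃ P ΓR', ΓR = P ++ ΓR' ∧ PDer P A ∧ Cons B ΓL ΓR' x := by
  cases h with
  | rdiv A P hP hc => exact ⟨_, _, rfl, hP, hc⟩

lemma cons_sentinel_inv {ΓL ΓR : List PF} {x : ℕ}
    (h : Cons (sentinel t v w) ΓL ΓR x) :
    ΓL = [] ∧ ∃ P₁ P₂, ΓR = P₁ ++ P₂ ∧ PDer P₁ (vtv t v) ∧ PDer P₂ (tw t w) := by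
  rw [sentinel_eq] at h
  cases h with
  | rdiv A P hP hc =>
    cases hc with
    | rdiv A₂ P₂ hP₂ hc₂ =>
      cases hc₂
      exact ⟨rfl, P, P₂, by simp, hP, hP₂⟩

lemma cons_tw_inv {ΓL ΓR : List PF} {x : ℕ}
    (h : Cons (tw t w) ΓL ΓR x) : PDer ΓL (PF.var t) ∧ ΓR = [] := by
  cases h with
  | ldiv A P hP hc =>
    cases hc
    exact ⟨by simpa using hP, rfl⟩

lemma cons_vtv_inv {ΓL ΓR : List PF} {x : ℕ}
    (h : Cons (vtv t v) ΓL ΓR x) :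
    ΓL = [] ∧ ∃ P ΓR', ΓR = P ++ ΓR' ∧ PDer P (PF.ldiv (PF.var t) (PF.var v)) := by
  cases h with
  | rdiv A P hP hc =>
    cases hc
    exact ⟨rfl, P, [], by simp, hP⟩

/-- a list whose members' tops avoid t and v cannot derive v/(t\v) -/
lemma no_left_vtv (htv : t ≠ v) {P₁ : List PF}
    (htops : ∀ f ∈ P₁, f.top ≠ t ∧ f.top ≠ v)
    (h : PDer P₁ (vtv t v)) : False := by
  have h2 : PDer (P₁ ++ [PF.ldiv (PF.var t) (PF.var v)]) (PF.var v) := pder_inv_rdiv h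
  obtain ⟨U, f, V, heq, hcons⟩ := pder_spine h2
  have htopf := hcons.top_eq
  have heq' : P₁ ++ [PF.ldiv (PF.var t) (PF.var v)] ++ [] = U ++ [f] ++ V := by simpa using heq
  rcases middle_eq heq' with ⟨γ, h1, h2'⟩ | ⟨h1, h2', h3⟩ | ⟨δ, h1, h2'⟩
  · -- f ∈ P₁
    have hfmem : f ∈ P₁ := by rw [h1]; simp
    exact (htops f hfmem).2 htopf
  · -- f = t\v, U = P₁, V = []
    subst h2'
    have := cons_tw_inv (t := t) (w := v) hcons
    subst h1
    exact no_top (fun g hg => (htops g hg).1) this.1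
  · exact absurd h1.symm (by simp)

/-- if Q₂ ++ [v/(t\v)] derives v/(t\v) and Q₂'s tops avoid t,v then Q₂ = [] -/
lemma vtv_self (htv : t ≠ v) {Q₂ : List PF}
    (htops : ∀ f ∈ Q₂, f.top ≠ t ∧ f.top ≠ v)
    (h : PDer (Q₂ ++ [vtv t v]) (vtv t v)) : Q₂ = [] := by
  have h2 : PDer (Q₂ ++ [vtv t v] ++ [PF.ldiv (PF.var t) (PF.var v)]) (PF.var v) := by
    have := pder_inv_rdiv h
    simpa using this
  obtain ⟨U, f, V, heq, hcons⟩ := pder_spine h2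
  have htopf := hcons.top_eq
  rcases middle_eq2 heq with ⟨h1, h2', h3⟩ | ⟨h1, h2', h3⟩ | ⟨Q₁, Q₂', h1, h2', h3⟩
  · -- f = t\v : last
    subst h2'
    have hin := cons_tw_inv (t := t) (w := v) hcons
    subst h1
    refine absurd hin.1 ?_
    intro hder
    refine no_top ?_ hder
    intro g hg
    rcases List.mem_append.mp hg with hg1 | hg2
    · exact (htops g hg1).1
    · have : g = vtv t v := by simpa using hg2
      subst this
      rw [vtv_top]
      exact fun hh => htv hh.symm
  · -- f = vtv, U = Q₂
    subst h2'
    have hin := cons_vtv_inv hcons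
    rw [h1] at hin
    exact hin.1
  · -- f ∈ Q₂
    have hfmem : f ∈ Q₂ := by rw [h1]; simp
    exact absurd htopf (htops f hfmem).2

lemma pder_nil_tw (htw : t ≠ w) (h : PDer [] (tw t w)) : False := by
  have := pder_inv_ldiv h
  refine no_top ?_ this
  intro g hg
  have : g = PF.var t := by simpa using hg
  subst this
  simpa [PF.top] using fun hh => htw hh

/-- The key S-slot lemma. -/
lemma sslot (htv : t ≠ v) (htw : t ≠ w) (hvw : v ≠ w)
    {K L : PF} (hK : ∃ A', K = PF.ldiv A' (sentinel t v w))
    (hL : ∃ A', L = PF.rdiv (sentinel t v w) A')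
    {Q : List PF}
    (hQ : ∀ f ∈ Q, f = sentinel t v w ∨ f = K ∨ f = L ∨
        (f.top ≠ t ∧ f.top ≠ v ∧ f.top ≠ w))
    (h : PDer Q (sentinel t v w)) :
    Q = [sentinel t v w] ∨ (∃ Q', Q = Q' ++ [K]) ∨ (∃ Q', Q = L :: Q') := by
  have htopsQ : ∀ f ∈ Q, f.top ≠ t ∧ f.top ≠ v := by
    intro f hf
    rcases hQ f hf with rfl | rfl | rfl | hf4
    · rw [sentinel_top]; exact ⟨fun hh => htw hh.symm, fun hh => hvw hh.symm⟩
    · obtain ⟨A', rfl⟩ := hK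
      have : (PF.ldiv A' (sentinel t v w)).top = w := by simp [PF.top, sentinel_top]
      rw [this]; exact ⟨fun hh => htw hh.symm, fun hh => hvw hh.symm⟩
    · obtain ⟨A', rfl⟩ := hL
      have : (PF.rdiv (sentinel t v w) A').top = w := by simp [PF.top, sentinel_top]
      rw [this]; exact ⟨fun hh => htw hh.symm, fun hh => hvw hh.symm⟩
    · exact ⟨hf4.1, hf4.2.1⟩
  have h1 : PDer (Q ++ [vtv t v]) (PF.rdiv (PF.var w) (tw t w)) := pder_inv_rdiv h
  have h2 : PDer (Q ++ [vtv t v] ++ [tw t w]) (PF.var w) := by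
    have := pder_inv_rdiv h1
    simpa using this
  obtain ⟨U, f, V, heq, hcons⟩ := pder_spine h2
  have htopf := hcons.top_eq
  rcases middle_eq2 heq with ⟨h1', h2', h3'⟩ | ⟨h1', h2', h3'⟩ | ⟨Q₁, Q₂, h1', h2', h3'⟩
  · -- f = tw : impossible
    subst h2'
    have hin := cons_tw_inv hcons
    subst h1'
    exfalso
    refine no_top ?_ hin.1
    intro g hg
    rcases List.mem_append.mp hg with hg1 | hg2
    · exact (htopsQ g hg1).1
    · have : g = vtv t v := by simpa using hg2
      subst this
      rw [vtv_top]; exact fun hh => htv hh.symm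
  · -- f = vtv : top v = w impossible
    subst h2'
    rw [vtv_top] at htopf
    exact absurd htopf hvw
  · -- f ∈ Q
    have hfmem : f ∈ Q := by rw [h1']; simp
    subst h2'
    -- common sub-analysis: given ΓL'' = [] and V = P₁ ++ P₂ : get Q₂ = [] or False
    have key : ∀ P₁ P₂ : List PF, P₁ ++ P₂ = Q₂ ++ [vtv t v] ++ [tw t w] →
        PDer P₁ (vtv t v) → PDer P₂ (tw t w) → Q₂ = [] := by
      intro P₁ P₂ hsplit hP₁ hP₂
      have htopsQ₂ : ∀ g ∈ Q₂, g.top ≠ t ∧ g.top ≠ v := by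
        intro g hg
        refine htopsQ g ?_
        rw [h1']; simp [hg]
      have hP₂ne : P₂ ≠ [] := by
        rintro rfl
        exact pder_nil_tw htw hP₂
      rcases split_two hsplit hP₂ne with ⟨hp1, hp2⟩ | ⟨R, hr1, hr2⟩
      · subst hp1
        exact vtv_self htv htopsQ₂ hP₁
      · exfalso
        refine no_left_vtv htv ?_ hP₁
        intro g hg
        refine htopsQ₂ g ?_
        rw [hr1]; simp [hg]
    rcases hQ f hfmem with rfl | rfl | rfl | hf4
    · -- f = S
      obtain ⟨hQ₁, P₁, P₂, hV, hP₁, hP₂⟩ := cons_sentinel_inv hcons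
      have hQ₂ : Q₂ = [] := key P₁ P₂ (by rw [← hV, h3']) hP₁ hP₂
      subst hQ₂; subst hQ₁
      left
      simpa using h1'
    · -- f = K
      obtain ⟨A', rfl⟩ := hK
      obtain ⟨ΓL', P, hsplitL, hPK, hcS⟩ := cons_ldiv_inv hcons
      obtain ⟨hnil, P₁, P₂, hV, hP₁, hP₂⟩ := cons_sentinel_inv hcS
      have hQ₂ : Q₂ = [] := key P₁ P₂ (by rw [← hV, h3']) hP₁ hP₂
      subst hQ₂
      right; left
      exact ⟨U, by simpa using h1'⟩
    · -- f = L
      obtain ⟨A', rfl⟩ := hL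
      obtain ⟨P, ΓR', hsplitR, hPL, hcS⟩ := cons_rdiv_inv hcons
      obtain ⟨hQ₁, P₁, P₂, hV, hP₁, hP₂⟩ := cons_sentinel_inv hcS
      subst hQ₁
      right; right
      exact ⟨Q₂, by simpa using h1'⟩
    · -- other tops
      exact absurd htopf hf4.2.2

end Sentinel

lemma append_singleton_inj {α : Type*} {l₁ l₂ : List α} {a b : α}
    (h : l₁ ++ [a] = l₂ ++ [b]) : l₁ = l₂ ∧ a = b := by
  have h1 := congrArg List.reverse h
  simp only [List.reverse_append, List.reverse_singleton, List.singleton_append] at h1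
  injection h1 with h2 h3
  exact ⟨List.reverse_injective h3, h2⟩

lemma curryL_concat (l : List PF) (X q : PF) :
    curryL (l ++ [X]) q = PF.ldiv X (curryL l q) := by
  simp [curryL]

lemma curryL_inv {q : PF} : ∀ (Γl Pp : List PF), PDer Pp (curryL Γl q) →
    PDer (Γl ++ Pp) q := by
  intro Γl
  induction Γl using List.reverseRecOn with
  | nil => intro Pp h; simpa [curryL] using h
  | append_singleton l X ih =>
    intro Pp h
    rw [curryL_concat] at h
    have h2 := pder_inv_ldiv h
    have h3 := ih (X :: Pp) h2
    simpa [List.append_assoc] using h3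

lemma curryR_cons (Y : PF) (Ys : List PF) (q : PF) :
    curryR q (Y :: Ys) = PF.rdiv (curryR q Ys) Y := by
  simp [curryR]

lemma curryR_inv {q : PF} : ∀ (Δ Sg : List PF), PDer Sg (curryR q Δ) →
    PDer (Sg ++ Δ) q := by
  intro Δ
  induction Δ with
  | nil => intro Sg h; simpa [curryR] using h
  | cons Y Ys ih =>
    intro Sg h
    rw [curryR_cons] at h
    have h2 := pder_inv_rdiv h
    have h3 := ih (Sg ++ [Y]) h2
    simpa [List.append_assoc] using h3

lemma curryR_top (x : ℕ) : ∀ (Δ : List PF), (curryR (PF.var x) Δ).top = x := by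
  intro Δ
  induction Δ with
  | nil => rfl
  | cons Y Ys ih => rw [curryR_cons]; simpa [PF.top] using ih

lemma cons_curryR_inv {x : ℕ} : ∀ (Ys Δ : List PF),
    Cons (curryR (PF.var x) Ys) [] Δ x →
    ∃ Ps : List (List PF), List.Forall₂ PDer Ps Ys ∧ Δ = Ps.flatten := by
  intro Ys
  induction Ys with
  | nil =>
    intro Δ h
    cases h
    exact ⟨[], List.Forall₂.nil, rfl⟩
  | cons Y Ys ih =>
    intro Δ h
    rw [curryR_cons] at h
    obtain ⟨P, ΓR', hΔ, hP, hc⟩ := cons_rdiv_inv h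
    obtain ⟨Ps, hF, rfl⟩ := ih ΓR' hc
    exact ⟨P :: Ps, List.Forall₂.cons hP hF, by simpa using hΔ⟩

lemma elist_nil (S : PF) : Elist S [] = [S] := by simp [Elist]

lemma elist_cons (S A : PF) (As : List PF) :
    Elist S (A :: As) = S :: A :: Elist S As := by simp [Elist]

lemma elist_head (S : PF) (As : List PF) : ∃ rest, Elist S As = S :: rest := by
  cases As with
  | nil => exact ⟨[], elist_nil S⟩
  | cons A As => exact ⟨A :: Elist S As, elist_cons S A As⟩

lemma elist_ends (S : PF) : ∀ As : List PF, ∃ E₀, Elist S As = E₀ ++ [S] := by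
  intro As
  induction As with
  | nil => exact ⟨[], by simp [elist_nil]⟩
  | cons A As ih =>
    obtain ⟨E₀, hE₀⟩ := ih
    exact ⟨S :: A :: E₀, by rw [elist_cons, hE₀]; simp⟩

lemma elist_mem {S f : PF} : ∀ {As : List PF}, f ∈ Elist S As → f = S ∨ f ∈ As := by
  intro As
  induction As with
  | nil => rw [elist_nil]; intro h; exact Or.inl (by simpa using h)
  | cons A As ih =>
    rw [elist_cons]
    intro h
    rcases List.mem_cons.mp h with h1 | h2
    · exact Or.inl h1
    · rcases List.mem_cons.mp h2 with h3 | h4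
      · exact Or.inr (by simp [h3])
      · rcases ih h4 with h5 | h6
        · exact Or.inl h5
        · exact Or.inr (by simp [h6])

lemma walk {t v w : ℕ} (htv : t ≠ v) (htw : t ≠ w) (hvw : v ≠ w)
    {K L : PF}
    (hK : ∃ A', K = PF.ldiv A' (sentinel t v w))
    (hL : ∃ A', L = PF.rdiv (sentinel t v w) A')
    {Bf Cf Pi : List PF}
    (hPine : Pi ≠ [])
    (hPitop : ∀ f ∈ Pi, f.top ≠ t ∧ f.top ≠ v ∧ f.top ≠ w)
    (hBel : ∀ f ∈ Bf, f = sentinel t v w ∨ f = K ∨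
        (f.top ≠ t ∧ f.top ≠ v ∧ f.top ≠ w))
    (hCel : ∀ f ∈ Cf, f = sentinel t v w ∨ f = L ∨
        (f.top ≠ t ∧ f.top ≠ v ∧ f.top ≠ w))
    (hBstruct : ∃ B₀, Bf = B₀ ++ [K] ∧ K ∉ B₀)
    (hKC : K ∉ Cf) (hLB : L ∉ Bf)
    (hSK : sentinel t v w ≠ K) (hSL : sentinel t v w ≠ L)
    (hCend : ∃ C₀, Cf = C₀ ++ [sentinel t v w])
    (hKtop : K.top = w) (hLtop : L.top = w) :
    ∀ (As' X : List PF) (Ps : List (List PF)),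
      X <:+ Bf → List.Forall₂ PDer Ps (Elist (sentinel t v w) As') →
      Ps.flatten = X ++ Pi ++ Cf →
      ∃ Aj ∈ As', ∃ B₂ C₁ : List PF,
        B₂ <:+ Bf ∧ C₁ <+: Cf ∧ PDer (B₂ ++ Pi ++ C₁) Aj := by
  -- Pi contains none of the three special formulas
  have hPiS : ∀ f ∈ Pi, f ≠ sentinel t v w ∧ f ≠ K ∧ f ≠ L := by
    intro f hf
    have h4 := hPitop f hf
    refine ⟨?_, ?_, ?_⟩
    · rintro rfl; exact h4.2.2 sentinel_top
    · rintro rfl; exact h4.2.2 hKtop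
    · rintro rfl; exact h4.2.2 hLtop
  -- the element condition needed by sslot, for any sublist of X ++ Pi ++ Cf
  have hcond : ∀ (X : List PF), X <:+ Bf → ∀ f ∈ X ++ Pi ++ Cf,
      f = sentinel t v w ∨ f = K ∨ f = L ∨
        (f.top ≠ t ∧ f.top ≠ v ∧ f.top ≠ w) := by
    intro X hX f hf
    rcases List.mem_append.mp hf with hf1 | hfC
    · rcases List.mem_append.mp hf1 with hfB | hfP
      · rcases hBel f (hX.subset hfB) with h1 | h1 | h1
        · exact Or.inl h1
        · exact Or.inr (Or.inl h1)
        · exact Or.inr (Or.inr (Or.inr h1))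
      · exact Or.inr (Or.inr (Or.inr (hPitop f hfP)))
    · rcases hCel f hfC with h1 | h1 | h1
      · exact Or.inl h1
      · exact Or.inr (Or.inr (Or.inl h1))
      · exact Or.inr (Or.inr (Or.inr h1))
  -- the contradiction: a nonempty remnant of Pi followed by Cf cannot start
  -- with further slots
  have contra : ∀ (P2 : List PF) (Ps₀ : List (List PF)) (As₀ : List PF),
      P2 ≠ [] → (∀ f ∈ P2, f ∈ Pi) →
      List.Forall₂ PDer Ps₀ (Elist (sentinel t v w) As₀) →
      Ps₀.flatten = P2 ++ Cf → False := by
    intro P2 Ps₀ As₀ hne hsub hF hfl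
    obtain ⟨rest, hrest⟩ := elist_head (sentinel t v w) As₀
    rw [hrest] at hF
    obtain ⟨Q_S, Ps₁, hQS, hF₁, rfl⟩ :
        ∃ Q_S Ps₁, PDer Q_S (sentinel t v w) ∧
          List.Forall₂ PDer Ps₁ rest ∧ Ps₀ = Q_S :: Ps₁ := by
      cases hF with
      | cons h1 h2 => exact ⟨_, _, h1, h2, rfl⟩
    rw [List.flatten_cons] at hfl
    have hQcond : ∀ f ∈ Q_S, f = sentinel t v w ∨ f = K ∨ f = L ∨
        (f.top ≠ t ∧ f.top ≠ v ∧ f.top ≠ w) := by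
      intro f hf
      have hf2 : f ∈ P2 ++ Cf := by
        rw [← hfl]; exact List.mem_append_left _ hf
      rcases List.mem_append.mp hf2 with h1 | h1
      · exact Or.inr (Or.inr (Or.inr (hPitop f (hsub f h1))))
      · rcases hCel f h1 with h2 | h2 | h2
        · exact Or.inl h2
        · exact Or.inr (Or.inr (Or.inl h2))
        · exact Or.inr (Or.inr (Or.inr h2))
    obtain ⟨g, P2', rfl⟩ : ∃ g P2', P2 = g :: P2' := by
      cases P2 with
      | nil => exact absurd rfl hne
      | cons g P2' => exact ⟨g, P2', rfl⟩
    have hgPi : g ∈ Pi := hsub g (by simp)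
    rcases sslot htv htw hvw hK hL hQcond hQS with h1 | ⟨Q', h1⟩ | ⟨Q', h1⟩
    · -- Q_S = [S] : head mismatch
      rw [h1] at hfl
      have : sentinel t v w = g := by
        have := congrArg (fun l => l.head?) hfl
        simpa using this
      exact (hPiS g hgPi).1 this.symm
    · -- Q_S ends with K : K must be in P2 or Cf
      have hKmem : K ∈ g :: (P2' ++ Cf) := by
        have h3 : K ∈ Q_S ++ Ps₁.flatten :=
          List.mem_append_left _ (by rw [h1]; simp)
        rw [hfl] at h3
        simpa using h3
      rcases List.mem_cons.mp hKmem with h2 | h2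
      · exact (hPiS K (hsub K (by simp [h2]))).2.1 rfl
      · rcases List.mem_append.mp h2 with h3 | h3
        · exact (hPiS K (hsub K (by simp [h3]))).2.1 rfl
        · exact hKC h3
    · -- Q_S starts with L : head mismatch
      rw [h1] at hfl
      have : L = g := by
        have := congrArg (fun l => l.head?) hfl
        simpa using this
      exact (hPiS g hgPi).2.2 this.symm
  intro As'
  induction As' with
  | nil =>
    intro X Ps hX hF hflat
    exfalso
    rw [elist_nil] at hF
    obtain ⟨Q, hQder, rfl⟩ : ∃ Q, PDer Q (sentinel t v w) ∧ Ps = [Q] := by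
      cases hF with
      | cons h1 h2 => cases h2; exact ⟨_, h1, rfl⟩
    rw [show List.flatten [Q] = Q from by simp] at hflat
    rcases sslot htv htw hvw hK hL (by rw [hflat]; exact hcond X hX) hQder with
        h1 | ⟨Q', h1⟩ | ⟨Q', h1⟩
    · -- Q = [S] : too short
      rw [h1] at hflat
      have hlen := congrArg List.length hflat
      obtain ⟨C₀, rfl⟩ := hCend
      simp [List.length_append] at hlen
      cases Pi with
      | nil => exact hPine rfl
      | cons p Pi' => simp at hlen; omega
    · -- Q ends with K, but X ++ Pi ++ Cf ends with S
      obtain ⟨C₀, rfl⟩ := hCend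
      rw [h1] at hflat
      have heq2 : Q' ++ [K] = (X ++ Pi ++ C₀) ++ [sentinel t v w] := by
        rw [hflat]; simp [List.append_assoc]
      exact hSK (append_singleton_inj heq2).2.symm
    · -- Q starts with L
      rw [h1] at hflat
      cases X with
      | nil =>
        cases Pi with
        | nil => exact hPine rfl
        | cons p Pi' =>
          have : L = p := by
            have := congrArg (fun l => l.head?) hflat
            simpa using this
          exact (hPiS p (by simp)).2.2 this.symm
      | cons x₀ X' =>
        have : L = x₀ := by
          have := congrArg (fun l => l.head?) hflat
          simpa using this
        exact hLB (this ▸ hX.subset (by simp))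
  | cons A As'' ih =>
    intro X Ps hX hF hflat
    rw [elist_cons] at hF
    obtain ⟨Q, Q_A, Ps'', hQder, hAder, hF'', rfl⟩ :
        ∃ Q Q_A Ps'', PDer Q (sentinel t v w) ∧ PDer Q_A A ∧
          List.Forall₂ PDer Ps'' (Elist (sentinel t v w) As'') ∧
          Ps = Q :: Q_A :: Ps'' := by
      cases hF with
      | cons h1 h2 =>
        cases h2 with
        | cons h3 h4 => exact ⟨_, _, _, h1, h3, h4, rfl⟩
    rw [List.flatten_cons, List.flatten_cons] at hflat
    -- the core trichotomy once the S-slot has consumed exactly the B-part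
    have core : ∀ (X' : List PF), X' <:+ Bf →
        Q_A ++ Ps''.flatten = X' ++ Pi ++ Cf →
        ∃ Aj ∈ A :: As'', ∃ B₂ C₁ : List PF,
          B₂ <:+ Bf ∧ C₁ <+: Cf ∧ PDer (B₂ ++ Pi ++ C₁) Aj := by
      intro X' hX' heq
      rw [List.append_assoc] at heq
      rcases List.append_eq_append_iff.mp heq with ⟨a, ha1, ha2⟩ | ⟨m, hm1, hm2⟩
      · -- X' = Q_A ++ a : recurse
        have haBf : a <:+ Bf := by
          obtain ⟨p, hp⟩ := hX'
          exact ⟨p ++ Q_A, by rw [← hp, ha1]; simp⟩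
        obtain ⟨Aj, hAj, B₂, C₁, hB₂, hC₁, hder⟩ :=
          ih a Ps'' haBf hF'' (by rw [ha2]; simp [List.append_assoc])
        exact ⟨Aj, List.mem_cons_of_mem _ hAj, B₂, C₁, hB₂, hC₁, hder⟩
      · -- Q_A = X' ++ m, Pi ++ Cf = m ++ flatten
        rcases List.append_eq_append_iff.mp hm2.symm with ⟨a', ha1', ha2'⟩ | ⟨c', hc1', hc2'⟩
        · -- Pi = m ++ a'
          cases a' with
          | nil =>
            -- m = Pi : win with C₁ = []
            simp only [List.append_nil] at ha1'
            refine ⟨A, by simp, X', [], hX', ⟨Cf, by simp⟩, ?_⟩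
            have : Q_A = X' ++ Pi := by rw [hm1, ha1']
            rw [← this] at *
            simpa using hAder
          | cons g a'' =>
            -- nonempty remnant : contradiction
            exfalso
            refine contra (g :: a'') Ps'' As'' (by simp) ?_ hF'' (by rw [ha2'])
            intro f hf
            rw [ha1']
            exact List.mem_append_right _ hf
        · -- m = Pi ++ c' : win with C₁ = c'
          refine ⟨A, by simp, X', c', hX', ⟨Ps''.flatten, hc2'.symm⟩, ?_⟩
          have : Q_A = X' ++ Pi ++ c' := by rw [hm1, hc1']; simp [List.append_assoc]
          rw [← this] at *
          simpa using hAder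
    -- analyse the first S-slot
    rcases sslot htv htw hvw hK hL
        (fun f hf => hcond X hX f (by rw [← hflat]; exact List.mem_append_left _ hf))
        hQder with h1 | ⟨Q', h1⟩ | ⟨Q', h1⟩
    · -- Q = [S]
      subst h1
      cases X with
      | nil =>
        exfalso
        cases Pi with
        | nil => exact hPine rfl
        | cons p Pi' =>
          have : sentinel t v w = p := by
            have := congrArg (fun l => l.head?) hflat
            simpa using this
          exact (hPiS p (by simp)).1 this.symm
      | cons x₀ X' =>
        have h2 : sentinel t v w :: (Q_A ++ Ps''.flatten) =
            x₀ :: (X' ++ (Pi ++ Cf)) := by simpa [List.append_assoc] using hflat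
        injection h2 with e1 e2
        obtain ⟨p, hp⟩ := hX
        exact core X' ⟨p ++ [x₀], by rw [← hp]; simp⟩ (by rw [e2]; simp [List.append_assoc])
    · -- Q ends with K : then Q = X
      obtain ⟨B₀, hB₀, hKB₀⟩ := hBstruct
      have hQX : Q = X ∧ Q_A ++ Ps''.flatten = Pi ++ Cf := by
        have hflat' : Q ++ (Q_A ++ Ps''.flatten) = X ++ (Pi ++ Cf) := by
          simpa [List.append_assoc] using hflat
        rcases List.append_eq_append_iff.mp hflat' with ⟨a, ha1, ha2⟩ | ⟨c, hc1, hc2⟩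
        · -- X = Q ++ a
          cases a with
          | nil =>
            refine ⟨by simp [ha1], by simpa using ha2⟩
          | cons a₀ a' =>
            exfalso
            rcases List.eq_nil_or_concat (a₀ :: a') with h2 | ⟨a₁, alast, h2⟩
            · simp at h2
            · obtain ⟨p, hp⟩ := hX
              rw [ha1, h1, h2] at hp
              rw [hB₀] at hp
              have hp2 : (p ++ (Q' ++ [K] ++ a₁)) ++ [alast] = B₀ ++ [K] := by
                rw [← hp]; simp [List.concat_eq_append, List.append_assoc]
              obtain ⟨hp3, rfl⟩ := append_singleton_inj hp2
              exact hKB₀ (by rw [← hp3]; simp)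
        · -- Q = X ++ c
          cases c with
          | nil =>
            refine ⟨by simpa using hc1, by simpa using hc2.symm⟩
          | cons c₀ c' =>
            exfalso
            rcases List.eq_nil_or_concat (c₀ :: c') with h2 | ⟨c₁, clast, h2⟩
            · simp at h2
            · have hc3 : Q' ++ [K] = (X ++ c₁) ++ [clast] := by
                rw [← h1, hc1, h2]; simp [List.concat_eq_append, List.append_assoc]
              obtain ⟨hc4, rfl⟩ := append_singleton_inj hc3
              have hKmem : K ∈ Pi ++ Cf := by
                rw [hc2]
                exact List.mem_append_left _ (by rw [h2]; simp [List.concat_eq_append])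
              rcases List.mem_append.mp hKmem with h3 | h3
              · exact (hPiS K h3).2.1 rfl
              · exact hKC h3
      exact core [] List.nil_suffix (by rw [hQX.2]; simp)
    · -- Q starts with L : impossible
      exfalso
      subst h1
      cases X with
      | nil =>
        cases Pi with
        | nil => exact hPine rfl
        | cons p Pi' =>
          have : L = p := by
            have := congrArg (fun l => l.head?) hflat
            simpa using this
          exact (hPiS p (by simp)).2.2 this.symm
      | cons x₀ X' =>
        have : L = x₀ := by
          have := congrArg (fun l => l.head?) hflat
          simpa using this
        exact hLB (this ▸ hX.subset (by simp))


/-- In the is(U) construction, if Π is nonempty, none of its formulas has top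
s, t, v or w, and Π → is(U) is derivable, then B₂, Π, C₁ → A_j is derivable for
some A_j ∈ U, some suffix B₂ of B and some prefix C₁ of C. -/
theorem isU_backward
    (As : List PF) (hAs : As ≠ [])
    (u t v w s : ℕ) (hvars : ([u, t, v, w, s] : List ℕ).Nodup)
    (hfresh : ∀ A ∈ As, ∀ m ∈ ([u, t, v, w, s] : List ℕ), ¬ A.occurs m)
    (F G : PF)
    (hF : ∀ i < As.length, PDer (Elist (sentinel t v w) (As.drop i)) F)
    (hG : ∀ i < As.length, PDer (Elist (sentinel t v w) (As.take (i + 1))) G)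
    (Pi : List PF) (hPi : Pi ≠ [])
    (htop : ∀ A ∈ Pi, A.top ≠ s ∧ A.top ≠ t ∧ A.top ≠ v ∧ A.top ≠ w)
    (h : PDer Pi (isU As u t v w s F G)) :
    ∃ Aj ∈ As, ∃ B₂ C₁ : List PF,
      B₂ <:+ Blist (sentinel t v w) As u F ∧
      C₁ <+: Clist (sentinel t v w) As u G ∧
      PDer (B₂ ++ Pi ++ C₁) Aj := by
  -- distinctness of the variables
  simp only [List.nodup_cons, List.mem_cons, List.mem_singleton, not_or,
    List.not_mem_nil, not_false_iff, and_true, List.nodup_nil] at hvars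
  obtain ⟨⟨hut, huv, huw, hus⟩, ⟨htv, htw, hts⟩, ⟨hvw, hvs⟩, hws⟩ := hvars
  set S : PF := sentinel t v w with hSdef
  set K : PF := PF.ldiv (PF.ldiv (PF.rdiv (PF.var u) F) (PF.var u)) S with hKdef
  set L : PF := PF.rdiv S (PF.rdiv (PF.var u) (PF.ldiv G (PF.var u))) with hLdef
  have hBl : Blist S As u F = Elist S As ++ [K] := rfl
  have hCl : Clist S As u G = L :: Elist S As := rfl
  have hStop : S.top = w := rfl
  have hKtop : K.top = w := rfl
  have hLtop : L.top = w := rfl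
  have hSK : S ≠ K := fun hh => PF.noConfusion hh
  have hKL : K ≠ L := fun hh => PF.noConfusion hh
  have hSL : S ≠ L := by
    intro hh
    rw [hSdef, sentinel_eq] at hh
    injection hh with h1 h2
    rw [hSdef, sentinel_eq] at h1
    injection h1 with h5 h6
    exact PF.noConfusion h5
  have hKu : K.occurs u := Or.inl (Or.inr rfl)
  have hLu : L.occurs u := Or.inr (Or.inl rfl)
  have hAprop : ∀ A ∈ As, A.top ≠ t ∧ A.top ≠ v ∧ A.top ≠ w := by
    intro A hA
    exact ⟨top_ne_of_not_occurs (hfresh A hA t (by simp)),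
      top_ne_of_not_occurs (hfresh A hA v (by simp)),
      top_ne_of_not_occurs (hfresh A hA w (by simp))⟩
  have hKnotE : K ∉ Elist S As := by
    intro hmem
    rcases elist_mem hmem with h1 | h1
    · exact hSK h1.symm
    · exact hfresh K h1 u (by simp) hKu
  have hLnotE : L ∉ Elist S As := by
    intro hmem
    rcases elist_mem hmem with h1 | h1
    · exact hSL h1.symm
    · exact hfresh L h1 u (by simp) hLu
  -- invert the curried divisions
  have h' : PDer Pi (curryL (curryR (PF.var s) (Elist S As) :: Blist S As u F)
      (curryR (PF.var s) (Clist S As u G))) := h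
  have h1 := curryL_inv _ _ h'
  have h2 := curryR_inv _ _ h1
  have h3 : PDer (curryR (PF.var s) (Elist S As) ::
      (Blist S As u F ++ Pi ++ Clist S As u G)) (PF.var s) := by
    simpa [List.append_assoc] using h2
  -- the spine must be the head formula
  obtain ⟨U, f, V, heq, hcons⟩ := pder_spine h3
  have hWtops : ∀ g ∈ Blist S As u F ++ Pi ++ Clist S As u G, g.top ≠ s := by
    intro g hg
    rcases List.mem_append.mp hg with hg1 | hgC
    · rcases List.mem_append.mp hg1 with hgB | hgP
      · rw [hBl] at hgB
        rcases List.mem_append.mp hgB with hgE | hgK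
        · rcases elist_mem hgE with h4 | h4
          · rw [h4, hStop]; exact hws
          · exact top_ne_of_not_occurs (hfresh g h4 s (by simp))
        · have : g = K := by simpa using hgK
          rw [this, hKtop]; exact hws
      · exact (htop g hgP).1
    · rw [hCl] at hgC
      rcases List.mem_cons.mp hgC with h4 | h4
      · rw [h4, hLtop]; exact hws
      · rcases elist_mem h4 with h5 | h5
        · rw [h5, hStop]; exact hws
        · exact top_ne_of_not_occurs (hfresh g h5 s (by simp))
  have hU : U = [] ∧ f = curryR (PF.var s) (Elist S As) ∧
      V = Blist S As u F ++ Pi ++ Clist S As u G := by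
    cases U with
    | nil =>
      have heq2 : curryR (PF.var s) (Elist S As) ::
          (Blist S As u F ++ Pi ++ Clist S As u G) = f :: V := by simpa using heq
      injection heq2 with e1 e2
      exact ⟨rfl, e1.symm, e2.symm⟩
    | cons g U' =>
      exfalso
      have heq2 : curryR (PF.var s) (Elist S As) ::
          (Blist S As u F ++ Pi ++ Clist S As u G) = g :: (U' ++ [f] ++ V) := by
        simpa using heq
      injection heq2 with e1 e2
      have hfmem : f ∈ Blist S As u F ++ Pi ++ Clist S As u G := by
        rw [e2]; simp
      exact hWtops f hfmem hcons.top_eq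
  obtain ⟨rfl, rfl, rfl⟩ := hU
  obtain ⟨Ps, hFa, hfl⟩ := cons_curryR_inv _ _ hcons
  -- apply the walk
  have hwalk := walk (K := K) (L := L) htv htw hvw
    (hK := ⟨PF.ldiv (PF.rdiv (PF.var u) F) (PF.var u), rfl⟩)
    (hL := ⟨PF.rdiv (PF.var u) (PF.ldiv G (PF.var u)), rfl⟩)
    (Bf := Blist S As u F) (Cf := Clist S As u G) (Pi := Pi)
    (hPine := hPi)
    (hPitop := fun g hg => ⟨(htop g hg).2.1, (htop g hg).2.2.1, (htop g hg).2.2.2⟩)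
    (hBel := by
      intro g hg
      rw [hBl] at hg
      rcases List.mem_append.mp hg with hgE | hgK
      · rcases elist_mem hgE with h4 | h4
        · exact Or.inl h4
        · exact Or.inr (Or.inr (hAprop g h4))
      · exact Or.inr (Or.inl (by simpa using hgK)))
    (hCel := by
      intro g hg
      rw [hCl] at hg
      rcases List.mem_cons.mp hg with h4 | h4
      · exact Or.inr (Or.inl h4)
      · rcases elist_mem h4 with h5 | h5
        · exact Or.inl h5
        · exact Or.inr (Or.inr (hAprop g h5)))
    (hBstruct := ⟨Elist S As, hBl, hKnotE⟩)
    (hKC := by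
      intro hmem
      rw [hCl] at hmem
      rcases List.mem_cons.mp hmem with h4 | h4
      · exact hKL h4
      · exact hKnotE h4)
    (hLB := by
      intro hmem
      rw [hBl] at hmem
      rcases List.mem_append.mp hmem with h4 | h4
      · exact hLnotE h4
      · have h5 : L = K := by simpa using h4
        exact hKL h5.symm)
    (hSK := hSK) (hSL := hSL)
    (hCend := by
      obtain ⟨E₀, hE₀⟩ := elist_ends S As
      exact ⟨L :: E₀, by rw [hCl, hE₀]; rfl⟩)
    (hKtop := hKtop) (hLtop := hLtop)
    As (Blist S As u F) Ps (List.suffix_refl _) hFa hfl.symm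
  exact hwalk
end

section
/- In the grammar construction, let Φ be a nonempty list of product-free formulas such that: no formula of Φ has top p_i, q_i, or r_i for any 0 ≤ i ≤ ν; every formula of Φ whose top is z is of the form z/Γ, that is, z/Y_m/⋯/Y₁ for some m ≥ 0 and formulas Y₁,…,Y_m; and the leftmost formula of Φ does not have top z. Then for all indices i', k ∈ {0,…,ν} and any optional indices k', ℓ' ∈ {0,…,ν}, the sequent H_{k'}^?, H_{ℓ'}^?, S_{p_{i'},q_{i'},r_{i'}}, Φ → H_k (optional formulas omitted when absent) is not derivable in L^Λ(\,/). -/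
/-- The sentinel S_{p_i,q_i,r_i} associated with the nonterminal index i. -/
def SentN {ν : ℕ} (pv qv rv : Fin (ν + 1) → ℕ) (i : Fin (ν + 1)) : PF :=
  sentinel (pv i) (qv i) (rv i)

/-- The formula H_i = (z/z)/S_{p_i,q_i,r_i}. -/
def Hformula {ν : ℕ} (z : ℕ) (pv qv rv : Fin (ν + 1) → ℕ) (i : Fin (ν + 1)) : PF :=
  PF.rdiv (PF.rdiv (PF.var z) (PF.var z)) (SentN pv qv rv i)

namespace NoHAux

open PF

/-- L1: top lemma -/
lemma top_mem {Γ : List PF} {C : PF} (h : PDer Γ C) :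
    ∀ v, C = PF.var v → ∃ A ∈ Γ, A.top = v := by
  induction h with
  | id A => intro v hv; exact ⟨A, by simp, by simp [hv, PF.top]⟩
  | ldiv_left P Γ Δ A B C h1 h2 ih1 ih2 =>
      intro v hv
      obtain ⟨A', hA', ht⟩ := ih2 v hv
      rcases (by simpa using hA' : A' ∈ Γ ∨ A' = B ∨ A' ∈ Δ) with h|h|h
      · exact ⟨A', by simp [h], ht⟩
      · exact ⟨PF.ldiv A B, by simp, by simpa [PF.top, ← h]⟩
      · exact ⟨A', by simp [h], ht⟩
  | rdiv_left P Γ Δ A B C h1 h2 ih1 ih2 =>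
      intro v hv
      obtain ⟨A', hA', ht⟩ := ih2 v hv
      rcases (by simpa using hA' : A' ∈ Γ ∨ A' = B ∨ A' ∈ Δ) with h|h|h
      · exact ⟨A', by simp [h], ht⟩
      · exact ⟨PF.rdiv B A, by simp, by simpa [PF.top, ← h]⟩
      · exact ⟨A', by simp [h], ht⟩
  | ldiv_right P A B h ih => intro v hv; simp at hv
  | rdiv_right P A B h ih => intro v hv; simp at hv

lemma not_pder_nil_var {v : ℕ} (h : PDer [] (PF.var v)) : False := by
  obtain ⟨A, hA, -⟩ := top_mem h v rfl; simp at hA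

/-- inversion of →/ -/
lemma inv_rdiv {Γ : List PF} {C : PF} (h : PDer Γ C) :
    ∀ B A, C = PF.rdiv B A → PDer (Γ ++ [A]) B := by
  induction h with
  | id X =>
      intro B A hC; subst hC
      have h2 : PDer ([] ++ [B] ++ []) B := by simpa using PDer.id B
      simpa using PDer.rdiv_left [A] [] [] A B B (PDer.id A) h2
  | ldiv_left P Γ Δ A' B' C h1 h2 ih1 ih2 =>
      intro B A hC
      have := PDer.ldiv_left P Γ (Δ ++ [A]) A' B' B h1 (by simpa using ih2 B A hC)
      simpa using this
  | rdiv_left P Γ Δ A' B' C h1 h2 ih1 ih2 =>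
      intro B A hC
      have := PDer.rdiv_left P Γ (Δ ++ [A]) A' B' B h1 (by simpa using ih2 B A hC)
      simpa using this
  | ldiv_right P A' B' h ih => intro B A hC; simp at hC
  | rdiv_right P A' B' h ih =>
      intro B A hC
      obtain ⟨hB, hA⟩ := by simpa [PF.rdiv.injEq] using hC
      subst hB; subst hA; exact h

/-- list segment helpers -/
lemma seg_one {x y : List PF} {b u : PF} (h : x ++ b :: y = [u]) :
    x = [] ∧ b = u ∧ y = [] := by
  cases x with
  | nil => simpa using h
  | cons a t => simp at h

lemma seg_two {x y : List PF} {b u v : PF} (h : x ++ b :: y = [u, v]) :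
    (x = [] ∧ b = u ∧ y = [v]) ∨ (x = [u] ∧ b = v ∧ y = []) := by
  cases x with
  | nil => left; simpa using h
  | cons a t =>
      right
      simp at h
      obtain ⟨ha, h⟩ := h
      obtain ⟨h1, h2, h3⟩ := seg_one h
      exact ⟨by simp [ha, h1], h2, h3⟩

lemma seg_three {x y : List PF} {b u v w : PF} (h : x ++ b :: y = [u, v, w]) :
    (x = [] ∧ b = u ∧ y = [v, w]) ∨ (x = [u] ∧ b = v ∧ y = [w]) ∨
    (x = [u, v] ∧ b = w ∧ y = []) := by
  cases x with
  | nil => left; simpa using h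
  | cons a t =>
      simp at h
      obtain ⟨ha, h⟩ := h
      rcases seg_two h with ⟨h1, h2, h3⟩ | ⟨h1, h2, h3⟩
      · exact Or.inr (Or.inl ⟨by simp [ha, h1], h2, h3⟩)
      · exact Or.inr (Or.inr ⟨by simp [ha, h1], h2, h3⟩)

lemma app_one {x : List PF} {b u : PF} (h : x ++ [b] = [u]) : x = [] ∧ b = u := by
  have := seg_one (by simpa using h)
  exact ⟨this.1, this.2.1⟩

lemma app_two {x : List PF} {b u v : PF} (h : x ++ [b] = [u, v]) : x = [u] ∧ b = v := by
  rcases seg_two (by simpa using h) with ⟨h1, h2, h3⟩ | ⟨h1, h2, h3⟩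
  · simp at h3
  · exact ⟨h1, h2⟩

lemma app_three {x : List PF} {b u v w : PF} (h : x ++ [b] = [u, v, w]) :
    x = [u, v] ∧ b = w := by
  rcases seg_three (by simpa using h) with ⟨h1, h2, h3⟩ | ⟨h1, h2, h3⟩ | ⟨h1, h2, h3⟩
  · simp at h3
  · simp at h3
  · exact ⟨h1, h2⟩

end NoHAux
namespace NoHAux

variable {ν : ℕ} (z : ℕ) (pv qv rv : Fin (ν + 1) → ℕ)

def PQf (i : Fin (ν + 1)) : PF := PF.ldiv (PF.var (pv i)) (PF.var (qv i))
def Qf (i : Fin (ν + 1)) : PF := PF.rdiv (PF.var (qv i)) (PQf pv qv i)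
def PRf (i : Fin (ν + 1)) : PF := PF.ldiv (PF.var (pv i)) (PF.var (rv i))
def Spf (i : Fin (ν + 1)) : PF := PF.rdiv (PF.var (rv i)) (PRf pv rv i)

lemma SentN_eq (i : Fin (ν + 1)) :
    SentN pv qv rv i = PF.rdiv (Spf pv rv i) (Qf pv qv i) := rfl

def Spine : PF → Prop
  | .var n => n = z
  | .ldiv _ _ => False
  | .rdiv B _ => Spine B

def OkZ (A : PF) : Prop := A.top = z → Spine z A

def GTop (n : ℕ) : Prop := n ≠ z ∧ ∀ i, n ≠ pv i ∧ n ≠ qv i ∧ n ≠ rv i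

def Xok (A : PF) : Prop :=
  OkZ z A ∧ ∀ i, A.top ≠ pv i ∧
    (A.top = qv i → A = PF.var (qv i) ∨ A = PQf pv qv i ∨ A = Qf pv qv i) ∧
    (A.top = rv i → A = PF.var (rv i) ∨ A = PRf pv rv i ∨ A = Spf pv rv i ∨
      A = SentN pv qv rv i)

def GoodM (A : PF) : Prop :=
  OkZ z A ∧ ∀ i, A.top ≠ pv i ∧ A.top ≠ qv i ∧ (A.top = rv i → A = SentN pv qv rv i)

def isS (A : PF) : Prop := ∃ a, A = SentN pv qv rv a

def Reg : List PF → Prop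
  | [] => True
  | D :: μ => (isS pv qv rv D → Reg μ) ∧ (¬ isS pv qv rv D → D.top ≠ z)

def zzF : PF := PF.rdiv (PF.var z) (PF.var z)

def MShape (Γ : List PF) : Prop :=
  ∃ σ ρ, Γ = σ ++ ρ ∧ (∀ X ∈ σ, X = zzF z ∨ ∃ d, X = Hformula z pv qv rv d) ∧
    Reg z pv qv rv ρ

structure Dst : Prop where
  zp : ∀ i, z ≠ pv i
  zq : ∀ i, z ≠ qv i
  zr : ∀ i, z ≠ rv i
  pq : ∀ i j, pv i ≠ qv j
  pr : ∀ i j, pv i ≠ rv j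
  qr : ∀ i j, qv i ≠ rv j
  pinj : Function.Injective pv
  qinj : Function.Injective qv
  rinj : Function.Injective rv

variable {z pv qv rv}

@[simp] lemma top_var (n : ℕ) : (PF.var n).top = n := rfl
@[simp] lemma top_ldiv (A B : PF) : (PF.ldiv A B).top = B.top := rfl
@[simp] lemma top_rdiv (A B : PF) : (PF.rdiv B A).top = B.top := rfl
@[simp] lemma top_PQf (i : Fin (ν + 1)) : (PQf pv qv i).top = qv i := rfl
@[simp] lemma top_Qf (i : Fin (ν + 1)) : (Qf pv qv i).top = qv i := rfl
@[simp] lemma top_PRf (i : Fin (ν + 1)) : (PRf pv rv i).top = rv i := rfl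
@[simp] lemma top_Spf (i : Fin (ν + 1)) : (Spf pv rv i).top = rv i := rfl
@[simp] lemma top_SentN (i : Fin (ν + 1)) : (SentN pv qv rv i).top = rv i := rfl
@[simp] lemma top_H (i : Fin (ν + 1)) : (Hformula z pv qv rv i).top = z := rfl
@[simp] lemma top_zzF : (zzF z).top = z := rfl

lemma okZ_var (n : ℕ) : OkZ z (PF.var n) := fun h => h

lemma okZ_of_ne {A : PF} (h : A.top ≠ z) : OkZ z A := fun h' => absurd h' h

lemma xok_varq (hd : Dst z pv qv rv) (i : Fin (ν + 1)) : Xok z pv qv rv (PF.var (qv i)) := by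
  refine ⟨okZ_var _, fun j => ⟨?_, ?_, ?_⟩⟩
  · intro h; exact hd.pq j i (by simpa using h.symm)
  · intro h; left; simp at h; simp [h]
  · intro h; exact absurd (by simpa using h) (hd.qr i j)

lemma xok_varr (hd : Dst z pv qv rv) (i : Fin (ν + 1)) : Xok z pv qv rv (PF.var (rv i)) := by
  refine ⟨okZ_var _, fun j => ⟨?_, ?_, ?_⟩⟩
  · intro h; exact hd.pr j i (by simpa using h.symm)
  · intro h; exact absurd (by simpa using h.symm) (hd.qr j i)
  · intro h; left; simp at h; simp [h]

lemma xok_PQf (hd : Dst z pv qv rv) (i : Fin (ν + 1)) : Xok z pv qv rv (PQf pv qv i) := by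
  refine ⟨okZ_of_ne (by simp; exact fun h => hd.zq i h.symm), fun j => ⟨?_, ?_, ?_⟩⟩
  · simp; intro h; exact hd.pq j i h.symm
  · intro h; right; left; simp at h; simp [PQf, hd.qinj h]
  · simp; intro h; exact absurd h (hd.qr i j)

lemma xok_Qf (hd : Dst z pv qv rv) (i : Fin (ν + 1)) : Xok z pv qv rv (Qf pv qv i) := by
  refine ⟨okZ_of_ne (by simp; exact fun h => hd.zq i h.symm), fun j => ⟨?_, ?_, ?_⟩⟩
  · simp; intro h; exact hd.pq j i h.symm
  · intro h; right; right; simp at h; simp [Qf, PQf, hd.qinj h]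
  · simp; intro h; exact absurd h (hd.qr i j)

lemma xok_PRf (hd : Dst z pv qv rv) (i : Fin (ν + 1)) : Xok z pv qv rv (PRf pv rv i) := by
  refine ⟨okZ_of_ne (by simp; exact fun h => hd.zr i h.symm), fun j => ⟨?_, ?_, ?_⟩⟩
  · simp; intro h; exact hd.pr j i h.symm
  · simp; intro h; exact absurd h.symm (hd.qr j i)
  · intro h; right; left; simp at h; simp [PRf, hd.rinj h]

lemma xok_Spf (hd : Dst z pv qv rv) (i : Fin (ν + 1)) : Xok z pv qv rv (Spf pv rv i) := by
  refine ⟨okZ_of_ne (by simp; exact fun h => hd.zr i h.symm), fun j => ⟨?_, ?_, ?_⟩⟩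
  · simp; intro h; exact hd.pr j i h.symm
  · simp; intro h; exact absurd h.symm (hd.qr j i)
  · intro h; right; right; left; simp at h; simp [Spf, PRf, hd.rinj h]

lemma xok_SentN (hd : Dst z pv qv rv) (i : Fin (ν + 1)) : Xok z pv qv rv (SentN pv qv rv i) := by
  refine ⟨okZ_of_ne (by simp; exact fun h => hd.zr i h.symm), fun j => ⟨?_, ?_, ?_⟩⟩
  · simp; intro h; exact hd.pr j i h.symm
  · simp; intro h; exact absurd h.symm (hd.qr j i)
  · intro h; right; right; right; simp at h; simp [hd.rinj h]

lemma goodM_to_Xok {A : PF} (h : GoodM z pv qv rv A) : Xok z pv qv rv A := by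
  refine ⟨h.1, fun i => ⟨(h.2 i).1, ?_, ?_⟩⟩
  · intro ht; exact absurd ht (h.2 i).2.1
  · intro ht; right; right; right; exact (h.2 i).2.2 ht

lemma xok_res_ldiv {A B : PF} (h : Xok z pv qv rv (PF.ldiv A B)) : Xok z pv qv rv B := by
  obtain ⟨h0, h1⟩ := h
  refine ⟨?_, fun i => ⟨?_, ?_, ?_⟩⟩
  · intro ht; exact absurd (h0 (by simpa using ht)) (by simp [Spine])
  · intro ht; exact (h1 i).1 (by simpa using ht)
  · intro ht
    rcases (h1 i).2.1 (by simpa using ht) with h|h|h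
    · simp at h
    · left; simp [PQf] at h; simp [h.2]
    · simp [Qf] at h
  · intro ht
    rcases (h1 i).2.2 (by simpa using ht) with h|h|h|h
    · simp at h
    · left; simp [PRf] at h; simp [h.2]
    · simp [Spf] at h
    · simp [SentN_eq] at h

lemma xok_res_rdiv {A B : PF} (h : Xok z pv qv rv (PF.rdiv B A)) : Xok z pv qv rv B := by
  obtain ⟨h0, h1⟩ := h
  refine ⟨?_, fun i => ⟨?_, ?_, ?_⟩⟩
  · intro ht
    have := h0 (by simpa using ht)
    simpa [Spine] using this
  · intro ht; exact (h1 i).1 (by simpa using ht)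
  · intro ht
    rcases (h1 i).2.1 (by simpa using ht) with h|h|h
    · simp at h
    · simp [PQf] at h
    · left; simp [Qf] at h; simp [h.1]
  · intro ht
    rcases (h1 i).2.2 (by simpa using ht) with h|h|h|h
    · simp at h
    · simp [PRf] at h
    · left; simp [Spf] at h; simp [h.1]
    · right; right; left; simp [SentN_eq] at h; simp [h.1]

open Classical in
lemma ldiv_cases {A B : PF} (hX : Xok z pv qv rv (PF.ldiv A B)) :
    (∃ i, A = PF.var (pv i) ∧ B = PF.var (qv i)) ∨
    (∃ i, A = PF.var (pv i) ∧ B = PF.var (rv i)) ∨ GTop z pv qv rv B.top := by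
  obtain ⟨h0, h1⟩ := hX
  by_cases hq : ∃ i, B.top = qv i
  · obtain ⟨i, hq⟩ := hq
    rcases (h1 i).2.1 (by simpa using hq) with h|h|h
    · simp at h
    · left; exact ⟨i, by simp [PQf] at h; simp [h.1], by simp [PQf] at h; simp [h.2]⟩
    · simp [Qf] at h
  by_cases hr : ∃ i, B.top = rv i
  · obtain ⟨i, hr⟩ := hr
    rcases (h1 i).2.2 (by simpa using hr) with h|h|h|h
    · simp at h
    · right; left
      exact ⟨i, by simp [PRf] at h; simp [h.1], by simp [PRf] at h; simp [h.2]⟩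
    · simp [Spf] at h
    · simp [SentN_eq] at h
  · right; right
    refine ⟨?_, fun i => ⟨?_, ?_, ?_⟩⟩
    · intro h; exact absurd (h0 (by simpa using h)) (by simp [Spine])
    · intro h; exact (h1 i).1 (by simpa using h)
    · intro h; exact hq ⟨i, h⟩
    · intro h; exact hr ⟨i, h⟩

open Classical in
lemma rdiv_cases {A B : PF} (hX : Xok z pv qv rv (PF.rdiv B A)) :
    (B.top = z ∧ Spine z B) ∨
    (∃ i, B = PF.var (qv i) ∧ A = PQf pv qv i) ∨
    (∃ i, B = PF.var (rv i) ∧ A = PRf pv rv i) ∨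
    (∃ i, B = Spf pv rv i ∧ A = Qf pv qv i) ∨ GTop z pv qv rv B.top := by
  obtain ⟨h0, h1⟩ := hX
  by_cases hz : B.top = z
  · left; exact ⟨hz, by simpa [Spine] using h0 (by simpa using hz)⟩
  by_cases hq : ∃ i, B.top = qv i
  · obtain ⟨i, hq⟩ := hq
    rcases (h1 i).2.1 (by simpa using hq) with h|h|h
    · simp at h
    · simp [PQf] at h
    · right; left
      exact ⟨i, by simp [Qf] at h; simp [h.1], by simp [Qf] at h; simp [h.2]⟩
  by_cases hr : ∃ i, B.top = rv i
  · obtain ⟨i, hr⟩ := hr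
    rcases (h1 i).2.2 (by simpa using hr) with h|h|h|h
    · simp at h
    · simp [PRf] at h
    · right; right; left
      exact ⟨i, by simp [Spf] at h; simp [h.1], by simp [Spf] at h; simp [h.2]⟩
    · right; right; right; left
      exact ⟨i, by simp [SentN_eq] at h; simp [h.1], by simp [SentN_eq] at h; simp [h.2]⟩
  · right; right; right; right
    refine ⟨hz, fun i => ⟨?_, ?_, ?_⟩⟩
    · intro h; exact (h1 i).1 (by simpa using h)
    · intro h; exact hq ⟨i, h⟩
    · intro h; exact hr ⟨i, h⟩

end NoHAux
namespace NoHAux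

variable {ν : ℕ} {z : ℕ} {pv qv rv : Fin (ν + 1) → ℕ}

lemma spine_top {A : PF} (h : Spine z A) : A.top = z := by
  induction A with
  | var n => simpa [Spine] using h
  | ldiv A B ihA ihB => simp [Spine] at h
  | rdiv B A ihB ihA => simpa [PF.top] using ihB (by simpa [Spine] using h)

lemma spine_curryR (Ys : List PF) : Spine z (curryR (PF.var z) Ys) := by
  induction Ys with
  | nil => simp [curryR, Spine]
  | cons Y Ys ih => simpa [curryR, Spine] using ih

lemma isS_top {A : PF} (h : isS pv qv rv A) : ∃ a, A.top = rv a := by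
  obtain ⟨a, rfl⟩ := h; exact ⟨a, rfl⟩

lemma not_isS_of_top_z (hd : Dst z pv qv rv) {A : PF} (h : A.top = z) :
    ¬ isS pv qv rv A := by
  intro hS; obtain ⟨a, ha⟩ := isS_top hS; exact hd.zr a (h ▸ ha.symm ▸ rfl)

lemma not_isS_of_gtop {A : PF} (h : GTop z pv qv rv A.top) : ¬ isS pv qv rv A := by
  intro hS; obtain ⟨a, ha⟩ := isS_top hS; exact (h.2 a).2.2 ha

@[simp] lemma reg_nil : Reg z pv qv rv ([] : List PF) := trivial

lemma reg_cons {D : PF} {μ : List PF} :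
    Reg z pv qv rv (D :: μ) ↔
      ((isS pv qv rv D → Reg z pv qv rv μ) ∧ (¬ isS pv qv rv D → D.top ≠ z)) :=
  Iff.rfl

lemma reg_prefix {t s : List PF} (h : Reg z pv qv rv (t ++ s)) : Reg z pv qv rv t := by
  induction t with
  | nil => trivial
  | cons D t ih =>
      rw [List.cons_append, reg_cons] at h
      exact reg_cons.mpr ⟨fun hS => ih (h.1 hS), h.2⟩

lemma reg_repl {x s y : List PF} {b : PF} (h : Reg z pv qv rv (x ++ s ++ y))
    (h1 : ¬ isS pv qv rv b) (h2 : b.top ≠ z) : Reg z pv qv rv (x ++ [b] ++ y) := by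
  induction x with
  | nil => exact reg_cons.mpr ⟨fun hS => absurd hS h1, fun _ => h2⟩
  | cons D x ih =>
      rw [List.cons_append, List.cons_append, reg_cons] at h ⊢
      exact ⟨fun hS => ih (h.1 hS), h.2⟩

lemma reg_head {b : PF} {y : List PF} (h1 : ¬ isS pv qv rv b) (h2 : b.top ≠ z) :
    Reg z pv qv rv (b :: y) :=
  reg_cons.mpr ⟨fun hS => absurd hS h1, fun _ => h2⟩

lemma reg_ext (hd : Dst z pv qv rv) {x rest : List PF} {E : PF}
    (h : Reg z pv qv rv (x ++ E :: rest)) (hE : E.top = z) :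
    ∀ y', Reg z pv qv rv (x ++ y') := by
  induction x with
  | nil =>
      rw [List.nil_append, reg_cons] at h
      exact absurd (h.2 (not_isS_of_top_z hd hE) ) (by simp [hE])
  | cons D x ih =>
      intro y'
      rw [List.cons_append, reg_cons] at h
      refine reg_cons.mpr ⟨fun hS => ih (h.1 hS) y', h.2⟩

lemma goodM_of_gtop {A : PF} (hg : GTop z pv qv rv A.top) : GoodM z pv qv rv A := by
  refine ⟨okZ_of_ne hg.1, fun i => ⟨(hg.2 i).1, (hg.2 i).2.1, ?_⟩⟩
  · intro h; exact absurd h (hg.2 i).2.2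

lemma goodM_of_spine (hd : Dst z pv qv rv) {A : PF} (hsp : Spine z A) :
    GoodM z pv qv rv A := by
  have ht := spine_top (z := z) hsp
  refine ⟨fun _ => hsp, fun i => ⟨?_, ?_, ?_⟩⟩
  · rw [ht]; exact hd.zp i
  · rw [ht]; exact hd.zq i
  · rw [ht]; intro h; exact absurd h (hd.zr i)

lemma goodM_zzF (hd : Dst z pv qv rv) : GoodM z pv qv rv (zzF z) :=
  goodM_of_spine hd (by simp [zzF, Spine])

lemma goodM_ldiv_gtop {A B : PF} (h : GoodM z pv qv rv (PF.ldiv A B)) :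
    GTop z pv qv rv B.top := by
  obtain ⟨h0, h1⟩ := h
  refine ⟨?_, fun i => ⟨(h1 i).1, (h1 i).2.1, ?_⟩⟩
  · intro ht; exact absurd (h0 (by simpa using ht)) (by simp [Spine])
  · intro ht
    have := (h1 i).2.2 (by simpa using ht)
    simp [SentN_eq] at this

open Classical in
lemma goodM_rdiv_cases {A B : PF} (h : GoodM z pv qv rv (PF.rdiv B A)) :
    (B.top = z ∧ Spine z B) ∨ (∃ i, B = Spf pv rv i ∧ A = Qf pv qv i) ∨
    GTop z pv qv rv B.top := by
  obtain ⟨h0, h1⟩ := h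
  by_cases hz : B.top = z
  · left; exact ⟨hz, by simpa [Spine] using h0 (by simpa using hz)⟩
  by_cases hr : ∃ i, B.top = rv i
  · obtain ⟨i, hr⟩ := hr
    have := (h1 i).2.2 (by simpa using hr)
    right; left
    exact ⟨i, by simp [SentN_eq] at this; simp [this.1],
      by simp [SentN_eq] at this; simp [this.2]⟩
  · right; right
    refine ⟨hz, fun i => ⟨(h1 i).1, (h1 i).2.1, fun hh => hr ⟨i, hh⟩⟩⟩

lemma not_goodM_Qf (i : Fin (ν + 1)) : ¬ GoodM z pv qv rv (Qf pv qv i) := by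
  intro h; exact (h.2 i).2.1 (by simp)

lemma not_goodM_PQf (i : Fin (ν + 1)) : ¬ GoodM z pv qv rv (PQf pv qv i) := by
  intro h; exact (h.2 i).2.1 (by simp)

lemma SentN_inj (hd : Dst z pv qv rv) {d e : Fin (ν + 1)}
    (h : SentN pv qv rv d = SentN pv qv rv e) : d = e := by
  have : rv d = rv e := by
    have := congrArg PF.top h; simpa using this
  exact hd.rinj this

end NoHAux
namespace NoHAux

variable {ν : ℕ} (z : ℕ) (pv qv rv : Fin (ν + 1) → ℕ)

def SG (Γ : List PF) : Prop := ∀ A ∈ Γ, Xok z pv qv rv A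

def Mot (Γ : List PF) (C : PF) : Prop :=
  (∀ c i X, Γ = PF.var (pv c) :: X → SG z pv qv rv X → C = PF.var (pv i) →
      c = i ∧ X = []) ∧
  (∀ i, C = PF.var (qv i) → SG z pv qv rv Γ →
      Γ = [PF.var (qv i)] ∨ Γ = [Qf pv qv i, PQf pv qv i]) ∧
  (∀ c i X, Γ = PF.var (pv c) :: X → SG z pv qv rv X → C = PF.var (qv i) →
      c = i ∧ X = [PQf pv qv i]) ∧
  (∀ i, C = PQf pv qv i → SG z pv qv rv Γ → Γ = [PQf pv qv i]) ∧
  (∀ a, C = PF.var (rv a) → SG z pv qv rv Γ →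
      Γ = [PF.var (rv a)] ∨ Γ = [Spf pv rv a, PRf pv rv a] ∨
        Γ = [SentN pv qv rv a, Qf pv qv a, PRf pv rv a]) ∧
  (∀ c a X, Γ = PF.var (pv c) :: X → SG z pv qv rv X → C = PF.var (rv a) →
      c = a ∧ X = [PRf pv rv a]) ∧
  (∀ a, C = PRf pv rv a → SG z pv qv rv Γ → Γ = [PRf pv rv a]) ∧
  (∀ a, C = Qf pv qv a → SG z pv qv rv Γ → Γ = [Qf pv qv a]) ∧
  (∀ a, C = Spf pv rv a → SG z pv qv rv Γ →
      Γ = [Spf pv rv a] ∨ Γ = [SentN pv qv rv a, Qf pv qv a]) ∧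
  (∀ a, C = SentN pv qv rv a → SG z pv qv rv Γ → Γ = [SentN pv qv rv a]) ∧
  (C = PF.var z → (∀ A ∈ Γ, GoodM z pv qv rv A) → MShape z pv qv rv Γ → False)

variable {z pv qv rv}

lemma no_p (hd : Dst z pv qv rv) {Γ : List PF} {i : Fin (ν + 1)}
    (h : PDer Γ (PF.var (pv i))) (hS : SG z pv qv rv Γ) : False := by
  obtain ⟨A, hA, ht⟩ := top_mem h (pv i) rfl
  exact ((hS A hA).2 i).1 ht

lemma sg_mono {l l' : List PF} (h : SG z pv qv rv l) (hsub : l' ⊆ l) :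
    SG z pv qv rv l' := fun A hA => h A (hsub hA)

lemma motId (hd : Dst z pv qv rv) (A : PF) : Mot z pv qv rv [A] A := by
  refine ⟨?_, ?_, ?_, ?_, ?_, ?_, ?_, ?_, ?_, ?_, ?_⟩
  · intro c i X hΓ hSG hC
    rw [hC] at hΓ
    obtain ⟨h1, h2⟩ : PF.var (pv i) = PF.var (pv c) ∧ X = [] := by
      constructor
      · exact (List.cons.injEq _ _ _ _ ▸ hΓ).1.symm ▸ rfl
      · exact ((List.cons.injEq _ _ _ _) ▸ hΓ).2.symm
    simp at h1
    exact ⟨(hd.pinj h1).symm, h2⟩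
  · intro i hC _; left; rw [hC]
  · intro c i X hΓ hSG hC
    rw [hC] at hΓ
    simp at hΓ
    exact absurd hΓ.1.symm (hd.pq c i)
  · intro i hC _; rw [hC]
  · intro a hC _; left; rw [hC]
  · intro c a X hΓ hSG hC
    rw [hC] at hΓ; simp at hΓ
    exact absurd hΓ.1.symm (hd.pr c a)
  · intro a hC _; rw [hC]
  · intro a hC _; rw [hC]
  · intro a hC _; left; rw [hC]
  · intro a hC _; rw [hC]
  · intro hC _ hM
    obtain ⟨σ, ρ, hsplit, hσ, hρ⟩ := hM
    rw [hC] at hsplit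
    cases σ with
    | nil =>
        simp at hsplit
        rw [← hsplit] at hρ
        obtain ⟨-, h2⟩ := reg_cons.mp hρ
        refine absurd (h2 ?_) (by simp)
        intro hS; obtain ⟨a, ha⟩ := hS; simp [SentN_eq] at ha
    | cons x t =>
        obtain ⟨hx, -⟩ : x = PF.var z ∧ t ++ ρ = [] := by simpa using hsplit.symm
        rcases hσ x (by simp) with h|⟨d, h⟩
        · rw [hx] at h; simp [zzF] at h
        · rw [hx] at h; simp [Hformula] at h

lemma motLdivR (hd : Dst z pv qv rv) {P : List PF} {A B : PF}
    (ih : Mot z pv qv rv (A :: P) B) : Mot z pv qv rv P (PF.ldiv A B) := by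
  obtain ⟨m1, m2, m3, m4, m5, m6, m7, m8, m9, m10, m11⟩ := ih
  refine ⟨?_, ?_, ?_, ?_, ?_, ?_, ?_, ?_, ?_, ?_, ?_⟩
  · intro c i X hΓ hSG hC; simp at hC
  · intro i hC _; simp [PQf] at hC
  · intro c i X hΓ hSG hC; simp at hC
  · intro i hC hSG
    obtain ⟨hA, hB⟩ : A = PF.var (pv i) ∧ B = PF.var (qv i) := by
      simpa [PQf, PF.ldiv.injEq] using hC
    subst hA
    exact (m3 i i P rfl hSG hB).2
  · intro a hC _; simp at hC
  · intro c a X hΓ hSG hC; simp at hC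
  · intro a hC hSG
    obtain ⟨hA, hB⟩ : A = PF.var (pv a) ∧ B = PF.var (rv a) := by
      simpa [PRf, PF.ldiv.injEq] using hC
    subst hA
    exact (m6 a a P rfl hSG hB).2
  · intro a hC _; simp [Qf] at hC
  · intro a hC _; simp [Spf] at hC
  · intro a hC _; simp [SentN_eq] at hC
  · intro hC _ _; simp at hC

lemma motRdivR (hd : Dst z pv qv rv) {P : List PF} {A B : PF}
    (ih : Mot z pv qv rv (P ++ [A]) B) : Mot z pv qv rv P (PF.rdiv B A) := by
  obtain ⟨m1, m2, m3, m4, m5, m6, m7, m8, m9, m10, m11⟩ := ih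
  refine ⟨?_, ?_, ?_, ?_, ?_, ?_, ?_, ?_, ?_, ?_, ?_⟩
  · intro c i X hΓ hSG hC; simp at hC
  · intro i hC _; simp [Qf] at hC
  · intro c i X hΓ hSG hC; simp at hC
  · intro i hC _; simp [PQf] at hC
  · intro a hC _; simp at hC
  · intro c a X hΓ hSG hC; simp at hC
  · intro a hC _; simp [PRf] at hC
  · intro a hC hSG
    obtain ⟨hB, hA⟩ : B = PF.var (qv a) ∧ A = PQf pv qv a := by
      simpa [Qf, PF.rdiv.injEq] using hC
    subst hA
    have hSG2 : SG z pv qv rv (P ++ [PQf pv qv a]) := by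
      intro A hA
      rcases List.mem_append.mp hA with h|h
      · exact hSG A h
      · simp at h; rw [h]; exact xok_PQf hd a
    rcases m2 a hB hSG2 with h|h
    · obtain ⟨-, h2⟩ := app_one h; simp [PQf] at h2
    · exact (app_two h).1
  · intro a hC hSG
    obtain ⟨hB, hA⟩ : B = PF.var (rv a) ∧ A = PRf pv rv a := by
      simpa [Spf, PF.rdiv.injEq] using hC
    subst hA
    have hSG2 : SG z pv qv rv (P ++ [PRf pv rv a]) := by
      intro A hA
      rcases List.mem_append.mp hA with h|h
      · exact hSG A h
      · simp at h; rw [h]; exact xok_PRf hd a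
    rcases m5 a hB hSG2 with h|h|h
    · obtain ⟨-, h2⟩ := app_one h; simp [PRf] at h2
    · left; exact (app_two h).1
    · right; exact (app_three h).1
  · intro a hC hSG
    obtain ⟨hB, hA⟩ : B = Spf pv rv a ∧ A = Qf pv qv a := by
      simpa [SentN_eq, PF.rdiv.injEq] using hC
    subst hA
    have hSG2 : SG z pv qv rv (P ++ [Qf pv qv a]) := by
      intro A hA
      rcases List.mem_append.mp hA with h|h
      · exact hSG A h
      · simp at h; rw [h]; exact xok_Qf hd a
    rcases m9 a hB hSG2 with h|h
    · obtain ⟨-, h2⟩ := app_one h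
      simp [Qf, Spf, PQf, PRf] at h2
      exact absurd h2 (hd.qr a a)
    · exact (app_two h).1
  · intro hC _ _; simp at hC

end NoHAux
namespace NoHAux

variable {ν : ℕ} {z : ℕ} {pv qv rv : Fin (ν + 1) → ℕ}

lemma seg_one' {x y : List PF} {b u : PF} (h : x ++ [b] ++ y = [u]) :
    x = [] ∧ b = u ∧ y = [] := seg_one (by simpa using h)

lemma seg_two' {x y : List PF} {b u v : PF} (h : x ++ [b] ++ y = [u, v]) :
    (x = [] ∧ b = u ∧ y = [v]) ∨ (x = [u] ∧ b = v ∧ y = []) := seg_two (by simpa using h)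

lemma seg_three' {x y : List PF} {b u v w : PF} (h : x ++ [b] ++ y = [u, v, w]) :
    (x = [] ∧ b = u ∧ y = [v, w]) ∨ (x = [u] ∧ b = v ∧ y = [w]) ∨
    (x = [u, v] ∧ b = w ∧ y = []) := seg_three (by simpa using h)

lemma sg_parts {Γ₁ P Δ₁ : List PF} {E : PF}
    (h : SG z pv qv rv (Γ₁ ++ P ++ [E] ++ Δ₁)) :
    SG z pv qv rv Γ₁ ∧ SG z pv qv rv P ∧ Xok z pv qv rv E ∧ SG z pv qv rv Δ₁ := by
  refine ⟨?_, ?_, h E (by simp), ?_⟩ <;> (intro A hA; exact h A (by simp [hA]))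

lemma sg_parts2 {Γ₁ P Δ₁ : List PF} {E : PF}
    (h : SG z pv qv rv (Γ₁ ++ [E] ++ P ++ Δ₁)) :
    SG z pv qv rv Γ₁ ∧ Xok z pv qv rv E ∧ SG z pv qv rv P ∧ SG z pv qv rv Δ₁ := by
  refine ⟨?_, h E (by simp), ?_, ?_⟩ <;> (intro A hA; exact h A (by simp [hA]))

lemma sg_mid {Γ₁ Δ₁ : List PF} {B : PF} (h1 : SG z pv qv rv Γ₁)
    (h4 : SG z pv qv rv Δ₁) (hB : Xok z pv qv rv B) :
    SG z pv qv rv (Γ₁ ++ [B] ++ Δ₁) := by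
  intro A hA
  rcases (by simpa using hA : A ∈ Γ₁ ∨ A = B ∨ A ∈ Δ₁) with h|h|h
  · exact h1 A h
  · exact h ▸ hB
  · exact h4 A h

lemma motLdivL (hd : Dst z pv qv rv) {P Γ₁ Δ₁ : List PF} {A B C : PF}
    (h1 : PDer P A) (h2 : PDer (Γ₁ ++ [B] ++ Δ₁) C)
    (ih1 : Mot z pv qv rv P A) (ih2 : Mot z pv qv rv (Γ₁ ++ [B] ++ Δ₁) C) :
    Mot z pv qv rv (Γ₁ ++ P ++ [PF.ldiv A B] ++ Δ₁) C := by
  obtain ⟨n1, n2, n3, n4, n5, n6, n7, n8, n9, n10, n11⟩ := ih1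
  obtain ⟨m1, m2, m3, m4, m5, m6, m7, m8, m9, m10, m11⟩ := ih2
  refine ⟨?_, ?_, ?_, ?_, ?_, ?_, ?_, ?_, ?_, ?_, ?_⟩
  -- ===== T2 : head p, succ var p =====
  · intro c i X hΓ hSG hC
    cases Γ₁ with
    | cons G Γ₁' =>
        obtain ⟨hG, hX⟩ : G = PF.var (pv c) ∧ Γ₁' ++ P ++ [PF.ldiv A B] ++ Δ₁ = X := by
          simpa using hΓ
        obtain ⟨hp1, hp2, hp3, hp4⟩ := sg_parts (hX ▸ hSG)
        have := m1 c i (Γ₁' ++ [B] ++ Δ₁) (by simp [hG])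
          (sg_mid hp1 hp4 (xok_res_ldiv hp3)) hC
        simpa using this.2
    | nil =>
        cases P with
        | nil => simp at hΓ
        | cons p0 P' =>
            obtain ⟨hp0, hX⟩ :
                p0 = PF.var (pv c) ∧ P' ++ [PF.ldiv A B] ++ Δ₁ = X := by simpa using hΓ
            obtain ⟨-, hp3, hp4⟩ := (by
              rw [← hX] at hSG
              exact ⟨fun A hA => hSG A (by simp [hA]),
                hSG _ (by simp), fun A hA => hSG A (by simp [hA])⟩ :
              SG z pv qv rv P' ∧ Xok z pv qv rv (PF.ldiv A B) ∧ SG z pv qv rv Δ₁)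
            refine absurd (hC ▸ h2) (fun hh => no_p hd hh ?_)
            exact sg_mid (fun A hA => by simp at hA) hp4 (xok_res_ldiv hp3)
  -- ===== T3 : succ var q =====
  · intro i hC hSG
    obtain ⟨hp1, hp2, hp3, hp4⟩ := sg_parts hSG
    rcases ldiv_cases hp3 with ⟨d, hA, hB⟩|⟨d, hA, hB⟩|hg
    · exact absurd (hA ▸ h1) (fun hh => no_p hd hh hp2)
    · exact absurd (hA ▸ h1) (fun hh => no_p hd hh hp2)
    · exfalso
      have hSG2 := sg_mid hp1 hp4 (xok_res_ldiv hp3)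
      rcases m2 i hC hSG2 with h|h
      · obtain ⟨-, hB', -⟩ := seg_one' h
        exact (hg.2 i).2.1 (by rw [hB']; simp)
      · rcases seg_two' h with ⟨-, hB', -⟩|⟨-, hB', -⟩ <;>
          exact (hg.2 i).2.1 (by rw [hB']; simp)
  -- ===== T4 : head p, succ var q =====
  · intro c i X hΓ hSG hC
    cases Γ₁ with
    | cons G Γ₁' =>
        obtain ⟨hG, hX⟩ : G = PF.var (pv c) ∧ Γ₁' ++ P ++ [PF.ldiv A B] ++ Δ₁ = X := by
          simpa using hΓ
        obtain ⟨hp1, hp2, hp3, hp4⟩ := sg_parts (hX ▸ hSG)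
        have hres := m3 c i (Γ₁' ++ [B] ++ Δ₁) (by simp [hG])
          (sg_mid hp1 hp4 (xok_res_ldiv hp3)) hC
        obtain ⟨-, hB', -⟩ := seg_one' hres.2
        exfalso
        rcases ldiv_cases hp3 with ⟨d, hA, hB⟩|⟨d, hA, hB⟩|hg
        · rw [hB'] at hB; simp [PQf] at hB
        · rw [hB'] at hB; simp [PQf] at hB
        · exact (hg.2 i).2.1 (by rw [hB']; simp)
    | nil =>
        cases P with
        | nil => simp at hΓ
        | cons p0 P' =>
            obtain ⟨hp0, hX⟩ :
                p0 = PF.var (pv c) ∧ P' ++ [PF.ldiv A B] ++ Δ₁ = X := by simpa using hΓ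
            have hSGX : SG z pv qv rv (P' ++ [PF.ldiv A B] ++ Δ₁) := hX ▸ hSG
            have hp2 : SG z pv qv rv P' := fun A hA => hSGX A (by simp [hA])
            have hp3 : Xok z pv qv rv (PF.ldiv A B) := hSGX _ (by simp)
            have hp4 : SG z pv qv rv Δ₁ := fun A hA => hSGX A (by simp [hA])
            have sgnil : SG z pv qv rv ([] : List PF) := fun A hA => by simp at hA
            rcases ldiv_cases hp3 with ⟨d, hA, hB⟩|⟨d, hA, hB⟩|hg
            · subst hA
              obtain ⟨hcd, hP'⟩ := n1 c d P' (by rw [hp0]) hp2 rfl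
              subst hB
              rcases m2 i hC (sg_mid sgnil hp4 (xok_varq hd d)) with h|h
              · obtain ⟨-, hB2, hΔ⟩ := seg_one' h
                have hdi : d = i := hd.qinj (by simpa using hB2)
                refine ⟨hcd.trans hdi, ?_⟩
                rw [← hX, hP', hΔ, hdi]
                simp [PQf]
              · exfalso
                rcases seg_two' h with ⟨-, hB2, -⟩|⟨h1', -, -⟩
                · simp [Qf] at hB2
                · simp at h1'
            · exfalso
              subst hA
              obtain ⟨hcd, hP'⟩ := n1 c d P' (by rw [hp0]) hp2 rfl
              subst hB
              rcases m2 i hC (sg_mid sgnil hp4 (xok_varr hd d)) with h|h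
              · obtain ⟨-, hB2, -⟩ := seg_one' h
                exact hd.qr i d (by simpa using hB2.symm)
              · rcases seg_two' h with ⟨-, hB2, -⟩|⟨h1', -, -⟩
                · simp [Qf] at hB2
                · simp at h1'
            · exfalso
              rcases m2 i hC (sg_mid sgnil hp4 (xok_res_ldiv hp3)) with h|h
              · obtain ⟨-, hB', -⟩ := seg_one' h
                exact (hg.2 i).2.1 (by rw [hB']; simp)
              · rcases seg_two' h with ⟨-, hB', -⟩|⟨h1', -, -⟩
                · exact (hg.2 i).2.1 (by rw [hB']; simp)
                · simp at h1'
  -- ===== T7 : succ PQ =====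
  · intro i hC hSG
    obtain ⟨hp1, hp2, hp3, hp4⟩ := sg_parts hSG
    rcases ldiv_cases hp3 with ⟨d, hA, hB⟩|⟨d, hA, hB⟩|hg
    · exact absurd (hA ▸ h1) (fun hh => no_p hd hh hp2)
    · exact absurd (hA ▸ h1) (fun hh => no_p hd hh hp2)
    · exfalso
      have h := m4 i hC (sg_mid hp1 hp4 (xok_res_ldiv hp3))
      obtain ⟨-, hB', -⟩ := seg_one' h
      exact (hg.2 i).2.1 (by rw [hB']; simp)
  -- ===== T9 : succ var r =====
  · intro a hC hSG
    obtain ⟨hp1, hp2, hp3, hp4⟩ := sg_parts hSG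
    rcases ldiv_cases hp3 with ⟨d, hA, hB⟩|⟨d, hA, hB⟩|hg
    · exact absurd (hA ▸ h1) (fun hh => no_p hd hh hp2)
    · exact absurd (hA ▸ h1) (fun hh => no_p hd hh hp2)
    · exfalso
      have hSG2 := sg_mid hp1 hp4 (xok_res_ldiv hp3)
      rcases m5 a hC hSG2 with h|h|h
      · obtain ⟨-, hB', -⟩ := seg_one' h
        exact (hg.2 a).2.2 (by rw [hB']; simp)
      · rcases seg_two' h with ⟨-, hB', -⟩|⟨-, hB', -⟩ <;>
          exact (hg.2 a).2.2 (by rw [hB']; simp)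
      · rcases seg_three' h with ⟨-, hB', -⟩|⟨-, hB', -⟩|⟨-, hB', -⟩
        · exact (hg.2 a).2.2 (by rw [hB']; simp)
        · exact (hg.2 a).2.1 (by rw [hB']; simp)
        · exact (hg.2 a).2.2 (by rw [hB']; simp)
  -- ===== T10 : head p, succ var r =====
  · intro c a X hΓ hSG hC
    cases Γ₁ with
    | cons G Γ₁' =>
        obtain ⟨hG, hX⟩ : G = PF.var (pv c) ∧ Γ₁' ++ P ++ [PF.ldiv A B] ++ Δ₁ = X := by
          simpa using hΓ
        obtain ⟨hp1, hp2, hp3, hp4⟩ := sg_parts (hX ▸ hSG)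
        have hres := m6 c a (Γ₁' ++ [B] ++ Δ₁) (by simp [hG])
          (sg_mid hp1 hp4 (xok_res_ldiv hp3)) hC
        obtain ⟨-, hB', -⟩ := seg_one' hres.2
        exfalso
        rcases ldiv_cases hp3 with ⟨d, hA, hB⟩|⟨d, hA, hB⟩|hg
        · rw [hB'] at hB; simp [PRf] at hB
        · rw [hB'] at hB; simp [PRf] at hB
        · exact (hg.2 a).2.2 (by rw [hB']; simp)
    | nil =>
        cases P with
        | nil => simp at hΓ
        | cons p0 P' =>
            obtain ⟨hp0, hX⟩ :
                p0 = PF.var (pv c) ∧ P' ++ [PF.ldiv A B] ++ Δ₁ = X := by simpa using hΓ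
            have hSGX : SG z pv qv rv (P' ++ [PF.ldiv A B] ++ Δ₁) := hX ▸ hSG
            have hp2 : SG z pv qv rv P' := fun A hA => hSGX A (by simp [hA])
            have hp3 : Xok z pv qv rv (PF.ldiv A B) := hSGX _ (by simp)
            have hp4 : SG z pv qv rv Δ₁ := fun A hA => hSGX A (by simp [hA])
            have sgnil : SG z pv qv rv ([] : List PF) := fun A hA => by simp at hA
            rcases ldiv_cases hp3 with ⟨d, hA, hB⟩|⟨d, hA, hB⟩|hg
            · exfalso
              subst hA
              obtain ⟨hcd, hP'⟩ := n1 c d P' (by rw [hp0]) hp2 rfl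
              subst hB
              rcases m5 a hC (sg_mid sgnil hp4 (xok_varq hd d)) with h|h|h
              · obtain ⟨-, hB2, -⟩ := seg_one' h
                exact hd.qr d a (by simpa using hB2)
              · rcases seg_two' h with ⟨-, hB2, -⟩|⟨h1', -, -⟩
                · simp [Spf] at hB2
                · simp at h1'
              · rcases seg_three' h with ⟨-, hB2, -⟩|⟨h1', -, -⟩|⟨h1', -, -⟩
                · simp [SentN_eq] at hB2
                · simp at h1'
                · simp at h1'
            · subst hA
              obtain ⟨hcd, hP'⟩ := n1 c d P' (by rw [hp0]) hp2 rfl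
              subst hB
              rcases m5 a hC (sg_mid sgnil hp4 (xok_varr hd d)) with h|h|h
              · obtain ⟨-, hB2, hΔ⟩ := seg_one' h
                have hda : d = a := hd.rinj (by simpa using hB2)
                refine ⟨hcd.trans hda, ?_⟩
                rw [← hX, hP', hΔ, hda]
                simp [PRf]
              · exfalso
                rcases seg_two' h with ⟨-, hB2, -⟩|⟨h1', -, -⟩
                · simp [Spf] at hB2
                · simp at h1'
              · exfalso
                rcases seg_three' h with ⟨-, hB2, -⟩|⟨h1', -, -⟩|⟨h1', -, -⟩
                · simp [SentN_eq] at hB2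
                · simp at h1'
                · simp at h1'
            · exfalso
              rcases m5 a hC (sg_mid sgnil hp4 (xok_res_ldiv hp3)) with h|h|h
              · obtain ⟨-, hB', -⟩ := seg_one' h
                exact (hg.2 a).2.2 (by rw [hB']; simp)
              · rcases seg_two' h with ⟨-, hB', -⟩|⟨h1', -, -⟩
                · exact (hg.2 a).2.2 (by rw [hB']; simp)
                · simp at h1'
              · rcases seg_three' h with ⟨-, hB', -⟩|⟨h1', -, -⟩|⟨h1', -, -⟩
                · exact (hg.2 a).2.2 (by rw [hB']; simp)
                · simp at h1'
                · simp at h1'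
  -- ===== T11 : succ PR =====
  · intro a hC hSG
    obtain ⟨hp1, hp2, hp3, hp4⟩ := sg_parts hSG
    rcases ldiv_cases hp3 with ⟨d, hA, hB⟩|⟨d, hA, hB⟩|hg
    · exact absurd (hA ▸ h1) (fun hh => no_p hd hh hp2)
    · exact absurd (hA ▸ h1) (fun hh => no_p hd hh hp2)
    · exfalso
      have h := m7 a hC (sg_mid hp1 hp4 (xok_res_ldiv hp3))
      obtain ⟨-, hB', -⟩ := seg_one' h
      exact (hg.2 a).2.2 (by rw [hB']; simp)
  -- ===== T12 : succ Q =====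
  · intro a hC hSG
    obtain ⟨hp1, hp2, hp3, hp4⟩ := sg_parts hSG
    rcases ldiv_cases hp3 with ⟨d, hA, hB⟩|⟨d, hA, hB⟩|hg
    · exact absurd (hA ▸ h1) (fun hh => no_p hd hh hp2)
    · exact absurd (hA ▸ h1) (fun hh => no_p hd hh hp2)
    · exfalso
      have h := m8 a hC (sg_mid hp1 hp4 (xok_res_ldiv hp3))
      obtain ⟨-, hB', -⟩ := seg_one' h
      exact (hg.2 a).2.1 (by rw [hB']; simp)
  -- ===== T13 : succ S' =====
  · intro a hC hSG
    obtain ⟨hp1, hp2, hp3, hp4⟩ := sg_parts hSG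
    rcases ldiv_cases hp3 with ⟨d, hA, hB⟩|⟨d, hA, hB⟩|hg
    · exact absurd (hA ▸ h1) (fun hh => no_p hd hh hp2)
    · exact absurd (hA ▸ h1) (fun hh => no_p hd hh hp2)
    · exfalso
      have hSG2 := sg_mid hp1 hp4 (xok_res_ldiv hp3)
      rcases m9 a hC hSG2 with h|h
      · obtain ⟨-, hB', -⟩ := seg_one' h
        exact (hg.2 a).2.2 (by rw [hB']; simp)
      · rcases seg_two' h with ⟨-, hB', -⟩|⟨-, hB', -⟩
        · exact (hg.2 a).2.2 (by rw [hB']; simp)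
        · exact (hg.2 a).2.1 (by rw [hB']; simp)
  -- ===== T14 : succ S =====
  · intro a hC hSG
    obtain ⟨hp1, hp2, hp3, hp4⟩ := sg_parts hSG
    rcases ldiv_cases hp3 with ⟨d, hA, hB⟩|⟨d, hA, hB⟩|hg
    · exact absurd (hA ▸ h1) (fun hh => no_p hd hh hp2)
    · exact absurd (hA ▸ h1) (fun hh => no_p hd hh hp2)
    · exfalso
      have h := m10 a hC (sg_mid hp1 hp4 (xok_res_ldiv hp3))
      obtain ⟨-, hB', -⟩ := seg_one' h
      exact (hg.2 a).2.2 (by rw [hB']; simp)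
  -- ===== ZA =====
  · intro hC hGood hM
    obtain ⟨σ, ρ, hsplit, hσ, hρ⟩ := hM
    have hGE : GoodM z pv qv rv (PF.ldiv A B) := hGood _ (by simp)
    have hg := goodM_ldiv_gtop hGE
    have hGB : GoodM z pv qv rv B := goodM_of_gtop hg
    have hnS : ¬ isS pv qv rv B := not_isS_of_gtop hg
    have hGood2 : ∀ A' ∈ Γ₁ ++ [B] ++ Δ₁, GoodM z pv qv rv A' := by
      intro A' hA'
      rcases (by simpa using hA' : A' ∈ Γ₁ ∨ A' = B ∨ A' ∈ Δ₁) with h|h|h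
      · exact hGood A' (by simp [h])
      · exact h ▸ hGB
      · exact hGood A' (by simp [h])
    have hsplit' : Γ₁ ++ (P ++ PF.ldiv A B :: Δ₁) = σ ++ ρ := by
      simpa [List.append_assoc] using hsplit
    rcases List.append_eq_append_iff.mp hsplit' with ⟨a', ha1, ha2⟩ | ⟨c', hc1, hc2⟩
    · -- σ = Γ₁ ++ a'
      rcases List.append_eq_append_iff.mp ha2 with ⟨u, hu1, hu2⟩ | ⟨u, hu1, hu2⟩
      · -- a' = P ++ u, E :: Δ₁ = u ++ ρ
        cases u with
        | nil =>
            refine m11 hC hGood2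
              ⟨Γ₁, [B] ++ Δ₁, by simp, ?_, by simpa using reg_head hnS hg.1⟩
            intro X hX; exact hσ X (by rw [ha1]; simp [hX])
        | cons x u' =>
            rw [List.cons_append] at hu2
            injection hu2 with hx htail
            have hxσ : x ∈ σ := by rw [ha1, hu1]; simp
            rcases hσ x hxσ with h|⟨d, h⟩
            · rw [← hx] at h; simp [zzF] at h
            · rw [← hx] at h; simp [Hformula] at h
      · -- P = a' ++ u, ρ = u ++ (E :: Δ₁)
        refine m11 hC hGood2
          ⟨Γ₁, [B] ++ Δ₁, by simp, ?_, by simpa using reg_head hnS hg.1⟩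
        intro X hX; exact hσ X (by rw [ha1]; simp [hX])
    · -- Γ₁ = σ ++ c', ρ = c' ++ (P ++ E :: Δ₁)
      have hρ' : Reg z pv qv rv (c' ++ (P ++ [PF.ldiv A B]) ++ Δ₁) := by
        have : Reg z pv qv rv (c' ++ (P ++ PF.ldiv A B :: Δ₁)) := hc2 ▸ hρ
        simpa [List.append_assoc] using this
      have hreg2 := reg_repl hρ' hnS hg.1
      refine m11 hC hGood2 ⟨σ, c' ++ [B] ++ Δ₁, by rw [hc1]; simp, hσ, hreg2⟩

end NoHAux
namespace NoHAux

variable {ν : ℕ} {z : ℕ} {pv qv rv : Fin (ν + 1) → ℕ}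

lemma sgm_sg {l : List PF} (h : ∀ A ∈ l, GoodM z pv qv rv A) : SG z pv qv rv l :=
  fun A hA => goodM_to_Xok (h A hA)

lemma gm_mid {Γ₁ Δ₁ : List PF} {B : PF} (h1 : ∀ A ∈ Γ₁, GoodM z pv qv rv A)
    (h4 : ∀ A ∈ Δ₁, GoodM z pv qv rv A) (hB : GoodM z pv qv rv B) :
    ∀ A ∈ Γ₁ ++ [B] ++ Δ₁, GoodM z pv qv rv A := by
  intro A hA
  rcases (by simpa using hA : A ∈ Γ₁ ∨ A = B ∨ A ∈ Δ₁) with h|h|h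
  · exact h1 A h
  · exact h ▸ hB
  · exact h4 A h

lemma mem4_1 {Γ₁ P Δ₁ : List PF} {E X : PF} (h : X ∈ Γ₁) :
    X ∈ Γ₁ ++ [E] ++ P ++ Δ₁ := by simp [h]

lemma mem4_3 {Γ₁ P Δ₁ : List PF} {E X : PF} (h : X ∈ P) :
    X ∈ Γ₁ ++ [E] ++ P ++ Δ₁ := by simp [h]

lemma mem4_4 {Γ₁ P Δ₁ : List PF} {E X : PF} (h : X ∈ Δ₁) :
    X ∈ Γ₁ ++ [E] ++ P ++ Δ₁ := by simp [h]

lemma motRdivL (hd : Dst z pv qv rv) {P Γ₁ Δ₁ : List PF} {A B C : PF}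
    (h1 : PDer P A) (h2 : PDer (Γ₁ ++ [B] ++ Δ₁) C)
    (ih1 : Mot z pv qv rv P A) (ih2 : Mot z pv qv rv (Γ₁ ++ [B] ++ Δ₁) C) :
    Mot z pv qv rv (Γ₁ ++ [PF.rdiv B A] ++ P ++ Δ₁) C := by
  obtain ⟨n1, n2, n3, n4, n5, n6, n7, n8, n9, n10, n11⟩ := ih1
  obtain ⟨m1, m2, m3, m4, m5, m6, m7, m8, m9, m10, m11⟩ := ih2
  refine ⟨?_, ?_, ?_, ?_, ?_, ?_, ?_, ?_, ?_, ?_, ?_⟩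
  -- ===== T2 : head p, succ var p =====
  · intro c i X hΓ hSG hC
    cases Γ₁ with
    | cons G Γ₁' =>
        obtain ⟨hG, hX⟩ : G = PF.var (pv c) ∧ Γ₁' ++ [PF.rdiv B A] ++ P ++ Δ₁ = X := by
          simpa using hΓ
        obtain ⟨hp1, hpE, hpP, hp4⟩ := sg_parts2 (hX ▸ hSG)
        have := m1 c i (Γ₁' ++ [B] ++ Δ₁) (by simp [hG])
          (sg_mid hp1 hp4 (xok_res_rdiv hpE)) hC
        simpa using this.2
    | nil => simp at hΓ
  -- ===== T3 : succ var q =====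
  · intro i hC hSG
    obtain ⟨hp1, hpE, hpP, hp4⟩ := sg_parts2 hSG
    rcases rdiv_cases hpE with ⟨htz, hsp⟩|⟨d, hB, hA⟩|⟨d, hB, hA⟩|⟨d, hB, hA⟩|hg
    · exfalso
      rcases m2 i hC (sg_mid hp1 hp4 (xok_res_rdiv hpE)) with h|h
      · obtain ⟨-, hB', -⟩ := seg_one' h
        rw [hB'] at htz; simp at htz; exact hd.zq i htz.symm
      · rcases seg_two' h with ⟨-, hB', -⟩|⟨-, hB', -⟩ <;>
          (rw [hB'] at htz; simp at htz; exact hd.zq i htz.symm)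
    · -- B = var q d, A = PQ d
      subst hB; subst hA
      have hP := n4 d rfl hpP
      rcases m2 i hC (sg_mid hp1 hp4 (xok_varq hd d)) with h|h
      · obtain ⟨hΓ₁, hB2, hΔ⟩ := seg_one' h
        have hdi : d = i := hd.qinj (by simpa using hB2)
        right; rw [hΓ₁, hΔ, hP, hdi]; simp [Qf]
      · exfalso
        rcases seg_two' h with ⟨-, hB2, -⟩|⟨-, hB2, -⟩
        · simp [Qf] at hB2
        · simp [PQf] at hB2
    · -- B = var r d, A = PR d
      exfalso; subst hB
      rcases m2 i hC (sg_mid hp1 hp4 (xok_varr hd d)) with h|h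
      · obtain ⟨-, hB2, -⟩ := seg_one' h
        exact hd.qr i d (by simpa using hB2.symm)
      · rcases seg_two' h with ⟨-, hB2, -⟩|⟨-, hB2, -⟩
        · simp [Qf] at hB2
        · simp [PQf] at hB2
    · -- B = Spf d, A = Qf d
      exfalso; subst hB
      rcases m2 i hC (sg_mid hp1 hp4 (xok_Spf hd d)) with h|h
      · obtain ⟨-, hB2, -⟩ := seg_one' h
        simp [Spf] at hB2
      · rcases seg_two' h with ⟨-, hB2, -⟩|⟨-, hB2, -⟩
        · simp [Spf, Qf, PRf, PQf] at hB2
          exact hd.qr i d hB2.1.symm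
        · simp [Spf, PQf] at hB2
    · exfalso
      rcases m2 i hC (sg_mid hp1 hp4 (xok_res_rdiv hpE)) with h|h
      · obtain ⟨-, hB', -⟩ := seg_one' h
        exact (hg.2 i).2.1 (by rw [hB']; simp)
      · rcases seg_two' h with ⟨-, hB', -⟩|⟨-, hB', -⟩ <;>
          exact (hg.2 i).2.1 (by rw [hB']; simp)
  -- ===== T4 : head p, succ var q =====
  · intro c i X hΓ hSG hC
    cases Γ₁ with
    | cons G Γ₁' =>
        obtain ⟨hG, hX⟩ : G = PF.var (pv c) ∧ Γ₁' ++ [PF.rdiv B A] ++ P ++ Δ₁ = X := by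
          simpa using hΓ
        obtain ⟨hp1, hpE, hpP, hp4⟩ := sg_parts2 (hX ▸ hSG)
        have hres := m3 c i (Γ₁' ++ [B] ++ Δ₁) (by simp [hG])
          (sg_mid hp1 hp4 (xok_res_rdiv hpE)) hC
        obtain ⟨-, hB', -⟩ := seg_one' hres.2
        exfalso
        rcases rdiv_cases hpE with ⟨htz, hsp⟩|⟨d, hB, hA⟩|⟨d, hB, hA⟩|⟨d, hB, hA⟩|hg
        · rw [hB'] at htz; simp at htz; exact hd.zq i htz.symm
        · rw [hB'] at hB; simp [PQf] at hB
        · rw [hB'] at hB; simp [PQf] at hB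
        · rw [hB'] at hB; simp [Spf, PQf] at hB
        · exact (hg.2 i).2.1 (by rw [hB']; simp)
    | nil => simp at hΓ
  -- ===== T7 : succ PQ =====
  · intro i hC hSG
    obtain ⟨hp1, hpE, hpP, hp4⟩ := sg_parts2 hSG
    exfalso
    rcases rdiv_cases hpE with ⟨htz, hsp⟩|⟨d, hB, hA⟩|⟨d, hB, hA⟩|⟨d, hB, hA⟩|hg
    · obtain ⟨-, hB', -⟩ := seg_one' (m4 i hC (sg_mid hp1 hp4 (xok_res_rdiv hpE)))
      rw [hB'] at htz; simp at htz; exact hd.zq i htz.symm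
    · subst hB
      obtain ⟨-, hB', -⟩ := seg_one' (m4 i hC (sg_mid hp1 hp4 (xok_varq hd d)))
      simp [PQf] at hB'
    · subst hB
      obtain ⟨-, hB', -⟩ := seg_one' (m4 i hC (sg_mid hp1 hp4 (xok_varr hd d)))
      simp [PQf] at hB'
    · subst hB
      obtain ⟨-, hB', -⟩ := seg_one' (m4 i hC (sg_mid hp1 hp4 (xok_Spf hd d)))
      simp [Spf, PQf] at hB'
    · obtain ⟨-, hB', -⟩ := seg_one' (m4 i hC (sg_mid hp1 hp4 (xok_res_rdiv hpE)))
      exact (hg.2 i).2.1 (by rw [hB']; simp)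
  -- ===== T9 : succ var r =====
  · intro a hC hSG
    obtain ⟨hp1, hpE, hpP, hp4⟩ := sg_parts2 hSG
    rcases rdiv_cases hpE with ⟨htz, hsp⟩|⟨d, hB, hA⟩|⟨d, hB, hA⟩|⟨d, hB, hA⟩|hg
    · exfalso
      rcases m5 a hC (sg_mid hp1 hp4 (xok_res_rdiv hpE)) with h|h|h
      · obtain ⟨-, hB', -⟩ := seg_one' h
        rw [hB'] at htz; simp at htz; exact hd.zr a htz.symm
      · rcases seg_two' h with ⟨-, hB', -⟩|⟨-, hB', -⟩ <;>
          (rw [hB'] at htz; simp at htz; exact hd.zr a htz.symm)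
      · rcases seg_three' h with ⟨-, hB', -⟩|⟨-, hB', -⟩|⟨-, hB', -⟩
        · rw [hB'] at htz; simp at htz; exact hd.zr a htz.symm
        · rw [hB'] at htz; simp at htz; exact hd.zq a htz.symm
        · rw [hB'] at htz; simp at htz; exact hd.zr a htz.symm
    · -- B = var q d
      exfalso; subst hB
      rcases m5 a hC (sg_mid hp1 hp4 (xok_varq hd d)) with h|h|h
      · obtain ⟨-, hB2, -⟩ := seg_one' h
        exact hd.qr d a (by simpa using hB2)
      · rcases seg_two' h with ⟨-, hB2, -⟩|⟨-, hB2, -⟩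
        · simp [Spf] at hB2
        · simp [PRf] at hB2
      · rcases seg_three' h with ⟨-, hB2, -⟩|⟨-, hB2, -⟩|⟨-, hB2, -⟩
        · simp [SentN_eq] at hB2
        · simp [Qf] at hB2
        · simp [PRf] at hB2
    · -- B = var r d, A = PR d : may produce [Spf a, PRf a]
      subst hB; subst hA
      have hP := n7 d rfl hpP
      rcases m5 a hC (sg_mid hp1 hp4 (xok_varr hd d)) with h|h|h
      · obtain ⟨hΓ₁, hB2, hΔ⟩ := seg_one' h
        have hda : d = a := hd.rinj (by simpa using hB2)
        right; left; rw [hΓ₁, hΔ, hP, hda]; simp [Spf]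
      · exfalso
        rcases seg_two' h with ⟨-, hB2, -⟩|⟨-, hB2, -⟩
        · simp [Spf] at hB2
        · simp [PRf] at hB2
      · exfalso
        rcases seg_three' h with ⟨-, hB2, -⟩|⟨-, hB2, -⟩|⟨-, hB2, -⟩
        · simp [SentN_eq] at hB2
        · simp [Qf] at hB2
        · simp [PRf] at hB2
    · -- B = Spf d, A = Qf d : may produce [SentN a, Qf a, PRf a]
      subst hB; subst hA
      have hP := n8 d rfl hpP
      rcases m5 a hC (sg_mid hp1 hp4 (xok_Spf hd d)) with h|h|h
      · exfalso
        obtain ⟨-, hB2, -⟩ := seg_one' h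
        simp [Spf] at hB2
      · rcases seg_two' h with ⟨hΓ₁, hB2, hΔ⟩|⟨-, hB2, -⟩
        · have hda : d = a := by
            simp [Spf, PRf] at hB2
            exact hd.rinj hB2.1
          right; right; rw [hΓ₁, hΔ, hP, hda]; simp [SentN_eq]
        · exfalso; simp [Spf, PRf] at hB2
      · exfalso
        rcases seg_three' h with ⟨-, hB2, -⟩|⟨-, hB2, -⟩|⟨-, hB2, -⟩
        · simp [SentN_eq, Spf] at hB2
        · simp [Spf, Qf, PRf, PQf] at hB2
          exact hd.qr a d hB2.1.symm
        · simp [Spf, PRf] at hB2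
    · exfalso
      rcases m5 a hC (sg_mid hp1 hp4 (xok_res_rdiv hpE)) with h|h|h
      · obtain ⟨-, hB', -⟩ := seg_one' h
        exact (hg.2 a).2.2 (by rw [hB']; simp)
      · rcases seg_two' h with ⟨-, hB', -⟩|⟨-, hB', -⟩ <;>
          exact (hg.2 a).2.2 (by rw [hB']; simp)
      · rcases seg_three' h with ⟨-, hB', -⟩|⟨-, hB', -⟩|⟨-, hB', -⟩
        · exact (hg.2 a).2.2 (by rw [hB']; simp)
        · exact (hg.2 a).2.1 (by rw [hB']; simp)
        · exact (hg.2 a).2.2 (by rw [hB']; simp)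
  -- ===== T10 : head p, succ var r =====
  · intro c a X hΓ hSG hC
    cases Γ₁ with
    | cons G Γ₁' =>
        obtain ⟨hG, hX⟩ : G = PF.var (pv c) ∧ Γ₁' ++ [PF.rdiv B A] ++ P ++ Δ₁ = X := by
          simpa using hΓ
        obtain ⟨hp1, hpE, hpP, hp4⟩ := sg_parts2 (hX ▸ hSG)
        have hres := m6 c a (Γ₁' ++ [B] ++ Δ₁) (by simp [hG])
          (sg_mid hp1 hp4 (xok_res_rdiv hpE)) hC
        obtain ⟨-, hB', -⟩ := seg_one' hres.2
        exfalso
        rcases rdiv_cases hpE with ⟨htz, hsp⟩|⟨d, hB, hA⟩|⟨d, hB, hA⟩|⟨d, hB, hA⟩|hg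
        · rw [hB'] at htz; simp at htz; exact hd.zr a htz.symm
        · rw [hB'] at hB; simp [PRf] at hB
        · rw [hB'] at hB; simp [PRf] at hB
        · rw [hB'] at hB; simp [Spf, PRf] at hB
        · exact (hg.2 a).2.2 (by rw [hB']; simp)
    | nil => simp at hΓ
  -- ===== T11 : succ PR =====
  · intro a hC hSG
    obtain ⟨hp1, hpE, hpP, hp4⟩ := sg_parts2 hSG
    exfalso
    rcases rdiv_cases hpE with ⟨htz, hsp⟩|⟨d, hB, hA⟩|⟨d, hB, hA⟩|⟨d, hB, hA⟩|hg
    · obtain ⟨-, hB', -⟩ := seg_one' (m7 a hC (sg_mid hp1 hp4 (xok_res_rdiv hpE)))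
      rw [hB'] at htz; simp at htz; exact hd.zr a htz.symm
    · subst hB
      obtain ⟨-, hB', -⟩ := seg_one' (m7 a hC (sg_mid hp1 hp4 (xok_varq hd d)))
      simp [PRf] at hB'
    · subst hB
      obtain ⟨-, hB', -⟩ := seg_one' (m7 a hC (sg_mid hp1 hp4 (xok_varr hd d)))
      simp [PRf] at hB'
    · subst hB
      obtain ⟨-, hB', -⟩ := seg_one' (m7 a hC (sg_mid hp1 hp4 (xok_Spf hd d)))
      simp [Spf, PRf] at hB'
    · obtain ⟨-, hB', -⟩ := seg_one' (m7 a hC (sg_mid hp1 hp4 (xok_res_rdiv hpE)))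
      exact (hg.2 a).2.2 (by rw [hB']; simp)
  -- ===== T12 : succ Q =====
  · intro a hC hSG
    obtain ⟨hp1, hpE, hpP, hp4⟩ := sg_parts2 hSG
    exfalso
    rcases rdiv_cases hpE with ⟨htz, hsp⟩|⟨d, hB, hA⟩|⟨d, hB, hA⟩|⟨d, hB, hA⟩|hg
    · obtain ⟨-, hB', -⟩ := seg_one' (m8 a hC (sg_mid hp1 hp4 (xok_res_rdiv hpE)))
      rw [hB'] at htz; simp at htz; exact hd.zq a htz.symm
    · subst hB
      obtain ⟨-, hB', -⟩ := seg_one' (m8 a hC (sg_mid hp1 hp4 (xok_varq hd d)))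
      simp [Qf] at hB'
    · subst hB
      obtain ⟨-, hB', -⟩ := seg_one' (m8 a hC (sg_mid hp1 hp4 (xok_varr hd d)))
      simp [Qf] at hB'
    · subst hB
      obtain ⟨-, hB', -⟩ := seg_one' (m8 a hC (sg_mid hp1 hp4 (xok_Spf hd d)))
      simp [Spf, Qf, PRf, PQf] at hB'
      exact hd.qr a d hB'.1.symm
    · obtain ⟨-, hB', -⟩ := seg_one' (m8 a hC (sg_mid hp1 hp4 (xok_res_rdiv hpE)))
      exact (hg.2 a).2.1 (by rw [hB']; simp)
  -- ===== T13 : succ S' =====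
  · intro a hC hSG
    obtain ⟨hp1, hpE, hpP, hp4⟩ := sg_parts2 hSG
    rcases rdiv_cases hpE with ⟨htz, hsp⟩|⟨d, hB, hA⟩|⟨d, hB, hA⟩|⟨d, hB, hA⟩|hg
    · exfalso
      rcases m9 a hC (sg_mid hp1 hp4 (xok_res_rdiv hpE)) with h|h
      · obtain ⟨-, hB', -⟩ := seg_one' h
        rw [hB'] at htz; simp at htz; exact hd.zr a htz.symm
      · rcases seg_two' h with ⟨-, hB', -⟩|⟨-, hB', -⟩
        · rw [hB'] at htz; simp at htz; exact hd.zr a htz.symm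
        · rw [hB'] at htz; simp at htz; exact hd.zq a htz.symm
    · exfalso; subst hB
      rcases m9 a hC (sg_mid hp1 hp4 (xok_varq hd d)) with h|h
      · obtain ⟨-, hB2, -⟩ := seg_one' h
        simp [Spf] at hB2
      · rcases seg_two' h with ⟨-, hB2, -⟩|⟨-, hB2, -⟩
        · simp [SentN_eq] at hB2
        · simp [Qf] at hB2
    · exfalso; subst hB
      rcases m9 a hC (sg_mid hp1 hp4 (xok_varr hd d)) with h|h
      · obtain ⟨-, hB2, -⟩ := seg_one' h
        simp [Spf] at hB2
      · rcases seg_two' h with ⟨-, hB2, -⟩|⟨-, hB2, -⟩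
        · simp [SentN_eq] at hB2
        · simp [Qf] at hB2
    · -- B = Spf d, A = Qf d : may produce [SentN a, Qf a]
      subst hB; subst hA
      have hP := n8 d rfl hpP
      rcases m9 a hC (sg_mid hp1 hp4 (xok_Spf hd d)) with h|h
      · obtain ⟨hΓ₁, hB2, hΔ⟩ := seg_one' h
        have hda : d = a := by
          simp [Spf, PRf] at hB2
          exact hd.rinj hB2.1
        right; rw [hΓ₁, hΔ, hP, hda]; simp [SentN_eq]
      · exfalso
        rcases seg_two' h with ⟨-, hB2, -⟩|⟨-, hB2, -⟩
        · simp [SentN_eq, Spf] at hB2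
        · simp [Spf, Qf, PRf, PQf] at hB2
          exact hd.qr a d hB2.1.symm
    · exfalso
      rcases m9 a hC (sg_mid hp1 hp4 (xok_res_rdiv hpE)) with h|h
      · obtain ⟨-, hB', -⟩ := seg_one' h
        exact (hg.2 a).2.2 (by rw [hB']; simp)
      · rcases seg_two' h with ⟨-, hB', -⟩|⟨-, hB', -⟩
        · exact (hg.2 a).2.2 (by rw [hB']; simp)
        · exact (hg.2 a).2.1 (by rw [hB']; simp)
  -- ===== T14 : succ S =====
  · intro a hC hSG
    obtain ⟨hp1, hpE, hpP, hp4⟩ := sg_parts2 hSG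
    exfalso
    rcases rdiv_cases hpE with ⟨htz, hsp⟩|⟨d, hB, hA⟩|⟨d, hB, hA⟩|⟨d, hB, hA⟩|hg
    · obtain ⟨-, hB', -⟩ := seg_one' (m10 a hC (sg_mid hp1 hp4 (xok_res_rdiv hpE)))
      rw [hB'] at htz; simp at htz; exact hd.zr a htz.symm
    · subst hB
      obtain ⟨-, hB', -⟩ := seg_one' (m10 a hC (sg_mid hp1 hp4 (xok_varq hd d)))
      simp [SentN_eq] at hB'
    · subst hB
      obtain ⟨-, hB', -⟩ := seg_one' (m10 a hC (sg_mid hp1 hp4 (xok_varr hd d)))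
      simp [SentN_eq] at hB'
    · subst hB
      obtain ⟨-, hB', -⟩ := seg_one' (m10 a hC (sg_mid hp1 hp4 (xok_Spf hd d)))
      simp [SentN_eq, Spf] at hB'
    · obtain ⟨-, hB', -⟩ := seg_one' (m10 a hC (sg_mid hp1 hp4 (xok_res_rdiv hpE)))
      exact (hg.2 a).2.2 (by rw [hB']; simp)
  -- ===== ZA =====
  · intro hC hGood hM
    obtain ⟨σ, ρ, hsplit, hσ, hρ⟩ := hM
    have hGE : GoodM z pv qv rv (PF.rdiv B A) := hGood _ (by simp)
    have hsplit' : Γ₁ ++ (PF.rdiv B A :: (P ++ Δ₁)) = σ ++ ρ := by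
      simpa [List.append_assoc] using hsplit
    have main : ∀ c' : List PF, Γ₁ = σ ++ c' →
        ρ = c' ++ PF.rdiv B A :: (P ++ Δ₁) → False := by
      intro c' hc1 hc2
      rcases goodM_rdiv_cases hGE with ⟨htz, hsp⟩ | ⟨d, hB, hA⟩ | hg
      · -- spine principal
        have hρ' : Reg z pv qv rv (c' ++ PF.rdiv B A :: (P ++ Δ₁)) := hc2 ▸ hρ
        have hreg := reg_ext hd hρ' (by simpa using htz) ([B] ++ Δ₁)
        refine m11 hC (gm_mid (fun X hX => hGood X (mem4_1 hX))
          (fun X hX => hGood X (mem4_4 hX)) (goodM_of_spine hd hsp))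
          ⟨σ, c' ++ [B] ++ Δ₁, ?_, hσ, by simpa [List.append_assoc] using hreg⟩
        rw [hc1]; simp
      · -- principal sentinel : its block must be [Qf d], contradiction
        subst hA
        have hP := n8 d rfl (fun X hX => goodM_to_Xok (hGood X (mem4_3 hX)))
        exact not_goodM_Qf d (hGood (Qf pv qv d) (mem4_3 (by rw [hP]; simp)))
      · -- GTop principal
        have hρ' : Reg z pv qv rv (c' ++ ([PF.rdiv B A] ++ P) ++ Δ₁) := by
          have : Reg z pv qv rv (c' ++ PF.rdiv B A :: (P ++ Δ₁)) := hc2 ▸ hρ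
          simpa [List.append_assoc] using this
        have hreg := reg_repl hρ' (not_isS_of_gtop hg) hg.1
        refine m11 hC (gm_mid (fun X hX => hGood X (mem4_1 hX))
          (fun X hX => hGood X (mem4_4 hX)) (goodM_of_gtop hg))
          ⟨σ, c' ++ [B] ++ Δ₁, ?_, hσ, hreg⟩
        rw [hc1]; simp
    rcases List.append_eq_append_iff.mp hsplit' with ⟨a', ha1, ha2⟩ | ⟨c', hc1, hc2⟩
    · cases a' with
      | nil => exact main [] (by simpa using ha1.symm) (by simpa using ha2.symm)
      | cons x a'' =>
          rw [List.cons_append] at ha2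
          injection ha2 with hx htail
          have hxσ : x ∈ σ := by rw [ha1]; simp
          rcases hσ x hxσ with hzz | ⟨d, hH⟩
          · -- E = z/z
            obtain ⟨hB, hA⟩ : B = PF.var z ∧ A = PF.var z := by
              rw [hzz] at hx; simpa [zzF, PF.rdiv.injEq] using hx
            subst hA
            have hGoodP : ∀ X ∈ P, GoodM z pv qv rv X :=
              fun X hX => hGood X (mem4_3 hX)
            rcases List.append_eq_append_iff.mp htail.symm with ⟨u, hu1, hu2⟩ | ⟨u, hu1, hu2⟩
            · -- P = a'' ++ u, ρ = u ++ Δ₁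
              refine n11 rfl hGoodP ⟨a'', u, hu1, ?_, ?_⟩
              · intro X hX; exact hσ X (by rw [ha1]; simp; tauto)
              · exact reg_prefix (hu2 ▸ hρ)
            · -- a'' = P ++ u, Δ₁ = u ++ ρ
              refine n11 rfl hGoodP ⟨P, [], by simp, ?_, reg_nil⟩
              intro X hX; exact hσ X (by rw [ha1, hu1]; simp; tauto)
          · -- E = H d
            obtain ⟨hB, hA⟩ : B = zzF z ∧ A = SentN pv qv rv d := by
              rw [hH] at hx; simpa [Hformula, zzF, PF.rdiv.injEq] using hx
            subst hA
            have hP := n10 d rfl (fun X hX => goodM_to_Xok (hGood X (mem4_3 hX)))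
            rw [hP] at htail
            cases a'' with
            | nil =>
                have hρeq : ρ = SentN pv qv rv d :: Δ₁ := by simpa using htail.symm
                have hρ2 : Reg z pv qv rv (SentN pv qv rv d :: Δ₁) := by
                  rw [← hρeq]; exact hρ
                have hregΔ : Reg z pv qv rv Δ₁ := (reg_cons.mp hρ2).1 ⟨d, rfl⟩
                have hGB : GoodM z pv qv rv B := by rw [hB]; exact goodM_zzF hd
                refine m11 hC (gm_mid (fun X hX => hGood X (mem4_1 hX))
                  (fun X hX => hGood X (mem4_4 hX)) hGB)
                  ⟨Γ₁ ++ [B], Δ₁, by simp, ?_, hregΔ⟩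
                intro X hX
                rcases (by simpa using hX : X ∈ Γ₁ ∨ X = B) with h|h
                · exact hσ X (by rw [ha1]; simp [h])
                · left; rw [h, hB]
            | cons y a''' =>
                simp only [List.cons_append, List.singleton_append] at htail
                injection htail with hy htl
                have hyσ : y ∈ σ := by rw [ha1]; simp
                rcases hσ y hyσ with h|⟨e, h⟩
                · rw [← hy] at h; simp [SentN_eq, Spf, zzF] at h
                · rw [← hy] at h
                  simp [SentN_eq, Spf, zzF, Hformula, PRf] at h
    · exact main c' hc1 hc2

end NoHAux
namespace NoHAux

variable {ν : ℕ} {z : ℕ} {pv qv rv : Fin (ν + 1) → ℕ}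

theorem grand (hd : Dst z pv qv rv) : ∀ {Γ C}, PDer Γ C → Mot z pv qv rv Γ C := by
  intro Γ C h
  induction h with
  | id A => exact motId hd A
  | ldiv_left P Γ₁ Δ₁ A B C h1 h2 ih1 ih2 => exact motLdivL hd h1 h2 ih1 ih2
  | ldiv_right P A B h ih => exact motLdivR hd ih
  | rdiv_left P Γ₁ Δ₁ A B C h1 h2 ih1 ih2 => exact motRdivL hd h1 h2 ih1 ih2
  | rdiv_right P A B h ih => exact motRdivR hd ih

lemma goodM_SentN (hd : Dst z pv qv rv) (i : Fin (ν + 1)) :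
    GoodM z pv qv rv (SentN pv qv rv i) := by
  refine ⟨okZ_of_ne (by simp; exact fun h => hd.zr i h.symm), fun j => ⟨?_, ?_, ?_⟩⟩
  · simp; intro h; exact hd.pr j i h.symm
  · simp; intro h; exact absurd h.symm (hd.qr j i)
  · intro h; simp at h; simp [hd.rinj h]

lemma goodM_H (hd : Dst z pv qv rv) (i : Fin (ν + 1)) :
    GoodM z pv qv rv (Hformula z pv qv rv i) :=
  goodM_of_spine hd (by simp [Hformula, Spine])

lemma opt_mem {α : Type _} {f : α → PF} {o : Option α} {X : PF}
    (h : X ∈ (o.map f).toList) : ∃ d, X = f d := by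
  cases o with
  | none => simp at h
  | some a => simp at h; exact ⟨a, h⟩

end NoHAux
namespace NoHAux

variable {ν : ℕ}

lemma mkDst {z : ℕ} {pv qv rv : Fin (ν + 1) → ℕ}
    (hvars : (([z] : List ℕ) ++ List.ofFn pv ++ List.ofFn qv ++ List.ofFn rv).Nodup) :
    Dst z pv qv rv := by
  have h := hvars
  rw [List.append_assoc, List.append_assoc] at h
  rw [List.nodup_append] at h
  obtain ⟨-, h, hdz⟩ := h
  rw [List.nodup_append] at h
  obtain ⟨hp, h, hdp⟩ := h
  rw [List.nodup_append] at h
  obtain ⟨hq, hr, hdq⟩ := h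
  have memp : ∀ i, pv i ∈ List.ofFn pv := fun i => List.mem_ofFn.mpr ⟨i, rfl⟩
  have memq : ∀ i, qv i ∈ List.ofFn qv := fun i => List.mem_ofFn.mpr ⟨i, rfl⟩
  have memr : ∀ i, rv i ∈ List.ofFn rv := fun i => List.mem_ofFn.mpr ⟨i, rfl⟩
  refine ⟨?_, ?_, ?_, ?_, ?_, ?_, ?_, ?_, ?_⟩
  · intro i heq
    exact hdz z (show z ∈ [z] by simp) z
      (by rw [heq]; exact List.mem_append.mpr (Or.inl (memp i))) rfl
  · intro i heq
    exact hdz z (show z ∈ [z] by simp) z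
      (by rw [heq]; exact List.mem_append.mpr (Or.inr (List.mem_append.mpr (Or.inl (memq i))))) rfl
  · intro i heq
    exact hdz z (show z ∈ [z] by simp) z
      (by rw [heq]; exact List.mem_append.mpr (Or.inr (List.mem_append.mpr (Or.inr (memr i))))) rfl
  · intro i j heq
    exact hdp (pv i) (memp i) (pv i) (by rw [heq]; exact List.mem_append.mpr (Or.inl (memq j))) rfl
  · intro i j heq
    exact hdp (pv i) (memp i) (pv i) (by rw [heq]; exact List.mem_append.mpr (Or.inr (memr j))) rfl
  · intro i j heq
    exact hdq (qv i) (memq i) (qv i) (by rw [heq]; exact memr j) rfl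
  · exact List.nodup_ofFn.mp hp
  · exact List.nodup_ofFn.mp hq
  · exact List.nodup_ofFn.mp hr

end NoHAux
/-- Let Φ be a nonempty list of formulas none of which has top p_i, q_i or r_i, in which
every formula with top z has the form z/Y_m/⋯/Y₁, and whose leftmost formula does not
have top z. Then no sequent H_{k'}^?, H_{ℓ'}^?, S_{p_{i'},q_{i'},r_{i'}}, Φ → H_k
(optional formulas omitted when absent) is derivable in L^Λ(\\,/). -/
theorem no_H_from_sentinel_block
    {ν : ℕ} (z : ℕ) (pv qv rv : Fin (ν + 1) → ℕ)
    (hvars : (([z] : List ℕ) ++ List.ofFn pv ++ List.ofFn qv ++ List.ofFn rv).Nodup)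
    (A₀ : PF) (Φ' : List PF)
    (htop : ∀ A ∈ A₀ :: Φ', ∀ i : Fin (ν + 1), A.top ≠ pv i ∧ A.top ≠ qv i ∧ A.top ≠ rv i)
    (hz : ∀ A ∈ A₀ :: Φ', A.top = z → ∃ Ys : List PF, A = curryR (PF.var z) Ys)
    (hhead : A₀.top ≠ z)
    (i' k : Fin (ν + 1)) (k' l' : Option (Fin (ν + 1))) :
    ¬ PDer ((k'.map (Hformula z pv qv rv)).toList ++ (l'.map (Hformula z pv qv rv)).toList ++
        [SentN pv qv rv i'] ++ (A₀ :: Φ'))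
      (Hformula z pv qv rv k) := by
  intro h
  have hd : NoHAux.Dst z pv qv rv := NoHAux.mkDst hvars
  set K := (k'.map (Hformula z pv qv rv)).toList with hK
  set L := (l'.map (Hformula z pv qv rv)).toList with hL
  -- invert twice
  have h2 := NoHAux.inv_rdiv h _ _ rfl
  have h3 := NoHAux.inv_rdiv h2 _ _ rfl
  -- h3 : PDer (((K ++ L ++ [SentN i'] ++ (A₀ :: Φ')) ++ [SentN k]) ++ [var z]) (var z)
  have hGood : ∀ A ∈ ((K ++ L ++ [SentN pv qv rv i'] ++ (A₀ :: Φ')) ++ [SentN pv qv rv k])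
      ++ [PF.var z], NoHAux.GoodM z pv qv rv A := by
    intro A hA
    simp only [List.mem_append, List.mem_singleton, List.mem_cons] at hA
    rcases hA with ((((hA|hA)|hA)|hA)|hA)|hA
    · obtain ⟨d, rfl⟩ := NoHAux.opt_mem hA
      exact NoHAux.goodM_H hd d
    · obtain ⟨d, rfl⟩ := NoHAux.opt_mem hA
      exact NoHAux.goodM_H hd d
    · simp at hA; rw [hA]; exact NoHAux.goodM_SentN hd i'
    · have hmem : A ∈ A₀ :: Φ' := by simpa using hA
      refine ⟨?_, fun i => ⟨(htop A hmem i).1, (htop A hmem i).2.1, ?_⟩⟩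
      · intro ht
        obtain ⟨Ys, hYs⟩ := hz A hmem ht
        rw [hYs]
        exact NoHAux.spine_curryR Ys
      · intro ht; exact absurd ht (htop A hmem i).2.2
    · rcases hA with hA|hA
      · rw [hA]; exact NoHAux.goodM_SentN hd k
      · simp at hA
    · rcases hA with hA|hA
      · rw [hA]; exact NoHAux.goodM_of_spine hd (by simp [NoHAux.Spine])
      · simp at hA
  have hM : NoHAux.MShape z pv qv rv
      (((K ++ L ++ [SentN pv qv rv i'] ++ (A₀ :: Φ')) ++ [SentN pv qv rv k]) ++ [PF.var z]) := by
    refine ⟨K ++ L,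
      SentN pv qv rv i' :: (A₀ :: (Φ' ++ [SentN pv qv rv k] ++ [PF.var z])), by simp, ?_, ?_⟩
    · intro X hX
      rcases List.mem_append.mp hX with hX|hX
      · obtain ⟨d, rfl⟩ := NoHAux.opt_mem hX; exact Or.inr ⟨d, rfl⟩
      · obtain ⟨d, rfl⟩ := NoHAux.opt_mem hX; exact Or.inr ⟨d, rfl⟩
    · refine NoHAux.reg_cons.mpr ⟨fun _ => ?_, fun hn => absurd ⟨i', rfl⟩ hn⟩
      refine NoHAux.reg_cons.mpr ⟨fun hS => ?_, fun _ => hhead⟩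
      · obtain ⟨a, ha⟩ := hS
        exact absurd (by rw [ha]; simp) (htop A₀ (by simp) a).2.2
  exact (NoHAux.grand hd h3).2.2.2.2.2.2.2.2.2.2 rfl hGood hM
end
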